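/- arXiv:1701.08032 — 7 statements merged into one kernel-verified Lean document; each statement's English description precedes it below -/
import Mathlib

section
/- Assume f satisfies (f), D satisfies (D), and 0 ≤ ℓ⁻ < ℓ⁺ ≤ 1, with speed c = (f(ℓ⁺)−f(ℓ⁻))/(ℓ⁺−ℓ⁻) and reduced flux g(ρ) = f(ρ) − cρ. Then there exists a profile, i.e. a continuous non-decreasing function φ : ℝ → [ℓ⁻, ℓ⁺] with lim_{ξ→−∞} φ(ξ) = ℓ⁻ and lim_{ξ→+∞} φ(ξ) = ℓ⁺, which on the open set I = {ξ ∈ ℝ : ℓ⁻ < φ(ξ) < ℓ⁺} is twice continuously differentiable with φ′(ξ) > 0 and satisfies D(φ(ξ)) φ′(ξ) = g(φ(ξ)) − g(ℓ⁻) for every ξ ∈ I. Moreover, the profile is unique up to translation: if φ₁ and φ₂ are two functions with all these properties, then there exists σ ∈ ℝ such that φ₂(ξ) = φ₁(ξ + σ) for all ξ ∈ ℝ. -/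
open Set Filter MeasureTheory
open scoped Topology Classical
set_option linter.unusedSectionVars false

/-- Assumption (f): `f ∈ C¹([0,1];ℝ)` is nonnegative, strictly concave, `f 0 = f 1 = 0`. -/
def FluxAssumption (f : ℝ → ℝ) : Prop :=
  ContDiffOn ℝ 1 f (Icc 0 1) ∧ StrictConcaveOn ℝ (Icc 0 1) f ∧
  (∀ x ∈ Icc (0:ℝ) 1, 0 ≤ f x) ∧ f 0 = 0 ∧ f 1 = 0

/-- Assumption (D): `D ∈ C¹([0,1];ℝ)` is nonnegative and positive on `(0,1)`. -/
def DiffAssumption (D : ℝ → ℝ) : Prop :=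
  ContDiffOn ℝ 1 D (Icc 0 1) ∧ (∀ x ∈ Icc (0:ℝ) 1, 0 ≤ D x) ∧
  (∀ x ∈ Ioo (0:ℝ) 1, 0 < D x)

/-- The wave speed `c = (f(ℓ⁺) - f(ℓ⁻))/(ℓ⁺ - ℓ⁻)`. -/
noncomputable def waveSpeed (f : ℝ → ℝ) (a b : ℝ) : ℝ := (f b - f a) / (b - a)

/-- The reduced flux `g(ρ) = f(ρ) - c ρ`. -/
noncomputable def redFlux (f : ℝ → ℝ) (a b ρ : ℝ) : ℝ := f ρ - waveSpeed f a b * ρ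

/-- A profile for data `f, D, ℓ⁻ = a, ℓ⁺ = b`: continuous, non-decreasing, with values in
`[a,b]`, limits `a` at `-∞` and `b` at `+∞`, `C²` on `I = {ξ | a < φ ξ < b}` with positive
derivative there, satisfying `D(φ) φ' = g(φ) - g(a)` on `I`. -/
def IsProfile (f D : ℝ → ℝ) (a b : ℝ) (φ : ℝ → ℝ) : Prop :=
  Continuous φ ∧ Monotone φ ∧ (∀ ξ, φ ξ ∈ Icc a b) ∧
  Tendsto φ atBot (𝓝 a) ∧ Tendsto φ atTop (𝓝 b) ∧
  ContDiffOn ℝ 2 φ {ξ | a < φ ξ ∧ φ ξ < b} ∧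
  ∀ ξ, a < φ ξ → φ ξ < b →
    0 < deriv φ ξ ∧ D (φ ξ) * deriv φ ξ = redFlux f a b (φ ξ) - redFlux f a b a

namespace TW
variable (f D : ℝ → ℝ) (a b : ℝ)

lemma gap (hf : FluxAssumption f) (h0 : 0 ≤ a) (hl : a < b) (h1 : b ≤ 1) :
    ∀ u ∈ Ioo a b, 0 < redFlux f a b u - redFlux f a b a := by
  rintro u ⟨hau, hub⟩
  set q : ℝ := (u - a) / (b - a) with hq
  set p : ℝ := (b - u) / (b - a) with hp
  have hba : (0:ℝ) < b - a := by linarith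
  have hqpos : 0 < q := div_pos (by linarith) hba
  have hppos : 0 < p := div_pos (by linarith) hba
  have hpq : p + q = 1 := by rw [hp, hq]; field_simp; ring
  have hu : p • a + q • b = u := by
    simp only [smul_eq_mul, hp, hq]; field_simp; ring
  have key := hf.2.1.2 (x := a) (y := b) ⟨h0, by linarith⟩ ⟨by linarith, h1⟩
      (ne_of_lt hl) hppos hqpos hpq
  rw [hu] at key
  simp only [smul_eq_mul] at key
  have hc : waveSpeed f a b * (u - a) = q * (f b - f a) := by
    rw [waveSpeed, hq]; field_simp
  have hexp : redFlux f a b u - redFlux f a b a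
      = f u - (p * f a + q * f b) := by
    simp only [redFlux]
    have hp1 : p = 1 - q := by linarith
    rw [hp1]; nlinarith [hc]
  rw [hexp]; linarith

/-- the integrand `D/(g - g(a))` -/
noncomputable def hfun (u : ℝ) : ℝ := D u / (redFlux f a b u - redFlux f a b a)

/-- `H(u) = ∫_{(a+b)/2}^u hfun` -/
noncomputable def Hfun (u : ℝ) : ℝ := ∫ t in ((a+b)/2)..u, hfun f D a b t

/-- the profile, as the generalized inverse of `Hfun` -/
noncomputable def phi (ξ : ℝ) : ℝ :=
  sSup (insert a {u | u ∈ Ioo a b ∧ Hfun f D a b u ≤ ξ})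

variable {f D a b}

section basic
variable (hf : FluxAssumption f) (hD : DiffAssumption D)
  (h0 : 0 ≤ a) (hl : a < b) (h1 : b ≤ 1)
include hf hD h0 hl h1

lemma Ioo_sub : Ioo a b ⊆ Icc (0:ℝ) 1 := fun u hu => ⟨by linarith [hu.1], by linarith [hu.2]⟩

lemma hfun_pos : ∀ u ∈ Ioo a b, 0 < hfun f D a b u := by
  intro u hu
  exact div_pos (hD.2.2 u ⟨lt_of_le_of_lt h0 hu.1, lt_of_lt_of_le hu.2 h1⟩)
    (gap f a b hf h0 hl h1 u hu)

lemma redFlux_contOn : ContinuousOn (fun u => redFlux f a b u) (Icc 0 1) := by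
  unfold redFlux
  exact hf.1.continuousOn.sub ((continuous_const.mul continuous_id).continuousOn)

lemma hfun_contOn : ContinuousOn (hfun f D a b) (Ioo a b) := by
  unfold hfun
  apply ContinuousOn.div
  · exact hD.1.continuousOn.mono (Ioo_sub hf hD h0 hl h1)
  · exact ((redFlux_contOn hf hD h0 hl h1).mono (Ioo_sub hf hD h0 hl h1)).sub continuousOn_const
  · intro u hu; exact ne_of_gt (gap f a b hf h0 hl h1 u hu)

lemma mid_mem : (a+b)/2 ∈ Ioo a b := ⟨by linarith, by linarith⟩

lemma Hderiv : ∀ u ∈ Ioo a b, HasDerivAt (Hfun f D a b) (hfun f D a b u) u := by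
  intro u hu
  apply intervalIntegral.integral_hasDerivAt_right
  · apply ContinuousOn.intervalIntegrable
    exact (hfun_contOn hf hD h0 hl h1).mono
      (Set.ordConnected_Ioo.uIcc_subset (mid_mem hf hD h0 hl h1) hu)
  · exact ContinuousOn.stronglyMeasurableAtFilter isOpen_Ioo
      (hfun_contOn hf hD h0 hl h1) u hu
  · exact (hfun_contOn hf hD h0 hl h1).continuousAt (Ioo_mem_nhds hu.1 hu.2)

lemma Hcont : ContinuousOn (Hfun f D a b) (Ioo a b) := fun u hu =>
  ((Hderiv hf hD h0 hl h1 u hu).continuousAt).continuousWithinAt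

lemma Hmono : StrictMonoOn (Hfun f D a b) (Ioo a b) := by
  apply strictMonoOn_of_hasDerivWithinAt_pos (convex_Ioo a b) (Hcont hf hD h0 hl h1)
    (f' := hfun f D a b)
  · intro x hx
    rw [interior_Ioo] at hx
    exact ((Hderiv hf hD h0 hl h1 x hx).hasDerivWithinAt)
  · intro x hx
    rw [interior_Ioo] at hx
    exact hfun_pos hf hD h0 hl h1 x hx

omit hf hD h0 h1 in
lemma phi_bdd : b ∈ upperBounds (insert a {u | u ∈ Ioo a b ∧ Hfun f D a b u ≤ ξ}) := by
  rintro v (rfl | ⟨hv, _⟩)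
  · exact le_of_lt hl
  · exact le_of_lt hv.2

omit hf hD h0 h1 in
lemma le_phi (ξ : ℝ) : a ≤ phi f D a b ξ :=
  le_csSup ⟨b, phi_bdd hl⟩ (mem_insert a _)

omit hf hD h0 h1 in
lemma phi_le (ξ : ℝ) : phi f D a b ξ ≤ b :=
  csSup_le (insert_nonempty _ _) (phi_bdd hl)

omit hf hD h0 h1 in
lemma phi_mono : Monotone (phi f D a b) := by
  intro ξ ζ hξζ
  apply csSup_le_csSup ⟨b, phi_bdd hl⟩ (insert_nonempty _ _)
  rintro v (rfl | ⟨hv, hv2⟩)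
  · exact mem_insert _ _
  · exact mem_insert_of_mem _ ⟨hv, le_trans hv2 hξζ⟩

lemma phi_Hfun : ∀ u ∈ Ioo a b, phi f D a b (Hfun f D a b u) = u := by
  intro u hu
  apply le_antisymm
  · apply csSup_le (insert_nonempty _ _)
    rintro v (rfl | ⟨hv, hv2⟩)
    · exact le_of_lt hu.1
    · by_contra hc
      push_neg at hc
      exact absurd hv2 (not_le.2 (Hmono hf hD h0 hl h1 hu hv hc))
  · exact le_csSup ⟨b, phi_bdd hl⟩ (mem_insert_of_mem _ ⟨hu, le_refl _⟩)

lemma trichotomy (ξ : ℝ) : (∃ u ∈ Ioo a b, Hfun f D a b u = ξ) ∨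
    (∀ u ∈ Ioo a b, ξ < Hfun f D a b u) ∨ (∀ u ∈ Ioo a b, Hfun f D a b u ≤ ξ) := by
  by_contra hc
  push_neg at hc
  obtain ⟨hA, ⟨u₁, hu₁, hu₁2⟩, ⟨u₂, hu₂, hu₂2⟩⟩ := hc
  have h12 : u₁ < u₂ := by
    rcases lt_trichotomy u₁ u₂ with h | h | h
    · exact h
    · exfalso; rw [h] at hu₁2; linarith
    · exfalso
      have := Hmono hf hD h0 hl h1 hu₂ hu₁ h
      linarith
  have hsub : Icc u₁ u₂ ⊆ Ioo a b := fun v hv => ⟨lt_of_lt_of_le hu₁.1 hv.1, lt_of_le_of_lt hv.2 hu₂.2⟩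
  have := intermediate_value_Icc (le_of_lt h12) ((Hcont hf hD h0 hl h1).mono hsub)
  obtain ⟨u, hu, huξ⟩ := this ⟨hu₁2, le_of_lt hu₂2⟩
  exact hA u (hsub hu) huξ

omit hf hD h0 h1 in
lemma phi_eq_a {ξ : ℝ} (h : ∀ u ∈ Ioo a b, ξ < Hfun f D a b u) : phi f D a b ξ = a := by
  apply le_antisymm _ (le_phi hl ξ)
  apply csSup_le (insert_nonempty _ _)
  rintro v (rfl | ⟨hv, hv2⟩)
  · exact le_refl _
  · exact absurd hv2 (not_le.2 (h v hv))

omit hf hD h0 h1 in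
lemma phi_eq_b {ξ : ℝ} (h : ∀ u ∈ Ioo a b, Hfun f D a b u ≤ ξ) : phi f D a b ξ = b := by
  apply le_antisymm (phi_le hl ξ)
  apply le_of_forall_lt
  intro v hv
  obtain ⟨u, hu1, hu2⟩ := exists_between (max_lt hl hv : max a v < b)
  exact lt_of_le_of_lt (le_max_right a v)
    (lt_of_lt_of_le hu1 (le_csSup ⟨b, phi_bdd hl⟩
      (mem_insert_of_mem _ ⟨⟨lt_of_le_of_lt (le_max_left a v) hu1, hu2⟩, h _ ⟨lt_of_le_of_lt (le_max_left a v) hu1, hu2⟩⟩)))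

lemma mem_I_iff (ξ : ℝ) :
    (a < phi f D a b ξ ∧ phi f D a b ξ < b) ↔ ∃ u ∈ Ioo a b, Hfun f D a b u = ξ := by
  constructor
  · intro hξ
    rcases trichotomy hf hD h0 hl h1 ξ with h | h | h
    · exact h
    · rw [phi_eq_a hl h] at hξ; linarith [hξ.1]
    · rw [phi_eq_b hl h] at hξ; linarith [hξ.2]
  · rintro ⟨u, hu, rfl⟩
    rw [phi_Hfun hf hD h0 hl h1 u hu]
    exact hu

lemma phi_cont : Continuous (phi f D a b) := by
  rw [continuous_iff_continuousAt]
  intro ξ₀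
  rw [ContinuousAt, tendsto_order]
  constructor
  · intro p hp
    rcases le_or_gt a p with hap | hap
    · obtain ⟨u, hu1, hu2⟩ := exists_between hp
      have huIoo : u ∈ Ioo a b :=
        ⟨lt_of_le_of_lt hap hu1, lt_of_lt_of_le hu2 (phi_le hl ξ₀)⟩
      have hφ : phi f D a b (Hfun f D a b u) = u := phi_Hfun hf hD h0 hl h1 u huIoo
      have hξ₁ : Hfun f D a b u < ξ₀ := by
        by_contra hc
        push_neg at hc
        have := phi_mono (f:=f) (D:=D) hl hc
        rw [hφ] at this; linarith
      filter_upwards [Ioi_mem_nhds hξ₁] with ξ hξ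
      have := phi_mono (f:=f) (D:=D) hl (le_of_lt hξ)
      rw [hφ] at this; linarith
    · filter_upwards with ξ
      exact lt_of_lt_of_le hap (le_phi hl ξ)
  · intro q hq
    rcases lt_or_ge b q with hbq | hbq
    · filter_upwards with ξ
      exact lt_of_le_of_lt (phi_le hl ξ) hbq
    · obtain ⟨u, hu1, hu2⟩ := exists_between hq
      have huIoo : u ∈ Ioo a b :=
        ⟨lt_of_le_of_lt (le_phi hl ξ₀) hu1, lt_of_lt_of_le hu2 hbq⟩
      have hφ : phi f D a b (Hfun f D a b u) = u := phi_Hfun hf hD h0 hl h1 u huIoo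
      have hξ₁ : ξ₀ < Hfun f D a b u := by
        by_contra hc
        push_neg at hc
        have := phi_mono (f:=f) (D:=D) hl hc
        rw [hφ] at this; linarith
      filter_upwards [Iio_mem_nhds hξ₁] with ξ hξ
      have := phi_mono (f:=f) (D:=D) hl (le_of_lt hξ)
      rw [hφ] at this; linarith

lemma phi_atBot : Tendsto (phi f D a b) atBot (𝓝 a) := by
  rw [tendsto_order]
  constructor
  · intro p hp
    filter_upwards with ξ
    exact lt_of_lt_of_le hp (le_phi hl ξ)
  · intro q hq
    obtain ⟨u, hu1, hu2⟩ := exists_between (lt_min hl hq : a < min b q)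
    have huIoo : u ∈ Ioo a b := ⟨hu1, lt_of_lt_of_le hu2 (min_le_left _ _)⟩
    rw [eventually_atBot]
    refine ⟨Hfun f D a b u, fun ξ hξ => ?_⟩
    have := phi_mono (f:=f) (D:=D) hl hξ
    rw [phi_Hfun hf hD h0 hl h1 u huIoo] at this
    exact lt_of_le_of_lt this (lt_of_lt_of_le hu2 (min_le_right _ _))

lemma phi_atTop : Tendsto (phi f D a b) atTop (𝓝 b) := by
  rw [tendsto_order]
  constructor
  · intro p hp
    obtain ⟨u, hu1, hu2⟩ := exists_between (max_lt hl hp : max a p < b)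
    have huIoo : u ∈ Ioo a b := ⟨lt_of_le_of_lt (le_max_left _ _) hu1, hu2⟩
    rw [eventually_atTop]
    refine ⟨Hfun f D a b u, fun ξ hξ => ?_⟩
    have := phi_mono (f:=f) (D:=D) hl hξ
    rw [phi_Hfun hf hD h0 hl h1 u huIoo] at this
    exact lt_of_lt_of_le (lt_of_le_of_lt (le_max_right _ _) hu1) this
  · intro q hq
    filter_upwards with ξ
    exact lt_of_le_of_lt (phi_le hl ξ) hq

end basic

section deriv
variable (hf : FluxAssumption f) (hD : DiffAssumption D)
  (h0 : 0 ≤ a) (hl : a < b) (h1 : b ≤ 1)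
include hf hD h0 hl h1

lemma I_open : IsOpen {ξ | a < phi f D a b ξ ∧ phi f D a b ξ < b} := by
  have he : {ξ | a < phi f D a b ξ ∧ phi f D a b ξ < b}
      = phi f D a b ⁻¹' (Ioo a b) := rfl
  rw [he]
  exact isOpen_Ioo.preimage (phi_cont hf hD h0 hl h1)

lemma H_phi : ∀ ξ, a < phi f D a b ξ → phi f D a b ξ < b →
    Hfun f D a b (phi f D a b ξ) = ξ := by
  intro ξ hξ1 hξ2
  obtain ⟨u, hu, hHu⟩ := (mem_I_iff hf hD h0 hl h1 ξ).1 ⟨hξ1, hξ2⟩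
  rw [← hHu, phi_Hfun hf hD h0 hl h1 u hu]

lemma phi_hasDeriv : ∀ ξ, a < phi f D a b ξ → phi f D a b ξ < b →
    HasDerivAt (phi f D a b) ((hfun f D a b (phi f D a b ξ))⁻¹) ξ := by
  intro ξ hξ1 hξ2
  apply HasDerivAt.of_local_left_inverse (phi_cont hf hD h0 hl h1).continuousAt
    (Hderiv hf hD h0 hl h1 _ ⟨hξ1, hξ2⟩)
    (ne_of_gt (hfun_pos hf hD h0 hl h1 _ ⟨hξ1, hξ2⟩))
  apply Filter.eventually_of_mem ((I_open hf hD h0 hl h1).mem_nhds ⟨hξ1, hξ2⟩)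
  exact fun ζ hζ => H_phi hf hD h0 hl h1 ζ hζ.1 hζ.2

lemma deriv_phi : ∀ ξ, a < phi f D a b ξ → phi f D a b ξ < b →
    deriv (phi f D a b) ξ = (hfun f D a b (phi f D a b ξ))⁻¹ :=
  fun ξ hξ1 hξ2 => (phi_hasDeriv hf hD h0 hl h1 ξ hξ1 hξ2).deriv

lemma inv_hfun_contDiff : ContDiffOn ℝ 1 (fun u => (hfun f D a b u)⁻¹) (Ioo a b) := by
  have hg : ContDiffOn ℝ 1 (fun u => redFlux f a b u - redFlux f a b a) (Ioo a b) := by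
    apply ContDiffOn.sub _ contDiffOn_const
    exact ((hf.1.sub ((contDiff_const.mul contDiff_id).contDiffOn)).mono
      (Ioo_sub hf hD h0 hl h1))
  have hdiv : ContDiffOn ℝ 1
      (fun u => (redFlux f a b u - redFlux f a b a) / D u) (Ioo a b) :=
    hg.div (hD.1.mono (Ioo_sub hf hD h0 hl h1)) (fun x hx =>
      ne_of_gt (hD.2.2 x ⟨lt_of_le_of_lt h0 hx.1, lt_of_lt_of_le hx.2 h1⟩))
  exact hdiv.congr (fun u hu => by rw [hfun, inv_div])

lemma phi_contDiffOn :
    ContDiffOn ℝ 2 (phi f D a b) {ξ | a < phi f D a b ξ ∧ phi f D a b ξ < b} := by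
  set I := {ξ | a < phi f D a b ξ ∧ phi f D a b ξ < b} with hI
  have hIopen : IsOpen I := I_open hf hD h0 hl h1
  have hdiff : DifferentiableOn ℝ (phi f D a b) I := fun ξ hξ =>
    (phi_hasDeriv hf hD h0 hl h1 ξ hξ.1 hξ.2).differentiableAt.differentiableWithinAt
  have hmaps : MapsTo (phi f D a b) I (Ioo a b) := fun ξ hξ => ⟨hξ.1, hξ.2⟩
  have hderiv_eq : ∀ ξ ∈ I, deriv (phi f D a b) ξ = (hfun f D a b (phi f D a b ξ))⁻¹ :=
    fun ξ hξ => deriv_phi hf hD h0 hl h1 ξ hξ.1 hξ.2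
  have hcomp_cont : ContinuousOn (fun ξ => (hfun f D a b (phi f D a b ξ))⁻¹) I := by
    apply ContinuousOn.inv₀
    · exact (hfun_contOn hf hD h0 hl h1).comp (phi_cont hf hD h0 hl h1).continuousOn hmaps
    · exact fun ξ hξ => ne_of_gt (hfun_pos hf hD h0 hl h1 _ (hmaps hξ))
  have hc1 : ContDiffOn ℝ 1 (phi f D a b) I := by
    rw [show ((1:WithTop ℕ∞)) = 0 + 1 by norm_num, contDiffOn_succ_iff_deriv_of_isOpen hIopen]
    refine ⟨hdiff, by simp, ?_⟩
    rw [contDiffOn_zero]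
    exact hcomp_cont.congr hderiv_eq
  have hc1' : ContDiffOn ℝ 1 (fun ξ => (hfun f D a b (phi f D a b ξ))⁻¹) I :=
    (inv_hfun_contDiff hf hD h0 hl h1).comp hc1 hmaps
  rw [show ((2:WithTop ℕ∞)) = 1 + 1 by norm_num, contDiffOn_succ_iff_deriv_of_isOpen hIopen]
  exact ⟨hdiff, by simp, hc1'.congr hderiv_eq⟩

end deriv
end TW

namespace TW
variable {f D : ℝ → ℝ} {a b : ℝ}
  (hf : FluxAssumption f) (hD : DiffAssumption D)
  (h0 : 0 ≤ a) (hl : a < b) (h1 : b ≤ 1)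
include hf hD h0 hl h1

lemma exists_profile : IsProfile f D a b (phi f D a b) := by
  refine ⟨phi_cont hf hD h0 hl h1, phi_mono (f:=f) (D:=D) hl,
    fun ξ => ⟨le_phi hl ξ, phi_le hl ξ⟩, phi_atBot hf hD h0 hl h1,
    phi_atTop hf hD h0 hl h1, phi_contDiffOn hf hD h0 hl h1, ?_⟩
  intro ξ hξ1 hξ2
  have hu : phi f D a b ξ ∈ Ioo a b := ⟨hξ1, hξ2⟩
  have hd := deriv_phi hf hD h0 hl h1 ξ hξ1 hξ2
  have hDpos : 0 < D (phi f D a b ξ) :=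
    hD.2.2 _ ⟨lt_of_le_of_lt h0 hξ1, lt_of_lt_of_le hξ2 h1⟩
  constructor
  · rw [hd]
    exact inv_pos.2 (hfun_pos hf hD h0 hl h1 _ hu)
  · rw [hd, hfun, inv_div]
    field_simp

lemma profile_char {φ : ℝ → ℝ} (hφ : IsProfile f D a b φ) :
    ∃ c : ℝ, (∃ ζ, a < φ ζ ∧ φ ζ < b) ∧
      (∀ ξ, a < φ ξ → φ ξ < b → Hfun f D a b (φ ξ) = ξ + c) ∧
      (∀ ξ, (a < φ ξ ∧ φ ξ < b) ↔ ∃ u ∈ Ioo a b, Hfun f D a b u = ξ + c) := by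
  obtain ⟨hcont, hmono, hmem, hbot, htop, hcd, hode⟩ := hφ
  set I := {ξ | a < φ ξ ∧ φ ξ < b} with hIdef
  have hIopen : IsOpen I := isOpen_Ioo.preimage hcont
  have hattain : ∀ u ∈ Ioo a b, ∃ ξ ∈ I, φ ξ = u := by
    rintro u hu
    obtain ⟨ξm, hξm⟩ := (hbot.eventually_lt_const hu.1).exists
    obtain ⟨ξp, hξp⟩ := (htop.eventually_const_lt hu.2).exists
    have hle : ξm ≤ ξp := by
      by_contra hc
      push_neg at hc
      have := hmono (le_of_lt hc)
      linarith
    obtain ⟨ξ, _, hξ⟩ := intermediate_value_Icc hle hcont.continuousOn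
      ⟨le_of_lt hξm, le_of_lt hξp⟩
    exact ⟨ξ, by rw [hIdef, mem_setOf_eq, hξ]; exact hu, hξ⟩
  have hne : ∃ ζ, ζ ∈ I := by
    obtain ⟨ξ, hξ, _⟩ := hattain ((a+b)/2) ⟨by linarith, by linarith⟩
    exact ⟨ξ, hξ⟩
  have hHD : ∀ ξ ∈ I, HasDerivAt (fun ζ => Hfun f D a b (φ ζ) - ζ) 0 ξ := by
    intro ξ hξ
    have hu : φ ξ ∈ Ioo a b := hξ
    have hφd : HasDerivAt φ (deriv φ ξ) ξ :=
      ((hcd.differentiableOn (by norm_num) ξ hξ).differentiableAt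
        (hIopen.mem_nhds hξ)).hasDerivAt
    have hH := (Hderiv hf hD h0 hl h1 _ hu).comp ξ hφd
    have hval : hfun f D a b (φ ξ) * deriv φ ξ = 1 := by
      have hode' := (hode ξ hξ.1 hξ.2).2
      rw [hfun, div_mul_eq_mul_div, hode',
        div_self (ne_of_gt (gap f a b hf h0 hl h1 (φ ξ) hu))]
    have h1' : HasDerivAt (fun ζ => Hfun f D a b (φ ζ)) 1 ξ := by
      rw [← hval]; exact hH
    have := h1'.sub (hasDerivAt_id' ξ); rw [sub_self] at this; exact this
  have hconvex : Convex ℝ I := by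
    rw [convex_iff_ordConnected]
    constructor
    intro x hx y hy z hz
    exact ⟨lt_of_lt_of_le hx.1 (hmono hz.1), lt_of_le_of_lt (hmono hz.2) hy.2⟩
  have hdiffOn : DifferentiableOn ℝ (fun ζ => Hfun f D a b (φ ζ) - ζ) I :=
    fun ξ hξ => (hHD ξ hξ).differentiableAt.differentiableWithinAt
  have hfd : ∀ ξ ∈ I, fderivWithin ℝ (fun ζ => Hfun f D a b (φ ζ) - ζ) I ξ = 0 := by
    intro ξ hξ
    rw [fderivWithin_of_isOpen hIopen hξ, (hHD ξ hξ).hasFDerivAt.fderiv]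
    ext
    simp
  obtain ⟨ξ₀, hξ₀⟩ := hne
  have hconst : ∀ ξ ∈ I, Hfun f D a b (φ ξ) - ξ = Hfun f D a b (φ ξ₀) - ξ₀ :=
    fun ξ hξ => hconvex.is_const_of_fderivWithin_eq_zero hdiffOn hfd hξ hξ₀
  refine ⟨Hfun f D a b (φ ξ₀) - ξ₀, ⟨ξ₀, hξ₀⟩, fun ξ hξ1 hξ2 => ?_, fun ξ => ?_⟩
  · have := hconst ξ ⟨hξ1, hξ2⟩
    linarith
  · constructor
    · intro hξ
      exact ⟨φ ξ, hξ, by have := hconst ξ hξ; linarith⟩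
    · rintro ⟨u, hu, hHu⟩
      obtain ⟨ξ', hξ', hφξ'⟩ := hattain u hu
      have : ξ' = ξ := by
        have h1' := hconst ξ' hξ'
        rw [hφξ'] at h1'
        linarith
      rw [← this]
      exact hξ'

lemma profile_unique {φ₁ φ₂ : ℝ → ℝ} (hφ₁ : IsProfile f D a b φ₁)
    (hφ₂ : IsProfile f D a b φ₂) : ∃ σ : ℝ, ∀ ξ : ℝ, φ₂ ξ = φ₁ (ξ + σ) := by
  obtain ⟨c₁, hne₁, hc₁, hiff₁⟩ := profile_char hf hD h0 hl h1 hφ₁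
  obtain ⟨c₂, hne₂, hc₂, hiff₂⟩ := profile_char hf hD h0 hl h1 hφ₂
  refine ⟨c₂ - c₁, fun ξ => ?_⟩
  have htrans : ∀ ζ : ℝ, (a < φ₂ ζ ∧ φ₂ ζ < b) ↔
      (a < φ₁ (ζ + (c₂ - c₁)) ∧ φ₁ (ζ + (c₂ - c₁)) < b) := by
    intro ζ
    rw [hiff₂, hiff₁]
    constructor
    · rintro ⟨u, hu, hHu⟩
      exact ⟨u, hu, by rw [hHu]; ring⟩
    · rintro ⟨u, hu, hHu⟩
      exact ⟨u, hu, by rw [hHu]; ring⟩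
  by_cases hξI : a < φ₂ ξ ∧ φ₂ ξ < b
  · have h1' := (htrans ξ).1 hξI
    have e2 : Hfun f D a b (φ₂ ξ) = ξ + c₂ := hc₂ ξ hξI.1 hξI.2
    have e1 : Hfun f D a b (φ₁ (ξ + (c₂ - c₁))) = ξ + (c₂ - c₁) + c₁ :=
      hc₁ _ h1'.1 h1'.2
    exact ((Hmono hf hD h0 hl h1).injOn ⟨hξI.1, hξI.2⟩ ⟨h1'.1, h1'.2⟩
      (by rw [e1, e2]; ring)).symm ▸ rfl
  · have h2' : ¬(a < φ₁ (ξ + (c₂ - c₁)) ∧ φ₁ (ξ + (c₂ - c₁)) < b) :=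
      fun h => hξI ((htrans ξ).2 h)
    have hmem2 := hφ₂.2.2.1 ξ
    have hmem1 := hφ₁.2.2.1 (ξ + (c₂ - c₁))
    obtain ⟨ζ, hζ⟩ := hne₂
    have hζ1 := (htrans ζ).1 hζ
    rcases not_and_or.1 hξI with hcase | hcase
    · -- φ₂ ξ = a
      have ha2 : φ₂ ξ = a := le_antisymm (not_lt.1 hcase) hmem2.1
      have hξζ : ξ ≤ ζ := by
        by_contra hc
        push_neg at hc
        have := hφ₂.2.1 (le_of_lt hc)
        rw [ha2] at this
        linarith [hζ.1]
      have ha1 : φ₁ (ξ + (c₂ - c₁)) = a := by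
        rcases not_and_or.1 h2' with h | h
        · exact le_antisymm (not_lt.1 h) hmem1.1
        · exfalso
          have hb1 : φ₁ (ξ + (c₂ - c₁)) = b := le_antisymm hmem1.2 (not_lt.1 h)
          have := hφ₁.2.1 (by linarith : ξ + (c₂ - c₁) ≤ ζ + (c₂ - c₁))
          rw [hb1] at this
          linarith [hζ1.2]
      rw [ha2, ha1]
    · -- φ₂ ξ = b
      have hb2 : φ₂ ξ = b := le_antisymm hmem2.2 (not_lt.1 hcase)
      have hζξ : ζ ≤ ξ := by
        by_contra hc
        push_neg at hc
        have := hφ₂.2.1 (le_of_lt hc)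
        rw [hb2] at this
        linarith [hζ.2]
      have hb1 : φ₁ (ξ + (c₂ - c₁)) = b := by
        rcases not_and_or.1 h2' with h | h
        · exfalso
          have ha1 : φ₁ (ξ + (c₂ - c₁)) = a := le_antisymm (not_lt.1 h) hmem1.1
          have := hφ₁.2.1 (by linarith : ζ + (c₂ - c₁) ≤ ξ + (c₂ - c₁))
          rw [ha1] at this
          linarith [hζ1.1]
        · exact le_antisymm hmem1.2 (not_lt.1 h)
      rw [hb2, hb1]

end TW

/-- Existence of the traveling-wave profile and its uniqueness up to translation. -/
theorem stmt0 (f D : ℝ → ℝ) (hf : FluxAssumption f) (hD : DiffAssumption D)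
    (lm lp : ℝ) (h0 : 0 ≤ lm) (hl : lm < lp) (h1 : lp ≤ 1) :
    (∃ φ : ℝ → ℝ, IsProfile f D lm lp φ) ∧
    ∀ φ₁ φ₂ : ℝ → ℝ, IsProfile f D lm lp φ₁ → IsProfile f D lm lp φ₂ →
      ∃ σ : ℝ, ∀ ξ : ℝ, φ₂ ξ = φ₁ (ξ + σ) :=
  ⟨⟨TW.phi f D lm lp, TW.exists_profile hf hD h0 hl h1⟩,
    fun _ _ hφ₁ hφ₂ => TW.profile_unique hf hD h0 hl h1 hφ₁ hφ₂⟩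
end

section
/- Assume f satisfies (f), D satisfies (D), 0 ≤ ℓ⁻ < ℓ⁺ ≤ 1, c = (f(ℓ⁺)−f(ℓ⁻))/(ℓ⁺−ℓ⁻), g(ρ) = f(ρ) − cρ, and let φ be a profile with I = {ξ : ℓ⁻ < φ(ξ) < ℓ⁺}. Then D(0) = 0 and ℓ⁻ = 0 hold if and only if there exists ν⁻ ∈ ℝ such that I ⊆ (ν⁻, ∞) and φ(ξ) = 0 for all ξ ≤ ν⁻. In that case: lim_{ξ↓ν⁻} φ′(ξ) = (ℓ⁺ f′(0) − f(ℓ⁺)) / (ℓ⁺ D′(0)) if D′(0) > 0, lim_{ξ↓ν⁻} φ′(ξ) = +∞ if D′(0) = 0, and lim_{ξ↓ν⁻} D(φ(ξ)) φ′(ξ) = 0. -/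
open Set Filter MeasureTheory
open scoped Topology Classical

lemma zero_sup_props {φ : ℝ → ℝ} (hcont : Continuous φ) (hmono : Monotone φ)
    (hnonneg : ∀ ξ, 0 ≤ φ ξ) {z p : ℝ} (hz : φ z = 0) (hp : 0 < φ p) :
    ∃ ν, φ ν = 0 ∧ (∀ ξ ≤ ν, φ ξ = 0) ∧ ∀ ξ, ν < ξ → 0 < φ ξ := by
  set Z := {ξ | φ ξ = 0} with hZ
  have hZne : Z.Nonempty := ⟨z, hz⟩
  have hbdd : BddAbove Z := by
    refine ⟨p, fun x hx => ?_⟩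
    by_contra h
    push_neg at h
    have h2 : φ p ≤ φ x := hmono h.le
    rw [hx] at h2
    linarith
  set ν := sSup Z with hν
  have hlt : ∀ ξ < ν, φ ξ = 0 := by
    intro ξ hξ
    obtain ⟨z', hz', hξz'⟩ := exists_lt_of_lt_csSup hZne hξ
    exact le_antisymm (hz' ▸ hmono hξz'.le) (hnonneg ξ)
  have hν0 : φ ν = 0 := by
    have h1 : Tendsto φ (𝓝[<] ν) (𝓝 (φ ν)) :=
      (hcont.tendsto ν).mono_left nhdsWithin_le_nhds
    have h2 : Tendsto φ (𝓝[<] ν) (𝓝 0) := by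
      refine tendsto_const_nhds.congr' ?_
      filter_upwards [self_mem_nhdsWithin] with ξ hξ using (hlt ξ hξ).symm
    exact tendsto_nhds_unique h1 h2
  refine ⟨ν, hν0, fun ξ hξ => ?_, fun ξ hξ => ?_⟩
  · rcases hξ.lt_or_eq with h | h
    · exact hlt ξ h
    · exact h ▸ hν0
  · rcases (hnonneg ξ).lt_or_eq with h | h
    · exact h
    · exact absurd (le_csSup hbdd (show ξ ∈ Z from h.symm)) (not_le.2 hξ)

lemma slope_tendsto {f : ℝ → ℝ} (h : ContDiffOn ℝ 1 f (Icc 0 1)) (hf0 : f 0 = 0) :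
    Tendsto (fun s => f s / s) (𝓝[>] (0:ℝ)) (𝓝 (derivWithin f (Icc 0 1) 0)) := by
  have h0 : (0:ℝ) ∈ Icc (0:ℝ) 1 := ⟨le_rfl, zero_le_one⟩
  have hd : HasDerivWithinAt f (derivWithin f (Icc 0 1) 0) (Icc 0 1) 0 :=
    ((h.differentiableOn one_ne_zero) 0 h0).hasDerivWithinAt
  have h1 := hasDerivWithinAt_iff_tendsto_slope.1 hd
  have hmono : 𝓝[>] (0:ℝ) ≤ 𝓝[Icc 0 1 \ {0}] 0 := by
    rw [← nhdsWithin_Ioo_eq_nhdsGT (zero_lt_one)]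
    exact nhdsWithin_mono _ (fun x hx => ⟨⟨hx.1.le, hx.2.le⟩, ne_of_gt hx.1⟩)
  refine (h1.mono_left hmono).congr fun s => ?_
  rw [slope_def_field, hf0, sub_zero, sub_zero]

lemma slope_strict {f : ℝ → ℝ} (hf : StrictConcaveOn ℝ (Icc 0 1) f)
    (hf0 : f 0 = 0) {s t : ℝ} (hs : 0 < s) (hst : s < t) (ht : t ≤ 1) :
    f t / t < f s / s := by
  have ht0 : (0:ℝ) < t := hs.trans hst
  have h0m : (0:ℝ) ∈ Icc (0:ℝ) 1 := ⟨le_rfl, by norm_num⟩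
  have htm : t ∈ Icc (0:ℝ) 1 := ⟨ht0.le, ht⟩
  have hb : 0 < s / t := div_pos hs ht0
  have ha : 0 < 1 - s / t := by
    have : s / t < 1 := (div_lt_one ht0).2 hst
    linarith
  have key := hf.2 h0m htm ht0.ne ha hb (by ring)
  have hst' : (1 - s / t) • (0:ℝ) + (s / t) • t = s := by
    rw [smul_eq_mul, smul_eq_mul, mul_zero, zero_add, div_mul_cancel₀ s ht0.ne']
  rw [hst', hf0, smul_eq_mul, smul_eq_mul, mul_zero, zero_add] at key
  rw [div_lt_div_iff₀ ht0 hs]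
  have := mul_lt_mul_of_pos_right key ht0
  calc f t * s = s / t * f t * t := by field_simp
    _ < f s * t := this

lemma slope_le {f : ℝ → ℝ} (hf : ConcaveOn ℝ (Icc 0 1) f)
    (hf0 : f 0 = 0) {s t : ℝ} (hs : 0 ≤ s) (hst : s ≤ t) (ht0 : 0 < t) (ht : t ≤ 1) :
    s / t * f t ≤ f s := by
  have h0m : (0:ℝ) ∈ Icc (0:ℝ) 1 := ⟨le_rfl, by norm_num⟩
  have htm : t ∈ Icc (0:ℝ) 1 := ⟨ht0.le, ht⟩
  have hb : 0 ≤ s / t := div_nonneg hs ht0.le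
  have ha : 0 ≤ 1 - s / t := by
    have : s / t ≤ 1 := (div_le_one ht0).2 hst
    linarith
  have key := hf.2 h0m htm ha hb (by ring)
  have hst' : (1 - s / t) • (0:ℝ) + (s / t) • t = s := by
    rw [smul_eq_mul, smul_eq_mul, mul_zero, zero_add, div_mul_cancel₀ s ht0.ne']
  rw [hst', hf0, smul_eq_mul, smul_eq_mul, mul_zero, zero_add] at key
  exact key


lemma rev_core (f D : ℝ → ℝ)
    (hf1 : ContDiffOn ℝ 1 f (Icc 0 1)) (hf40 : f 0 = 0)
    (hD1 : ContDiffOn ℝ 1 D (Icc 0 1))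
    (hD2 : ∀ x ∈ Icc (0:ℝ) 1, 0 ≤ D x)
    (lp : ℝ) (hlp : 0 < lp) (h1 : lp ≤ 1)
    (φ : ℝ → ℝ) (hcont : Continuous φ) (hmono : Monotone φ)
    (hmem : ∀ ξ, φ ξ ∈ Icc (0:ℝ) lp)
    (htop : Tendsto φ atTop (𝓝 lp))
    (hdiffI : ∀ ξ, 0 < φ ξ → φ ξ < lp → DifferentiableAt ℝ φ ξ)
    (hode2 : ∀ ξ, 0 < φ ξ → φ ξ < lp →
      0 < deriv φ ξ ∧ D (φ ξ) * deriv φ ξ = f (φ ξ) - waveSpeed f 0 lp * φ ξ)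
    (ν : ℝ) (hzero : ∀ ξ ≤ ν, φ ξ = 0) :
    D 0 = 0 := by
  set c := waveSpeed f 0 lp with hcdef
  by_contra hne
  have hDpos0 : 0 < D 0 := lt_of_le_of_ne (hD2 0 ⟨le_rfl, zero_le_one⟩) (Ne.symm hne)
  -- continuity of D at 0 within Icc 0 1
  have hDcw : ContinuousWithinAt D (Icc 0 1) 0 := (hD1.continuousOn) 0 ⟨le_rfl, zero_le_one⟩
  have ev1 : ∀ᶠ s in 𝓝[Icc (0:ℝ) 1] 0, D 0 / 2 < D s :=
    hDcw.eventually (eventually_gt_nhds (half_lt_self hDpos0))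
  -- Lipschitz bound for f near 0 within Icc 0 1
  obtain ⟨K, t, htmem, hKf⟩ :=
    (hf1.contDiffWithinAt ⟨le_rfl, zero_le_one⟩).exists_lipschitzOnWith (convex_Icc 0 1)
  obtain ⟨ε, hε, hball⟩ := Metric.mem_nhdsWithin_iff.1 (inter_mem htmem ev1)
  have h0t : (0:ℝ) ∈ t ∧ D 0 / 2 < D 0 :=
    hball ⟨Metric.mem_ball_self hε, le_rfl, zero_le_one⟩
  have hfb : ∀ s : ℝ, 0 ≤ s → s < ε → s ≤ 1 → f s ≤ K * s ∧ D 0 / 2 < D s := by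
    intro s hs hsε hs1
    have hst : s ∈ t ∧ D 0 / 2 < D s := by
      refine hball ⟨?_, hs, hs1⟩
      simp [Real.dist_eq, abs_of_nonneg hs, hsε]
    refine ⟨?_, hst.2⟩
    have := hKf.dist_le_mul s hst.1 0 h0t.1
    rw [Real.dist_eq, Real.dist_eq, hf40, sub_zero, sub_zero, abs_of_nonneg hs] at this
    calc f s ≤ |f s| := le_abs_self _
      _ ≤ K * s := this
  -- supremum of zero set
  have hnonneg : ∀ ξ, 0 ≤ φ ξ := fun ξ => (hmem ξ).1
  obtain ⟨p, hp⟩ : ∃ p, 0 < φ p := by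
    have := htop.eventually (eventually_gt_nhds (half_lt_self hlp))
    obtain ⟨p, hp⟩ := this.exists
    exact ⟨p, lt_trans (half_pos hlp) hp⟩
  obtain ⟨ν', hν'0, hν'zero, hν'pos⟩ :=
    zero_sup_props hcont hmono hnonneg (hzero ν le_rfl) hp
  -- pick ξ1 > ν' with small positive value
  have hφtend : Tendsto φ (𝓝[>] ν') (𝓝 0) := by
    have h : Tendsto φ (𝓝[>] ν') (𝓝 (φ ν')) :=
      (hcont.tendsto ν').mono_left nhdsWithin_le_nhds
    rwa [hν'0] at h
  have hminpos : 0 < min ε lp := lt_min hε hlp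
  obtain ⟨ξ1, hξ1small, hξ1mem⟩ :=
    ((hφtend.eventually (eventually_lt_nhds hminpos)).and self_mem_nhdsWithin).exists
  have hξ1pos : 0 < φ ξ1 := hν'pos ξ1 hξ1mem
  have hξ1lp : φ ξ1 < lp := lt_of_lt_of_le hξ1small (min_le_right _ _)
  have hξ1ε : φ ξ1 < ε := lt_of_lt_of_le hξ1small (min_le_left _ _)
  -- constants
  set C := (K + |c|) / (D 0 / 2) with hCdef
  have hC0 : 0 ≤ C := div_nonneg (by positivity) (by linarith)
  -- derivative bound on (ν', ξ1]
  have hIsub : ∀ ξ, ν' < ξ → ξ ≤ ξ1 → 0 < φ ξ ∧ φ ξ < lp ∧ φ ξ < ε := by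
    intro ξ hν'ξ hξξ1
    exact ⟨hν'pos ξ hν'ξ, lt_of_le_of_lt (hmono hξξ1) hξ1lp,
      lt_of_le_of_lt (hmono hξξ1) hξ1ε⟩
  have hderiv_le : ∀ ξ, ν' < ξ → ξ ≤ ξ1 → deriv φ ξ ≤ C * φ ξ := by
    intro ξ hν'ξ hξξ1
    obtain ⟨hp1, hp2, hp3⟩ := hIsub ξ hν'ξ hξξ1
    obtain ⟨hdpos, hodeq⟩ := hode2 ξ hp1 hp2
    have hφ1 : φ ξ ≤ 1 := le_trans (hmem ξ).2 h1
    obtain ⟨hfle, hDgt⟩ := hfb (φ ξ) hp1.le hp3 hφ1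
    have hDne : (0:ℝ) < D (φ ξ) := lt_trans (by linarith) hDgt
    have hnum_le : f (φ ξ) - c * φ ξ ≤ (K + |c|) * φ ξ := by
      have h := mul_le_mul_of_nonneg_right (neg_le_abs c) hp1.le
      rw [neg_mul] at h
      linarith
    have heq : deriv φ ξ = (f (φ ξ) - c * φ ξ) / D (φ ξ) := by
      field_simp
      linarith [hodeq]
    rw [heq]
    have hnum_nonneg : 0 ≤ f (φ ξ) - c * φ ξ := by
      have := hodeq
      nlinarith
    calc (f (φ ξ) - c * φ ξ) / D (φ ξ) ≤ ((K + |c|) * φ ξ) / (D 0 / 2) :=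
          div_le_div₀ (by positivity) hnum_le (by linarith) hDgt.le
      _ = C * φ ξ := by rw [hCdef]; ring
  -- the auxiliary function u and its antitonicity
  set u := fun ξ : ℝ => φ ξ * Real.exp (-C * ξ) with hudef
  have hu : ∀ ξ, ν' < ξ → ξ < ξ1 →
      HasDerivAt u (deriv φ ξ * Real.exp (-C * ξ) + φ ξ * (Real.exp (-C * ξ) * -C)) ξ := by
    intro ξ h1' h2'
    obtain ⟨hp1, hp2, _⟩ := hIsub ξ h1' h2'.le
    have hφd := (hdiffI ξ hp1 hp2).hasDerivAt
    have hlin : HasDerivAt (fun ξ : ℝ => -C * ξ) (-C) ξ := by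
      simpa using (hasDerivAt_id ξ).const_mul (-C)
    exact hφd.mul hlin.exp
  have hanti : AntitoneOn u (Icc ν' ξ1) := by
    apply antitoneOn_of_deriv_nonpos (convex_Icc _ _)
    · exact (hcont.mul (Real.continuous_exp.comp
        (continuous_const.mul continuous_id))).continuousOn
    · rw [interior_Icc]
      intro ξ hξ
      exact ((hu ξ hξ.1 hξ.2).differentiableAt).differentiableWithinAt
    · rw [interior_Icc]
      intro ξ hξ
      rw [(hu ξ hξ.1 hξ.2).deriv]
      have hle := hderiv_le ξ hξ.1 hξ.2.le
      nlinarith [Real.exp_pos (-C * ξ), (hIsub ξ hξ.1 hξ.2.le).1]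
  set P := φ ξ1 * Real.exp (-C * ξ1) with hP
  have hPpos : 0 < P := mul_pos hξ1pos (Real.exp_pos _)
  set ε1 := P / Real.exp (-C * ν') with hε1
  have hε1pos : 0 < ε1 := div_pos hPpos (Real.exp_pos _)
  have hlb : ∀ ξ, ν' < ξ → ξ ≤ ξ1 → ε1 ≤ φ ξ := by
    intro ξ h1' h2'
    have hu_le : u ξ1 ≤ u ξ := hanti ⟨h1'.le, h2'⟩ ⟨hξ1mem.le, le_rfl⟩ h2'
    have hexp : Real.exp (-C * ξ) ≤ Real.exp (-C * ν') := by
      apply Real.exp_le_exp.2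
      nlinarith
    have hφpos := (hIsub ξ h1' h2').1
    rw [hε1, div_le_iff₀ (Real.exp_pos _)]
    calc P ≤ φ ξ * Real.exp (-C * ξ) := hu_le
      _ ≤ φ ξ * Real.exp (-C * ν') := by nlinarith
  have hev : ∀ᶠ ξ in 𝓝[>] ν', ξ ∈ Ioc ν' ξ1 :=
    Ioc_mem_nhdsGT_of_mem ⟨le_rfl, hξ1mem⟩
  obtain ⟨ξ2, hξ2lt, hξ2mem⟩ :=
    ((hφtend.eventually (eventually_lt_nhds hε1pos)).and hev).exists
  exact absurd (hlb ξ2 hξ2mem.1 hξ2mem.2) (not_le.2 hξ2lt)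

lemma fwd_core (f D : ℝ → ℝ)
    (hf2 : StrictConcaveOn ℝ (Icc 0 1) f) (hf40 : f 0 = 0)
    (hD1 : ContDiffOn ℝ 1 D (Icc 0 1))
    (hD3 : ∀ x ∈ Ioo (0:ℝ) 1, 0 < D x)
    (lp : ℝ) (hlp : 0 < lp) (h1 : lp ≤ 1)
    (φ : ℝ → ℝ) (hcont : Continuous φ) (hmono : Monotone φ)
    (hmem : ∀ ξ, φ ξ ∈ Icc (0:ℝ) lp)
    (hbot : Tendsto φ atBot (𝓝 0))
    (htop : Tendsto φ atTop (𝓝 lp))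
    (hdiffI : ∀ ξ, 0 < φ ξ → φ ξ < lp → DifferentiableAt ℝ φ ξ)
    (hode2 : ∀ ξ, 0 < φ ξ → φ ξ < lp →
      0 < deriv φ ξ ∧ D (φ ξ) * deriv φ ξ = f (φ ξ) - waveSpeed f 0 lp * φ ξ)
    (hD0 : D 0 = 0) :
    ∃ ν : ℝ, {ξ | 0 < φ ξ ∧ φ ξ < lp} ⊆ Ioi ν ∧ ∀ ξ ≤ ν, φ ξ = 0 := by
  set c := waveSpeed f 0 lp with hcdef
  have hc : c = f lp / lp := by
    rw [hcdef]; unfold waveSpeed; rw [hf40, sub_zero, sub_zero]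
  obtain ⟨K, t, htmem, hKD⟩ :=
    (hD1.contDiffWithinAt ⟨le_rfl, zero_le_one⟩).exists_lipschitzOnWith (convex_Icc 0 1)
  obtain ⟨ε, hε, hball⟩ := Metric.mem_nhdsWithin_iff.1 htmem
  have h0t : (0:ℝ) ∈ t := hball ⟨Metric.mem_ball_self hε, le_rfl, zero_le_one⟩
  have hDb : ∀ s : ℝ, 0 ≤ s → s < ε → s ≤ 1 → D s ≤ K * s := by
    intro s hs hsε hs1
    have hst : s ∈ t := hball ⟨by simp [Real.dist_eq, abs_of_nonneg hs, hsε], hs, hs1⟩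
    have hdist := hKD.dist_le_mul s hst 0 h0t
    rw [Real.dist_eq, Real.dist_eq, hD0, sub_zero, sub_zero, abs_of_nonneg hs] at hdist
    calc D s ≤ |D s| := le_abs_self _
      _ ≤ K * s := hdist
  have hZ : ∃ z, φ z = 0 := by
    by_contra hZ
    push_neg at hZ
    have hpos : ∀ ξ, 0 < φ ξ := fun ξ => lt_of_le_of_ne (hmem ξ).1 (Ne.symm (hZ ξ))
    have hminpos : 0 < min ε lp := lt_min hε hlp
    obtain ⟨ξ1, hξ1small⟩ := (hbot.eventually (eventually_lt_nhds hminpos)).exists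
    set s1 := φ ξ1 with hs1def
    have hs1pos : 0 < s1 := hpos ξ1
    have hs1lp : s1 < lp := lt_of_lt_of_le hξ1small (min_le_right _ _)
    have hs1ε : s1 < ε := lt_of_lt_of_le hξ1small (min_le_left _ _)
    have hs11 : s1 ≤ 1 := le_trans (hmem ξ1).2 h1
    have hk : 0 < f s1 / s1 - c := by
      rw [hc]
      linarith [slope_strict hf2 hf40 hs1pos hs1lp h1]
    set k := f s1 / s1 - c with hkdef
    have hKpos : 0 < (K:ℝ) := by
      have hDs1 : 0 < D s1 := hD3 s1 ⟨hs1pos, lt_of_lt_of_le hs1lp h1⟩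
      have := hDb s1 hs1pos.le hs1ε hs11
      nlinarith
    set m := k / K with hmdef
    have hm : 0 < m := div_pos hk hKpos
    have hIic : ∀ ξ, ξ ≤ ξ1 → 0 < φ ξ ∧ φ ξ < lp :=
      fun ξ h => ⟨hpos ξ, lt_of_le_of_lt (hmono h) hs1lp⟩
    have hderiv_ge : ∀ ξ, ξ ≤ ξ1 → m ≤ deriv φ ξ := by
      intro ξ hξ
      obtain ⟨hp1, hp2⟩ := hIic ξ hξ
      obtain ⟨hdpos, hodeq⟩ := hode2 ξ hp1 hp2
      have hφs1 : φ ξ ≤ s1 := hmono hξ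
      have hφ1 : φ ξ ≤ 1 := le_trans (hmem ξ).2 h1
      have hDle : D (φ ξ) ≤ K * φ ξ := hDb _ hp1.le (lt_of_le_of_lt hφs1 hs1ε) hφ1
      have hDpos : 0 < D (φ ξ) := hD3 _ ⟨hp1, lt_of_lt_of_le hp2 h1⟩
      have hnum_ge : k * φ ξ ≤ f (φ ξ) - c * φ ξ := by
        have hsl := slope_le hf2.concaveOn hf40 hp1.le hφs1 hs1pos hs11
        have h2 : φ ξ / s1 * f s1 = f s1 / s1 * φ ξ := by ring
        have h3 : k * φ ξ = f s1 / s1 * φ ξ - c * φ ξ := by rw [hkdef]; ring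
        rw [h3, ← h2]
        linarith
      have heq : deriv φ ξ = (f (φ ξ) - c * φ ξ) / D (φ ξ) := by
        field_simp
        linarith [hodeq]
      have hnum_nonneg : 0 ≤ f (φ ξ) - c * φ ξ := by nlinarith
      have hstep : k * φ ξ / (K * φ ξ) ≤ (f (φ ξ) - c * φ ξ) / D (φ ξ) :=
        div_le_div₀ hnum_nonneg hnum_ge hDpos hDle
      rw [mul_div_mul_right _ _ (ne_of_gt hp1)] at hstep
      rw [heq, ← hmdef] at *
      exact hstep
    have hmono2 : MonotoneOn (fun ξ => φ ξ - m * ξ) (Iic ξ1) := by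
      apply monotoneOn_of_deriv_nonneg (convex_Iic _)
      · exact (hcont.sub (continuous_const.mul continuous_id)).continuousOn
      · rw [interior_Iic]
        intro ξ hξ
        have hd : HasDerivAt (fun ξ => φ ξ - m * ξ) (deriv φ ξ - m) ξ := by
          have hl : HasDerivAt (fun ξ : ℝ => m * ξ) m ξ := by
            simpa using (hasDerivAt_id ξ).const_mul m
          exact ((hdiffI ξ (hIic ξ hξ.le).1 (hIic ξ hξ.le).2).hasDerivAt).sub hl
        exact hd.differentiableAt.differentiableWithinAt
      · rw [interior_Iic]
        intro ξ hξ
        have hd : HasDerivAt (fun ξ => φ ξ - m * ξ) (deriv φ ξ - m) ξ := by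
          have hl : HasDerivAt (fun ξ : ℝ => m * ξ) m ξ := by
            simpa using (hasDerivAt_id ξ).const_mul m
          exact ((hdiffI ξ (hIic ξ hξ.le).1 (hIic ξ hξ.le).2).hasDerivAt).sub hl
        rw [hd.deriv]
        linarith [hderiv_ge ξ hξ.le]
    set ξ2 := ξ1 - (s1 / m + 1) with hξ2def
    have hξ2 : ξ2 ≤ ξ1 := by
      rw [hξ2def]
      have : 0 < s1 / m + 1 := by positivity
      linarith
    have hv := hmono2 (mem_Iic.2 hξ2) (mem_Iic.2 le_rfl) hξ2
    simp only at hv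
    have hx : m * ξ1 - m * ξ2 = s1 + m := by
      rw [hξ2def]
      field_simp
      ring
    have := hpos ξ2
    simp only [← hs1def] at hv
    nlinarith
  obtain ⟨z, hz⟩ := hZ
  obtain ⟨p, hp⟩ : ∃ p, 0 < φ p := by
    obtain ⟨p, hp⟩ := (htop.eventually (eventually_gt_nhds (half_lt_self hlp))).exists
    exact ⟨p, lt_trans (half_pos hlp) hp⟩
  obtain ⟨ν, hν0, hνzero, hνpos⟩ := zero_sup_props hcont hmono (fun ξ => (hmem ξ).1) hz hp
  refine ⟨ν, fun ξ hξ => ?_, hνzero⟩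
  by_contra h
  simp only [mem_Ioi, not_lt] at h
  have h2 := hξ.1
  rw [hνzero ξ h] at h2
  exact lt_irrefl 0 h2

lemma part2_core (f D : ℝ → ℝ)
    (hf1 : ContDiffOn ℝ 1 f (Icc 0 1)) (hf2 : StrictConcaveOn ℝ (Icc 0 1) f) (hf40 : f 0 = 0)
    (hD1 : ContDiffOn ℝ 1 D (Icc 0 1)) (hD3 : ∀ x ∈ Ioo (0:ℝ) 1, 0 < D x)
    (hD0 : D 0 = 0)
    (lp : ℝ) (hlp : 0 < lp) (h1 : lp ≤ 1)
    (φ : ℝ → ℝ) (hcont : Continuous φ) (hmono : Monotone φ)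
    (hmem : ∀ ξ, φ ξ ∈ Icc (0:ℝ) lp)
    (hode2 : ∀ ξ, 0 < φ ξ → φ ξ < lp →
      0 < deriv φ ξ ∧ D (φ ξ) * deriv φ ξ = f (φ ξ) - waveSpeed f 0 lp * φ ξ)
    (ν : ℝ) (hsub : {ξ | 0 < φ ξ ∧ φ ξ < lp} ⊆ Ioi ν)
    (hzero : ∀ ξ ≤ ν, φ ξ = 0)
    (hglb : IsGLB {ξ | 0 < φ ξ ∧ φ ξ < lp} ν) :
    (0 < derivWithin D (Icc 0 1) 0 →
      Tendsto (deriv φ) (𝓝[>] ν)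
        (𝓝 ((lp * derivWithin f (Icc 0 1) 0 - f lp) / (lp * derivWithin D (Icc 0 1) 0)))) ∧
    (derivWithin D (Icc 0 1) 0 = 0 → Tendsto (deriv φ) (𝓝[>] ν) atTop) ∧
    Tendsto (fun ξ => D (φ ξ) * deriv φ ξ) (𝓝[>] ν) (𝓝 0) := by
  set c := waveSpeed f 0 lp with hcdef
  have hc : c = f lp / lp := by
    rw [hcdef]; unfold waveSpeed; rw [hf40, sub_zero, sub_zero]
  set I := {ξ | 0 < φ ξ ∧ φ ξ < lp} with hIdef
  have hνzero : φ ν = 0 := hzero ν le_rfl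
  have hIne : I.Nonempty := by
    by_contra h
    rw [not_nonempty_iff_eq_empty] at h
    have h2 : ν + 1 ≤ ν := hglb.2 (by rw [h]; intro x hx; exact absurd hx (notMem_empty x))
    linarith
  obtain ⟨ζ, hζ⟩ := hIne
  have hνζ : ν < ζ := hsub hζ
  have hIoc : Ioc ν ζ ⊆ I := by
    intro ξ hξ
    refine ⟨?_, lt_of_le_of_lt (hmono hξ.2) hζ.2⟩
    rcases (hmem ξ).1.lt_or_eq with h | h
    · exact h
    · exfalso
      have h0 : φ ξ = 0 := h.symm
      have hlb : ξ ∈ lowerBounds I := by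
        intro η hη
        by_contra hc'
        push_neg at hc'
        have h2 : φ η ≤ φ ξ := hmono hc'.le
        rw [h0] at h2
        exact absurd hη.1 (not_lt.2 h2)
      exact absurd (hglb.2 hlb) (not_le.2 hξ.1)
  have hmemIoc : Ioc ν ζ ∈ 𝓝[>] ν := Ioc_mem_nhdsGT_of_mem ⟨le_rfl, hνζ⟩
  have hφI : ∀ᶠ ξ in 𝓝[>] ν, ξ ∈ I := mem_of_superset hmemIoc hIoc
  have hφ0 : Tendsto φ (𝓝[>] ν) (𝓝 0) := by
    have h : Tendsto φ (𝓝[>] ν) (𝓝 (φ ν)) :=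
      (hcont.tendsto ν).mono_left nhdsWithin_le_nhds
    rwa [hνzero] at h
  have hφmem : Tendsto φ (𝓝[>] ν) (𝓝[>] 0) :=
    tendsto_nhdsWithin_iff.2 ⟨hφ0, hφI.mono fun ξ h => h.1⟩
  have hDposφ : ∀ ξ ∈ I, 0 < D (φ ξ) := fun ξ hξ => hD3 _ ⟨hξ.1, lt_of_lt_of_le hξ.2 h1⟩
  have hderiv_eq : deriv φ =ᶠ[𝓝[>] ν] fun ξ => (f (φ ξ) - c * φ ξ) / D (φ ξ) := by
    filter_upwards [hφI] with ξ hξ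
    obtain ⟨_, hodeq⟩ := hode2 ξ hξ.1 hξ.2
    have hne := (hDposφ ξ hξ).ne'
    field_simp
    linarith [hodeq]
  have hfs := slope_tendsto hf1 hf40
  have hDs := slope_tendsto hD1 hD0
  set f'0 := derivWithin f (Icc 0 1) 0 with hf'0def
  set D'0 := derivWithin D (Icc 0 1) 0 with hD'0def
  have hIoolp : Ioo (0:ℝ) lp ∈ 𝓝[>] (0:ℝ) := Ioo_mem_nhdsGT_of_mem ⟨le_rfl, hlp⟩
  have heq : ∀ s ∈ Ioo (0:ℝ) lp, (f s / s - c) / (D s / s) = (f s - c * s) / D s := by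
    intro s hs
    have hs0 : s ≠ 0 := ne_of_gt hs.1
    have hDs0 : D s ≠ 0 := ne_of_gt (hD3 s ⟨hs.1, lt_of_lt_of_le hs.2 h1⟩)
    field_simp
  have hc_lt : c < f'0 := by
    have hhalf : lp / 2 ≤ 1 := by linarith
    have h2 := slope_strict hf2 hf40 (half_pos hlp) (half_lt_self hlp) h1
    have h3 : f (lp / 2) / (lp / 2) ≤ f'0 := by
      refine ge_of_tendsto hfs ?_
      filter_upwards [Ioo_mem_nhdsGT_of_mem ⟨le_rfl, half_pos hlp⟩] with s hs
      exact (slope_strict hf2 hf40 hs.1 hs.2 hhalf).le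
    rw [hc]
    linarith
  refine ⟨?_, ?_, ?_⟩
  · intro hD'pos
    have hkey : Tendsto (fun s => (f s - c * s) / D s) (𝓝[>] (0:ℝ))
        (𝓝 ((f'0 - c) / D'0)) := by
      refine (Tendsto.div (hfs.sub_const c) hDs (ne_of_gt hD'pos)).congr' ?_
      filter_upwards [hIoolp] with s hs using heq s hs
    have hfinal : Tendsto (deriv φ) (𝓝[>] ν) (𝓝 ((f'0 - c) / D'0)) :=
      Tendsto.congr' hderiv_eq.symm (hkey.comp hφmem)
    have hval : (f'0 - c) / D'0 = (lp * f'0 - f lp) / (lp * D'0) := by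
      rw [hc]
      rw [div_eq_div_iff (ne_of_gt hD'pos) (by positivity)]
      field_simp
    rwa [hval] at hfinal
  · intro hD'eq
    have hDs0 : Tendsto (fun s => D s / s) (𝓝[>] (0:ℝ)) (𝓝 0) := by
      rwa [hD'eq] at hDs
    have hdenpos : Tendsto (fun s => D s / s) (𝓝[>] (0:ℝ)) (𝓝[>] (0:ℝ)) := by
      refine tendsto_nhdsWithin_iff.2 ⟨hDs0, ?_⟩
      filter_upwards [hIoolp] with s hs
      exact div_pos (hD3 s ⟨hs.1, lt_of_lt_of_le hs.2 h1⟩) hs.1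
    have hinv : Tendsto (fun s => (D s / s)⁻¹) (𝓝[>] (0:ℝ)) atTop :=
      tendsto_inv_nhdsGT_zero.comp hdenpos
    have hmul : Tendsto (fun s => (f s / s - c) * (D s / s)⁻¹) (𝓝[>] (0:ℝ)) atTop :=
      Tendsto.pos_mul_atTop (sub_pos.2 hc_lt) (hfs.sub_const c) hinv
    have hkey : Tendsto (fun s => (f s - c * s) / D s) (𝓝[>] (0:ℝ)) atTop := by
      refine hmul.congr' ?_
      filter_upwards [hIoolp] with s hs
      rw [← div_eq_mul_inv]
      exact heq s hs
    exact Tendsto.congr' hderiv_eq.symm (hkey.comp hφmem)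
  · have hfc : ContinuousWithinAt f (Icc 0 1) 0 := hf1.continuousOn 0 ⟨le_rfl, zero_le_one⟩
    have hφIcc : Tendsto φ (𝓝[>] ν) (𝓝[Icc (0:ℝ) 1] 0) :=
      tendsto_nhdsWithin_iff.2 ⟨hφ0, Eventually.of_forall fun ξ =>
        ⟨(hmem ξ).1, le_trans (hmem ξ).2 h1⟩⟩
    have h4 : Tendsto (fun ξ => f (φ ξ)) (𝓝[>] ν) (𝓝 0) := by
      have h := Filter.Tendsto.comp (g := f) hfc hφIcc
      rwa [hf40] at h
    have h5 : Tendsto (fun ξ => f (φ ξ) - c * φ ξ) (𝓝[>] ν) (𝓝 0) := by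
      have h6 := h4.sub (hφ0.const_mul c)
      simpa using h6
    refine Tendsto.congr' ?_ h5
    filter_upwards [hφI] with ξ hξ
    exact ((hode2 ξ hξ.1 hξ.2).2).symm

/-- Characterization of left-degeneracy of profiles and the boundary behaviour of `φ'`
at the finite left endpoint `ν⁻` of `I`. -/
theorem stmt1 (f D : ℝ → ℝ) (hf : FluxAssumption f) (hD : DiffAssumption D)
    (lm lp : ℝ) (h0 : 0 ≤ lm) (hl : lm < lp) (h1 : lp ≤ 1)
    (φ : ℝ → ℝ) (hφ : IsProfile f D lm lp φ) :
    ((D 0 = 0 ∧ lm = 0) ↔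
      ∃ ν : ℝ, {ξ | lm < φ ξ ∧ φ ξ < lp} ⊆ Ioi ν ∧ ∀ ξ ≤ ν, φ ξ = 0) ∧
    (∀ ν : ℝ, {ξ | lm < φ ξ ∧ φ ξ < lp} ⊆ Ioi ν → (∀ ξ ≤ ν, φ ξ = 0) →
      IsGLB {ξ | lm < φ ξ ∧ φ ξ < lp} ν →
      (0 < derivWithin D (Icc 0 1) 0 →
        Tendsto (deriv φ) (𝓝[>] ν)
          (𝓝 ((lp * derivWithin f (Icc 0 1) 0 - f lp) / (lp * derivWithin D (Icc 0 1) 0)))) ∧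
      (derivWithin D (Icc 0 1) 0 = 0 → Tendsto (deriv φ) (𝓝[>] ν) atTop) ∧
      Tendsto (fun ξ => D (φ ξ) * deriv φ ξ) (𝓝[>] ν) (𝓝 0)) := by
  obtain ⟨hf1, hf2, hf3, hf40, hf41⟩ := hf
  obtain ⟨hD1, hD2, hD3⟩ := hD
  obtain ⟨hcont, hmono, hmem, hbot, htop, hC2, hode⟩ := hφ
  have hIopen : IsOpen {ξ | lm < φ ξ ∧ φ ξ < lp} := by
    rw [setOf_and]
    exact (isOpen_lt continuous_const hcont).inter (isOpen_lt hcont continuous_const)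
  have hdiffI : ∀ ξ, lm < φ ξ → φ ξ < lp → DifferentiableAt ℝ φ ξ := fun ξ ha hb =>
    (hC2.differentiableOn two_ne_zero).differentiableAt (hIopen.mem_nhds ⟨ha, hb⟩)
  have hrev : (∃ ν : ℝ, {ξ | lm < φ ξ ∧ φ ξ < lp} ⊆ Ioi ν ∧ ∀ ξ ≤ ν, φ ξ = 0) →
      D 0 = 0 ∧ lm = 0 := by
    rintro ⟨ν, hsubν, hzeroν⟩
    have hlm : lm = 0 := by
      have hz : Tendsto φ atBot (𝓝 0) := by
        refine tendsto_const_nhds.congr' ?_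
        filter_upwards [Iic_mem_atBot ν] with ξ hξ using (hzeroν ξ hξ).symm
      exact tendsto_nhds_unique hbot hz
    subst hlm
    refine ⟨?_, rfl⟩
    have hode2 : ∀ ξ, 0 < φ ξ → φ ξ < lp →
        0 < deriv φ ξ ∧ D (φ ξ) * deriv φ ξ = f (φ ξ) - waveSpeed f 0 lp * φ ξ := by
      intro ξ ha hb
      refine ⟨(hode ξ ha hb).1, ?_⟩
      have h2 := (hode ξ ha hb).2
      simpa [redFlux, hf40] using h2
    exact rev_core f D hf1 hf40 hD1 hD2 lp hl h1 φ hcont hmono hmem htop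
      (fun ξ ha hb => hdiffI ξ ha hb) hode2 ν hzeroν
  constructor
  · constructor
    · rintro ⟨hD0, hlm⟩
      subst hlm
      have hode2 : ∀ ξ, 0 < φ ξ → φ ξ < lp →
          0 < deriv φ ξ ∧ D (φ ξ) * deriv φ ξ = f (φ ξ) - waveSpeed f 0 lp * φ ξ := by
        intro ξ ha hb
        refine ⟨(hode ξ ha hb).1, ?_⟩
        simpa [redFlux, hf40] using (hode ξ ha hb).2
      exact fwd_core f D hf2 hf40 hD1 hD3 lp hl h1 φ hcont hmono hmem hbot htop
        (fun ξ ha hb => hdiffI ξ ha hb) hode2 hD0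
    · exact hrev
  · intro ν hsubν hzeroν hglbν
    obtain ⟨hD0, hlm⟩ := hrev ⟨ν, hsubν, hzeroν⟩
    subst hlm
    have hode2 : ∀ ξ, 0 < φ ξ → φ ξ < lp →
        0 < deriv φ ξ ∧ D (φ ξ) * deriv φ ξ = f (φ ξ) - waveSpeed f 0 lp * φ ξ := by
      intro ξ ha hb
      refine ⟨(hode ξ ha hb).1, ?_⟩
      simpa [redFlux, hf40] using (hode ξ ha hb).2
    exact part2_core f D hf1 hf2 hf40 hD1 hD3 hD0 lp hl h1 φ hcont hmono hmem hode2
      ν hsubν hzeroν hglbν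
end

section
/- Assume f satisfies (f), D satisfies (D), 0 ≤ ℓ⁻ < ℓ⁺ ≤ 1, c = (f(ℓ⁺)−f(ℓ⁻))/(ℓ⁺−ℓ⁻), g(ρ) = f(ρ) − cρ, and let φ be a profile with I = {ξ : ℓ⁻ < φ(ξ) < ℓ⁺}. Then D(1) = 0 and ℓ⁺ = 1 hold if and only if there exists ν⁺ ∈ ℝ such that I ⊆ (−∞, ν⁺) and φ(ξ) = 1 for all ξ ≥ ν⁺. In that case: lim_{ξ↑ν⁺} φ′(ξ) = ((1−ℓ⁻) f′(1) + f(ℓ⁻)) / ((1−ℓ⁻) D′(1)) if D′(1) < 0, lim_{ξ↑ν⁺} φ′(ξ) = +∞ if D′(1) = 0, and lim_{ξ↑ν⁺} D(φ(ξ)) φ′(ξ) = 0. -/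
open Set Filter MeasureTheory
open scoped Topology Classical

noncomputable def Gfun (f : ℝ → ℝ) (lm ρ : ℝ) : ℝ := redFlux f lm 1 ρ - redFlux f lm 1 lm

lemma Gfun_lm (f : ℝ → ℝ) (lm : ℝ) : Gfun f lm lm = 0 := sub_self _

lemma Gfun_one (f : ℝ → ℝ) {lm : ℝ} (hl : lm < 1) : Gfun f lm 1 = 0 := by
  have h : (1:ℝ) - lm ≠ 0 := by linarith
  simp only [Gfun, redFlux, waveSpeed]
  field_simp
  ring

lemma lipschitz_bound {h : ℝ → ℝ} (hh : ContDiffOn ℝ 1 h (Icc 0 1)) :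
    ∃ M : ℝ, 0 < M ∧ ∀ x ∈ Icc (0:ℝ) 1, ∀ y ∈ Icc (0:ℝ) 1, |h y - h x| ≤ M * |y - x| := by
  obtain ⟨C, hC⟩ := (isCompact_Icc (a := (0:ℝ)) (b := 1)).exists_bound_of_continuousOn
    (hh.continuousOn_derivWithin (uniqueDiffOn_Icc one_pos) le_rfl)
  refine ⟨max C 1, lt_of_lt_of_le one_pos (le_max_right _ _), fun x hx y hy => ?_⟩
  have := Convex.norm_image_sub_le_of_norm_derivWithin_le (𝕜 := ℝ) (C := max C 1)
    (hh.differentiableOn one_ne_zero) (fun z hz => (hC z hz).trans (le_max_left _ _))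
    (convex_Icc 0 1) hx hy
  simpa [Real.norm_eq_abs] using this

lemma Gfun_concave {f : ℝ → ℝ} (hf : ConcaveOn ℝ (Icc 0 1) f) (lm : ℝ)
    {x y t s : ℝ} (hx : x ∈ Icc (0:ℝ) 1) (hy : y ∈ Icc (0:ℝ) 1)
    (ht : 0 ≤ t) (hs : 0 ≤ s) (hts : t + s = 1) :
    t * Gfun f lm x + s * Gfun f lm y ≤ Gfun f lm (t * x + s * y) := by
  have h := hf.2 hx hy ht hs hts
  simp only [smul_eq_mul] at h
  have key : t * Gfun f lm x + s * Gfun f lm y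
      = t * f x + s * f y - waveSpeed f lm 1 * (t * x + s * y)
        - (t + s) * (f lm - waveSpeed f lm 1 * lm) := by
    simp only [Gfun, redFlux]; ring
  rw [hts] at key
  rw [key]
  simp only [Gfun, redFlux]
  linarith

lemma Gfun_strict_concave {f : ℝ → ℝ} (hf : StrictConcaveOn ℝ (Icc 0 1) f) (lm : ℝ)
    {x y t s : ℝ} (hx : x ∈ Icc (0:ℝ) 1) (hy : y ∈ Icc (0:ℝ) 1) (hxy : x ≠ y)
    (ht : 0 < t) (hs : 0 < s) (hts : t + s = 1) :
    t * Gfun f lm x + s * Gfun f lm y < Gfun f lm (t * x + s * y) := by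
  have h := hf.2 hx hy hxy ht hs hts
  simp only [smul_eq_mul] at h
  have key : t * Gfun f lm x + s * Gfun f lm y
      = t * f x + s * f y - waveSpeed f lm 1 * (t * x + s * y)
        - (t + s) * (f lm - waveSpeed f lm 1 * lm) := by
    simp only [Gfun, redFlux]; ring
  rw [hts] at key
  rw [key]
  simp only [Gfun, redFlux]
  linarith

lemma Gfun_pos {f : ℝ → ℝ} (hf : StrictConcaveOn ℝ (Icc 0 1) f) {lm : ℝ}
    (h0 : 0 ≤ lm) (hl : lm < 1) {ρ : ℝ} (hρ : ρ ∈ Ioo lm 1) : 0 < Gfun f lm ρ := by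
  obtain ⟨h1, h2⟩ := hρ
  have hd : (0:ℝ) < 1 - lm := by linarith
  have ht : 0 < (1 - ρ) / (1 - lm) := div_pos (by linarith) hd
  have hs : 0 < (ρ - lm) / (1 - lm) := div_pos (by linarith) hd
  have hts : (1 - ρ) / (1 - lm) + (ρ - lm) / (1 - lm) = 1 := by
    field_simp
    ring
  have hcomb : (1 - ρ) / (1 - lm) * lm + (ρ - lm) / (1 - lm) * 1 = ρ := by
    field_simp; ring
  have h := Gfun_strict_concave hf lm (x := lm) (y := 1)
    ⟨h0, le_of_lt hl⟩ ⟨by norm_num, le_rfl⟩ (by intro h; linarith [h]) ht hs hts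
  rw [hcomb, Gfun_lm, Gfun_one f hl] at h
  simpa using h

lemma Gfun_chord {f : ℝ → ℝ} (hf : ConcaveOn ℝ (Icc 0 1) f) {lm ρ₀ ρ : ℝ}
    (h0 : 0 ≤ ρ₀) (hl : ρ₀ < 1) (hlm : lm < 1) (hρ : ρ ∈ Icc ρ₀ 1) :
    Gfun f lm ρ₀ * ((1 - ρ) / (1 - ρ₀)) ≤ Gfun f lm ρ := by
  obtain ⟨h1, h2⟩ := hρ
  have hd : (0:ℝ) < 1 - ρ₀ := by linarith
  have ht : 0 ≤ (1 - ρ) / (1 - ρ₀) := div_nonneg (by linarith) (le_of_lt hd)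
  have hs : 0 ≤ (ρ - ρ₀) / (1 - ρ₀) := div_nonneg (by linarith) (le_of_lt hd)
  have hts : (1 - ρ) / (1 - ρ₀) + (ρ - ρ₀) / (1 - ρ₀) = 1 := by field_simp; ring
  have hcomb : (1 - ρ) / (1 - ρ₀) * ρ₀ + (ρ - ρ₀) / (1 - ρ₀) * 1 = ρ := by
    field_simp; ring
  have h := Gfun_concave hf lm (x := ρ₀) (y := 1)
    ⟨h0, le_of_lt hl⟩ ⟨by norm_num, le_rfl⟩ ht hs hts
  rw [hcomb, Gfun_one f hlm] at h
  calc Gfun f lm ρ₀ * ((1 - ρ) / (1 - ρ₀))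
      = (1 - ρ) / (1 - ρ₀) * Gfun f lm ρ₀ + (ρ - ρ₀) / (1 - ρ₀) * 0 := by ring
    _ ≤ Gfun f lm ρ := h

lemma Gfun_hasDeriv {f : ℝ → ℝ} (hf : ContDiffOn ℝ 1 f (Icc 0 1)) (lm : ℝ) :
    HasDerivWithinAt (Gfun f lm) (derivWithin f (Icc 0 1) 1 - waveSpeed f lm 1) (Icc 0 1) 1 := by
  have h1 : (1:ℝ) ∈ Icc (0:ℝ) 1 := ⟨by norm_num, le_rfl⟩
  have hfd : HasDerivWithinAt f (derivWithin f (Icc 0 1) 1) (Icc 0 1) 1 :=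
    ((hf.differentiableOn one_ne_zero) 1 h1).hasDerivWithinAt
  have hlin : HasDerivWithinAt (fun ρ : ℝ => waveSpeed f lm 1 * ρ) (waveSpeed f lm 1) (Icc 0 1) 1 := by
    simpa using (hasDerivWithinAt_id (1:ℝ) (Icc 0 1)).const_mul (waveSpeed f lm 1)
  exact (hfd.sub hlin).sub_const _

lemma Gfun_continuousOn {f : ℝ → ℝ} (hf : ContDiffOn ℝ 1 f (Icc 0 1)) (lm : ℝ) :
    ContinuousOn (Gfun f lm) (Icc 0 1) := by
  apply ContinuousOn.sub
  · exact hf.continuousOn.sub ((continuous_const.mul continuous_id).continuousOn)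
  · exact continuousOn_const

lemma nhdsWithin_Icc_diff_neBot {lm : ℝ} (h0 : 0 ≤ lm) (hl : lm < 1) :
    (𝓝[Icc (0:ℝ) 1 \ {1}] 1).NeBot := by
  have hsub : Ioo lm 1 ⊆ Icc (0:ℝ) 1 \ {1} := fun x hx =>
    ⟨⟨le_trans h0 (le_of_lt hx.1), le_of_lt hx.2⟩, ne_of_lt hx.2⟩
  have : (𝓝[Ioo lm 1] (1:ℝ)).NeBot := by
    apply mem_closure_iff_nhdsWithin_neBot.1
    rw [closure_Ioo (ne_of_lt hl)]
    exact ⟨le_of_lt hl, le_rfl⟩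
  exact this.mono (nhdsWithin_mono _ hsub)

lemma gprime_neg {f : ℝ → ℝ} (hf : ContDiffOn ℝ 1 f (Icc 0 1))
    (hfc : StrictConcaveOn ℝ (Icc 0 1) f) {lm : ℝ} (h0 : 0 ≤ lm) (hl : lm < 1) :
    derivWithin f (Icc 0 1) 1 - waveSpeed f lm 1 < 0 := by
  set ρ₀ : ℝ := (lm + 1) / 2 with hρ₀def
  have hρ₀ : lm < ρ₀ ∧ ρ₀ < 1 := by constructor <;> (rw [hρ₀def]; linarith)
  have hρ₀0 : 0 ≤ ρ₀ := by rw [hρ₀def]; linarith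
  have hGρ₀ : 0 < Gfun f lm ρ₀ := Gfun_pos hfc h0 hl ⟨hρ₀.1, hρ₀.2⟩
  have hslope := hasDerivWithinAt_iff_tendsto_slope.1 (Gfun_hasDeriv hf lm)
  have hne : (𝓝[Icc (0:ℝ) 1 \ {1}] 1).NeBot := nhdsWithin_Icc_diff_neBot h0 hl
  have hbound : ∀ᶠ ρ in 𝓝[Icc (0:ℝ) 1 \ {1}] (1:ℝ),
      slope (Gfun f lm) 1 ρ ≤ -(Gfun f lm ρ₀ / (1 - ρ₀)) := by
    filter_upwards [nhdsWithin_le_nhds (Ioi_mem_nhds hρ₀.2), self_mem_nhdsWithin] with ρ hρgt hρmem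
    obtain ⟨hρIcc, hρne⟩ := hρmem
    have hρlt1 : ρ < 1 := lt_of_le_of_ne hρIcc.2 hρne
    have hchord := Gfun_chord hfc.concaveOn hρ₀0 hρ₀.2 hl ⟨le_of_lt hρgt, hρIcc.2⟩
    have h1ρ : (0:ℝ) < 1 - ρ := by linarith
    rw [slope_def_field, Gfun_one f hl]
    rw [div_le_iff_of_neg (by linarith : ρ - 1 < 0)]
    have : Gfun f lm ρ₀ * ((1 - ρ) / (1 - ρ₀)) = -(Gfun f lm ρ₀ / (1 - ρ₀)) * (ρ - 1) := by
      field_simp; ring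
    calc -(Gfun f lm ρ₀ / (1 - ρ₀)) * (ρ - 1) = Gfun f lm ρ₀ * ((1 - ρ) / (1 - ρ₀)) := this.symm
      _ ≤ Gfun f lm ρ := hchord
      _ = Gfun f lm ρ - 0 := by ring
  have hle := le_of_tendsto hslope hbound
  have hpos : 0 < Gfun f lm ρ₀ / (1 - ρ₀) := div_pos hGρ₀ (by linarith [hρ₀.2])
  linarith

lemma lemB {f D : ℝ → ℝ} (hf : FluxAssumption f) (hD : DiffAssumption D)
    {lm : ℝ} (h0 : 0 ≤ lm) (hl : lm < 1) {φ : ℝ → ℝ}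
    (hφ : IsProfile f D lm 1 φ) (hD1 : D 1 = 0) :
    ∃ ν : ℝ, {ξ | lm < φ ξ ∧ φ ξ < 1} ⊆ Iio ν ∧ ∀ ξ, ν ≤ ξ → φ ξ = 1 := by
  obtain ⟨hφc, hφm, hφmem, hφbot, hφtop, hφC2, hφode⟩ := hφ
  obtain ⟨L, hLpos, hLlip⟩ := lipschitz_bound hD.1
  have h1Icc : (1:ℝ) ∈ Icc (0:ℝ) 1 := ⟨by norm_num, le_rfl⟩
  have hDle : ∀ ρ ∈ Icc (0:ℝ) 1, D ρ ≤ L * (1 - ρ) := by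
    intro ρ hρ
    have h := hLlip 1 h1Icc ρ hρ
    rw [hD1] at h
    have habs : |ρ - 1| = 1 - ρ := by rw [abs_sub_comm, abs_of_nonneg (by linarith [hρ.2])]
    calc D ρ ≤ |D ρ - 0| := by rw [sub_zero]; exact le_abs_self _
      _ ≤ L * |ρ - 1| := h
      _ = L * (1 - ρ) := by rw [habs]
  set ρ₀ : ℝ := (lm + 1) / 2 with hρ₀def
  have hρ₀1 : lm < ρ₀ := by rw [hρ₀def]; linarith
  have hρ₀2 : ρ₀ < 1 := by rw [hρ₀def]; linarith
  have hρ₀0 : (0:ℝ) ≤ ρ₀ := by rw [hρ₀def]; linarith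
  have hc₁ : 0 < Gfun f lm ρ₀ := Gfun_pos hf.2.1 h0 hl ⟨hρ₀1, hρ₀2⟩
  set δ : ℝ := Gfun f lm ρ₀ / ((1 - ρ₀) * L) with hδdef
  have hδpos : 0 < δ := div_pos hc₁ (mul_pos (by linarith) hLpos)
  have hIopen : IsOpen {ξ | lm < φ ξ ∧ φ ξ < 1} :=
    (isOpen_lt continuous_const hφc).inter (isOpen_lt hφc continuous_const)
  have hdiff : ∀ ξ, lm < φ ξ → φ ξ < 1 → DifferentiableAt ℝ φ ξ := fun ξ ha hb =>
    ((hφC2.differentiableOn (by norm_num)) ξ ⟨ha, hb⟩).differentiableAt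
      (hIopen.mem_nhds ⟨ha, hb⟩)
  have hexists : ∃ ν, φ ν = 1 := by
    by_contra hno
    push_neg at hno
    have hlt1 : ∀ ξ, φ ξ < 1 := fun ξ => lt_of_le_of_ne (hφmem ξ).2 (hno ξ)
    obtain ⟨ξ₀, hξ₀⟩ := (hφtop.eventually (eventually_gt_nhds hρ₀2)).exists
    have hin : ∀ ξ, ξ₀ ≤ ξ → lm < φ ξ ∧ φ ξ < 1 := fun ξ hle =>
      ⟨lt_trans hρ₀1 (lt_of_lt_of_le hξ₀ (hφm hle)), hlt1 ξ⟩
    have hderiv_ge : ∀ ξ, ξ₀ ≤ ξ → δ ≤ deriv φ ξ := by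
      intro ξ hle
      obtain ⟨ha, hb⟩ := hin ξ hle
      obtain ⟨hd0, heq⟩ := hφode ξ ha hb
      have hφIcc : φ ξ ∈ Icc (0:ℝ) 1 := ⟨le_trans h0 (le_of_lt ha), le_of_lt hb⟩
      have hρ₀le : ρ₀ ≤ φ ξ := le_of_lt (lt_of_lt_of_le hξ₀ (hφm hle))
      have hDφpos : 0 < D (φ ξ) := hD.2.2 (φ ξ) ⟨lt_of_le_of_lt h0 ha, hb⟩
      have heqG : D (φ ξ) * deriv φ ξ = Gfun f lm (φ ξ) := heq
      have hderiv : deriv φ ξ = Gfun f lm (φ ξ) / D (φ ξ) :=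
        eq_div_of_mul_eq (ne_of_gt hDφpos) (by linarith [heqG])
      have hGlb : Gfun f lm ρ₀ * ((1 - φ ξ) / (1 - ρ₀)) ≤ Gfun f lm (φ ξ) :=
        Gfun_chord hf.2.1.concaveOn hρ₀0 hρ₀2 hl ⟨hρ₀le, le_of_lt hb⟩
      have hDub : D (φ ξ) ≤ L * (1 - φ ξ) := hDle _ hφIcc
      have hGnn : 0 ≤ Gfun f lm (φ ξ) := le_of_lt (Gfun_pos hf.2.1 h0 hl ⟨ha, hb⟩)
      have hkey : Gfun f lm ρ₀ * ((1 - φ ξ) / (1 - ρ₀)) / (L * (1 - φ ξ))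
          ≤ Gfun f lm (φ ξ) / D (φ ξ) :=
        div_le_div₀ hGnn hGlb hDφpos hDub
      have hδeq : Gfun f lm ρ₀ * ((1 - φ ξ) / (1 - ρ₀)) / (L * (1 - φ ξ)) = δ := by
        rw [hδdef]
        have h1 : (1:ℝ) - φ ξ ≠ 0 := by linarith
        have h2 : (1:ℝ) - ρ₀ ≠ 0 := by linarith
        field_simp
      rw [hderiv]
      rw [hδeq] at hkey
      exact hkey
    have hmvt := Convex.mul_sub_le_image_sub_of_le_deriv (convex_Ici ξ₀)
      hφc.continuousOn
      (fun ξ hξ => by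
        rw [interior_Ici] at hξ
        exact (hdiff ξ (hin ξ (le_of_lt hξ)).1 (hin ξ (le_of_lt hξ)).2).differentiableWithinAt)
      (fun ξ hξ => by rw [interior_Ici] at hξ; exact hderiv_ge ξ (le_of_lt hξ))
    have h2δ : ξ₀ ≤ ξ₀ + 2 / δ := by
      have : 0 ≤ 2 / δ := le_of_lt (div_pos two_pos hδpos)
      linarith
    have := hmvt ξ₀ self_mem_Ici (ξ₀ + 2 / δ) h2δ h2δ
    have heq2 : δ * (ξ₀ + 2 / δ - ξ₀) = 2 := by
      field_simp
      ring
    rw [heq2] at this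
    have hub : φ (ξ₀ + 2 / δ) ≤ 1 := (hφmem _).2
    have hlb : 0 ≤ φ ξ₀ := le_trans h0 (hφmem _).1
    linarith
  obtain ⟨ν, hν⟩ := hexists
  refine ⟨ν, ?_, fun ξ hle => ?_⟩
  · intro ξ hξ
    simp only [mem_setOf_eq] at hξ
    by_contra hnot
    simp only [mem_Iio, not_lt] at hnot
    have : (1:ℝ) ≤ φ ξ := hν ▸ hφm hnot
    linarith [hξ.2]
  · exact le_antisymm (hφmem ξ).2 (hν ▸ hφm hle)

lemma lemA {f D : ℝ → ℝ} (hf : FluxAssumption f) (hD : DiffAssumption D)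
    {lm lp : ℝ} (h0 : 0 ≤ lm) (hl : lm < lp) (h1 : lp ≤ 1) {φ : ℝ → ℝ}
    (hφ : IsProfile f D lm lp φ) {ν : ℝ}
    (hsub : {ξ | lm < φ ξ ∧ φ ξ < lp} ⊆ Iio ν) (hone : ∀ ξ, ν ≤ ξ → φ ξ = 1) :
    D 1 = 0 ∧ lp = 1 := by
  have hlp : lp = 1 := by
    have htend : Tendsto φ atTop (𝓝 1) := by
      refine Tendsto.congr' ?_ tendsto_const_nhds
      filter_upwards [eventually_ge_atTop ν] with ξ hξ
      exact (hone ξ hξ).symm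
    exact tendsto_nhds_unique hφ.2.2.2.2.1 htend
  subst hlp
  refine ⟨?_, rfl⟩
  obtain ⟨hφc, hφm, hφmem, hφbot, hφtop, hφC2, hφode⟩ := hφ
  have h1Icc : (1:ℝ) ∈ Icc (0:ℝ) 1 := ⟨by norm_num, le_rfl⟩
  by_contra hDne
  have hd : 0 < D 1 := lt_of_le_of_ne (hD.2.1 1 h1Icc) (Ne.symm hDne)
  set d : ℝ := D 1 with hddef
  -- the set where φ = 1
  set S : Set ℝ := {ξ | φ ξ = 1} with hSdef
  have hSne : ν ∈ S := hone ν le_rfl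
  obtain ⟨ξb, hξb⟩ := (hφbot.eventually (eventually_lt_nhds hl)).exists
  have hbdd : BddBelow S := by
    refine ⟨ξb, fun η hη => ?_⟩
    by_contra hlt
    push_neg at hlt
    have : φ η ≤ φ ξb := hφm (le_of_lt hlt)
    rw [hη] at this
    linarith
  have hScl : IsClosed S := isClosed_eq hφc continuous_const
  set ν₁ : ℝ := sInf S with hν₁def
  have hν₁mem : φ ν₁ = 1 := hScl.csInf_mem ⟨ν, hSne⟩ hbdd
  have hlt1 : ∀ ξ, ξ < ν₁ → φ ξ < 1 := by
    intro ξ hξ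
    refine lt_of_le_of_ne (hφmem ξ).2 fun heq => ?_
    exact absurd (csInf_le hbdd (heq : ξ ∈ S)) (not_le.2 hξ)
  -- Lipschitz constant for G
  have hGcd : ContDiffOn ℝ 1 (Gfun f lm) (Icc 0 1) := by
    have : ContDiffOn ℝ 1 (fun ρ => f ρ - waveSpeed f lm 1 * ρ - (f lm - waveSpeed f lm 1 * lm))
        (Icc 0 1) :=
      (hf.1.sub ((contDiff_const.mul contDiff_id).contDiffOn)).sub contDiffOn_const
    exact this
  obtain ⟨M, hMpos, hMlip⟩ := lipschitz_bound hGcd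
  set K : ℝ := 2 * M / d with hKdef
  have hKpos : 0 < K := div_pos (by linarith) hd
  -- choose ρ₀ with D ≥ d/2 on [ρ₀, 1]
  have hDc : ContinuousWithinAt D (Icc 0 1) 1 := hD.1.continuousOn.continuousWithinAt h1Icc
  have hev : D ⁻¹' (Ioi (d/2)) ∈ 𝓝[Icc (0:ℝ) 1] 1 := hDc (Ioi_mem_nhds (by linarith))
  rw [Metric.mem_nhdsWithin_iff] at hev
  obtain ⟨ε, hεpos, hεsub⟩ := hev
  set ρ₀ : ℝ := max (1 - ε/2) ((lm + 1)/2) with hρ₀def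
  have hlm1 : lm < 1 := lt_of_lt_of_le hl le_rfl
  have hρ₀lt1 : ρ₀ < 1 := max_lt (by linarith) (by linarith)
  have hlmρ₀ : lm < ρ₀ := lt_of_lt_of_le (by linarith) (le_max_right _ _)
  have hρ₀0 : (0:ℝ) ≤ ρ₀ := le_trans (by linarith) (le_max_right _ _)
  have hDge : ∀ ρ ∈ Icc ρ₀ (1:ℝ), d/2 ≤ D ρ := by
    intro ρ hρ
    have hρIcc : ρ ∈ Icc (0:ℝ) 1 := ⟨le_trans hρ₀0 hρ.1, hρ.2⟩
    have hdist : dist ρ 1 < ε := by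
      rw [Real.dist_eq, abs_sub_comm, abs_of_nonneg (by linarith [hρ.2])]
      have : 1 - ε/2 ≤ ρ₀ := le_max_left _ _
      linarith [hρ.1]
    exact le_of_lt (hεsub ⟨Metric.mem_ball.2 hdist, hρIcc⟩)
  -- choose a₁ < ν₁ with φ > ρ₀ on [a₁, ν₁]
  have hU : {ξ | ρ₀ < φ ξ} ∈ 𝓝 ν₁ :=
    (isOpen_lt continuous_const hφc).mem_nhds (by simp only [mem_setOf_eq, hν₁mem]; exact hρ₀lt1)
  rw [Metric.mem_nhds_iff] at hU
  obtain ⟨ε', hε'pos, hε'sub⟩ := hU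
  set a₁ : ℝ := ν₁ - ε'/2 with ha₁def
  have ha₁lt : a₁ < ν₁ := by rw [ha₁def]; linarith
  have hφgt : ∀ ξ ∈ Icc a₁ ν₁, ρ₀ < φ ξ := by
    intro ξ hξ
    refine hε'sub (Metric.mem_ball.2 ?_)
    rw [Real.dist_eq, abs_sub_comm, abs_of_nonneg (by linarith [hξ.2])]
    have := hξ.1
    rw [ha₁def] at this
    linarith [hξ.2]
  have hmemI : ∀ ξ ∈ Ioo a₁ ν₁, lm < φ ξ ∧ φ ξ < 1 := fun ξ hξ =>
    ⟨lt_trans hlmρ₀ (hφgt ξ ⟨le_of_lt hξ.1, le_of_lt hξ.2⟩), hlt1 ξ hξ.2⟩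
  have hIopen : IsOpen {ξ | lm < φ ξ ∧ φ ξ < 1} :=
    (isOpen_lt continuous_const hφc).inter (isOpen_lt hφc continuous_const)
  have hdiff : ∀ ξ, lm < φ ξ → φ ξ < 1 → DifferentiableAt ℝ φ ξ := fun ξ ha hb =>
    ((hφC2.differentiableOn (by norm_num)) ξ ⟨ha, hb⟩).differentiableAt
      (hIopen.mem_nhds ⟨ha, hb⟩)
  have hG1 : Gfun f lm 1 = 0 := Gfun_one f hlm1
  -- derivative bound
  have hφd_le : ∀ ξ ∈ Ioo a₁ ν₁, deriv φ ξ ≤ K * (1 - φ ξ) := by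
    intro ξ hξ
    obtain ⟨ha, hb⟩ := hmemI ξ hξ
    obtain ⟨hd0, heq⟩ := hφode ξ ha hb
    have heqG : D (φ ξ) * deriv φ ξ = Gfun f lm (φ ξ) := heq
    have hφIcc : φ ξ ∈ Icc (0:ℝ) 1 := ⟨le_trans h0 (le_of_lt ha), le_of_lt hb⟩
    have hDφ : d/2 ≤ D (φ ξ) :=
      hDge _ ⟨le_of_lt (hφgt ξ ⟨le_of_lt hξ.1, le_of_lt hξ.2⟩), le_of_lt hb⟩
    have hDφpos : 0 < D (φ ξ) := lt_of_lt_of_le (by linarith) hDφ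
    have hGub : Gfun f lm (φ ξ) ≤ M * (1 - φ ξ) := by
      have h := hMlip 1 h1Icc (φ ξ) hφIcc
      rw [hG1, sub_zero] at h
      have habs : |φ ξ - 1| = 1 - φ ξ := by
        rw [abs_sub_comm, abs_of_nonneg (by linarith)]
      calc Gfun f lm (φ ξ) ≤ |Gfun f lm (φ ξ)| := le_abs_self _
        _ ≤ M * |φ ξ - 1| := h
        _ = M * (1 - φ ξ) := by rw [habs]
    have hderiv : deriv φ ξ = Gfun f lm (φ ξ) / D (φ ξ) :=
      eq_div_of_mul_eq (ne_of_gt hDφpos) (by linarith [heqG])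
    have hkey : Gfun f lm (φ ξ) / D (φ ξ) ≤ M * (1 - φ ξ) / (d/2) :=
      div_le_div₀ (by nlinarith [hMpos]) hGub (by linarith) hDφ
    have hKeq : M * (1 - φ ξ) / (d/2) = K * (1 - φ ξ) := by
      rw [hKdef]; field_simp
    rw [hderiv]
    rw [hKeq] at hkey
    exact hkey
  -- the auxiliary function
  set h : ℝ → ℝ := fun ξ => Real.exp (K * ξ) * (1 - φ ξ) with hhdef
  have hHasDeriv : ∀ ξ ∈ Ioo a₁ ν₁, HasDerivAt h
      (Real.exp (K * ξ) * (K * 1) * (1 - φ ξ) + Real.exp (K * ξ) * (-(deriv φ ξ))) ξ := by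
    intro ξ hξ
    obtain ⟨ha, hb⟩ := hmemI ξ hξ
    have he : HasDerivAt (fun ξ : ℝ => Real.exp (K * ξ)) (Real.exp (K * ξ) * (K * 1)) ξ :=
      ((hasDerivAt_id ξ).const_mul K).exp
    have hp : HasDerivAt (fun ξ : ℝ => 1 - φ ξ) (-(deriv φ ξ)) ξ :=
      ((hdiff ξ ha hb).hasDerivAt).const_sub 1
    exact he.mul hp
  have hmono : MonotoneOn h (Icc a₁ ν₁) := by
    apply monotoneOn_of_deriv_nonneg (convex_Icc a₁ ν₁)
    · exact ((Real.continuous_exp.comp (continuous_const.mul continuous_id)).mul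
        (continuous_const.sub hφc)).continuousOn
    · intro ξ hξ
      rw [interior_Icc] at hξ
      exact (hHasDeriv ξ hξ).differentiableAt.differentiableWithinAt
    · intro ξ hξ
      rw [interior_Icc] at hξ
      rw [(hHasDeriv ξ hξ).deriv]
      have hEpos : 0 < Real.exp (K * ξ) := Real.exp_pos _
      have hle := hφd_le ξ hξ
      nlinarith [mul_nonneg (le_of_lt hEpos) (sub_nonneg.2 hle)]
  have hle := hmono ⟨le_rfl, le_of_lt ha₁lt⟩ ⟨le_of_lt ha₁lt, le_rfl⟩ (le_of_lt ha₁lt)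
  have hhν₁ : h ν₁ = 0 := by rw [hhdef]; simp [hν₁mem]
  have hha₁ : 0 < h a₁ := by
    rw [hhdef]
    exact mul_pos (Real.exp_pos _) (by linarith [hlt1 a₁ ha₁lt])
  rw [hhν₁] at hle
  linarith

lemma lem2 {f D : ℝ → ℝ} (hf : FluxAssumption f) (hD : DiffAssumption D)
    {lm lp : ℝ} (h0 : 0 ≤ lm) (hl : lm < lp) (h1 : lp ≤ 1) {φ : ℝ → ℝ}
    (hφ : IsProfile f D lm lp φ) {ν : ℝ}
    (hsub : {ξ | lm < φ ξ ∧ φ ξ < lp} ⊆ Iio ν) (hone : ∀ ξ, ν ≤ ξ → φ ξ = 1)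
    (hlub : IsLUB {ξ | lm < φ ξ ∧ φ ξ < lp} ν) :
    (derivWithin D (Icc 0 1) 1 < 0 →
        Tendsto (deriv φ) (𝓝[<] ν)
          (𝓝 (((1 - lm) * derivWithin f (Icc 0 1) 1 + f lm) / ((1 - lm) * derivWithin D (Icc 0 1) 1)))) ∧
      (derivWithin D (Icc 0 1) 1 = 0 → Tendsto (deriv φ) (𝓝[<] ν) atTop) ∧
      Tendsto (fun ξ => D (φ ξ) * deriv φ ξ) (𝓝[<] ν) (𝓝 0) := by
  obtain ⟨hD1, hlp⟩ := lemA hf hD h0 hl h1 hφ hsub hone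
  subst hlp
  obtain ⟨hφc, hφm, hφmem, hφbot, hφtop, hφC2, hφode⟩ := hφ
  have h1Icc : (1:ℝ) ∈ Icc (0:ℝ) 1 := ⟨by norm_num, le_rfl⟩
  have hG1 : Gfun f lm 1 = 0 := Gfun_one f hl
  -- nonempty
  have hIne : {ξ | lm < φ ξ ∧ φ ξ < 1}.Nonempty := by
    by_contra hemp
    rw [Set.not_nonempty_iff_eq_empty] at hemp
    rw [hemp] at hlub
    have : ν ≤ ν - 1 := hlub.2 (by simp [upperBounds])
    linarith
  obtain ⟨ξ₁, hξ₁⟩ := hIne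
  have hξ₁ν : ξ₁ < ν := hsub hξ₁
  have hkey : ∀ ξ, ξ₁ ≤ ξ → ξ < ν → lm < φ ξ ∧ φ ξ < 1 := by
    intro ξ hle hlt
    refine ⟨lt_of_lt_of_le hξ₁.1 (hφm hle), ?_⟩
    refine lt_of_le_of_ne (hφmem ξ).2 fun heq => ?_
    have hub : ξ ∈ upperBounds {ξ | lm < φ ξ ∧ φ ξ < 1} := by
      intro η hη
      by_contra hη2
      push_neg at hη2
      have : φ ξ ≤ φ η := hφm (le_of_lt hη2)
      rw [heq] at this
      linarith [hη.2]
    exact absurd (hlub.2 hub) (not_le.2 hlt)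
  have hmemIoo : Ioo ξ₁ ν ∈ 𝓝[<] ν := Ioo_mem_nhdsLT_of_mem ⟨hξ₁ν, le_rfl⟩
  have hφν : φ ν = 1 := hone ν le_rfl
  have hφtend : Tendsto φ (𝓝[<] ν) (𝓝 1) := by
    have := (hφc.tendsto ν).mono_left (nhdsWithin_le_nhds (s := Iio ν))
    rwa [hφν] at this
  have hevmem : ∀ᶠ ξ in 𝓝[<] ν, φ ξ ∈ Ioo lm 1 := by
    filter_upwards [hmemIoo] with ξ hξ
    exact ⟨(hkey ξ (le_of_lt hξ.1) hξ.2).1, (hkey ξ (le_of_lt hξ.1) hξ.2).2⟩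
  have ht : Tendsto φ (𝓝[<] ν) (𝓝[Icc (0:ℝ) 1 \ {1}] 1) := by
    rw [tendsto_nhdsWithin_iff]
    exact ⟨hφtend, hevmem.mono fun ξ hξ =>
      ⟨⟨le_trans h0 (le_of_lt hξ.1), le_of_lt hξ.2⟩, ne_of_lt hξ.2⟩⟩
  have ht' : Tendsto φ (𝓝[<] ν) (𝓝[Icc (0:ℝ) 1] 1) :=
    ht.mono_right (nhdsWithin_mono _ diff_subset)
  have TG : Tendsto (fun ξ => slope (Gfun f lm) 1 (φ ξ)) (𝓝[<] ν)
      (𝓝 (derivWithin f (Icc 0 1) 1 - waveSpeed f lm 1)) :=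
    (hasDerivWithinAt_iff_tendsto_slope.1 (Gfun_hasDeriv hf.1 lm)).comp ht
  have hDd : HasDerivWithinAt D (derivWithin D (Icc 0 1) 1) (Icc 0 1) 1 :=
    ((hD.1.differentiableOn one_ne_zero) 1 h1Icc).hasDerivWithinAt
  have TD : Tendsto (fun ξ => slope D 1 (φ ξ)) (𝓝[<] ν) (𝓝 (derivWithin D (Icc 0 1) 1)) :=
    (hasDerivWithinAt_iff_tendsto_slope.1 hDd).comp ht
  have hODE : ∀ᶠ ξ in 𝓝[<] ν, D (φ ξ) * deriv φ ξ = Gfun f lm (φ ξ) ∧ 0 < D (φ ξ) := by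
    filter_upwards [hevmem] with ξ hξ
    exact ⟨(hφode ξ hξ.1 hξ.2).2, hD.2.2 (φ ξ) ⟨lt_of_le_of_lt h0 hξ.1, hξ.2⟩⟩
  have heq : ∀ᶠ ξ in 𝓝[<] ν,
      slope (Gfun f lm) 1 (φ ξ) / slope D 1 (φ ξ) = deriv φ ξ := by
    filter_upwards [hevmem, hODE] with ξ hξ hODEξ
    obtain ⟨hode, hDpos⟩ := hODEξ
    have hρ1 : φ ξ - 1 ≠ 0 := by have := hξ.2; intro h; linarith [sub_eq_zero.1 h]
    have hDρ : D (φ ξ) ≠ 0 := ne_of_gt hDpos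
    have hderiv : deriv φ ξ = Gfun f lm (φ ξ) / D (φ ξ) :=
      eq_div_of_mul_eq hDρ (by linarith [hode])
    rw [slope_def_field, slope_def_field, hG1, hD1, sub_zero, sub_zero, hderiv]
    rw [div_div_div_eq, mul_comm (Gfun f lm (φ ξ)) (φ ξ - 1),
      mul_div_mul_left _ _ hρ1]
  refine ⟨?_, ?_, ?_⟩
  · intro hD'neg
    have hD'ne : derivWithin D (Icc 0 1) 1 ≠ 0 := ne_of_lt hD'neg
    have Tl := (TG.div TD hD'ne).congr' heq
    have hval : (derivWithin f (Icc 0 1) 1 - waveSpeed f lm 1) / derivWithin D (Icc 0 1) 1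
        = ((1 - lm) * derivWithin f (Icc 0 1) 1 + f lm) / ((1 - lm) * derivWithin D (Icc 0 1) 1) := by
      rw [waveSpeed, hf.2.2.2.2]
      have hlm : (1:ℝ) - lm ≠ 0 := by linarith
      field_simp
      ring
    rwa [hval] at Tl
  · intro hD'0
    have hg'neg : derivWithin f (Icc 0 1) 1 - waveSpeed f lm 1 < 0 :=
      gprime_neg hf.1 hf.2.1 h0 hl
    have hTDneg : ∀ᶠ ξ in 𝓝[<] ν, slope D 1 (φ ξ) < 0 := by
      filter_upwards [hevmem, hODE] with ξ hξ hODEξ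
      rw [slope_def_field, hD1, sub_zero]
      exact div_neg_of_pos_of_neg hODEξ.2 (by linarith [hξ.2])
    have TD0 : Tendsto (fun ξ => slope D 1 (φ ξ)) (𝓝[<] ν) (𝓝 0) := hD'0 ▸ TD
    have Tneg : Tendsto (fun ξ => -(slope D 1 (φ ξ))) (𝓝[<] ν) (𝓝[>] (0:ℝ)) := by
      rw [tendsto_nhdsWithin_iff]
      constructor
      · simpa using TD0.neg
      · exact hTDneg.mono fun ξ h => by simp only [mem_Ioi]; linarith
    have Tinv : Tendsto (fun ξ => (-(slope D 1 (φ ξ)))⁻¹) (𝓝[<] ν) atTop :=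
      tendsto_inv_nhdsGT_zero.comp Tneg
    have Tmul : Tendsto (fun ξ => -(slope (Gfun f lm) 1 (φ ξ)) * (-(slope D 1 (φ ξ)))⁻¹)
        (𝓝[<] ν) atTop :=
      Filter.Tendsto.pos_mul_atTop (by linarith) TG.neg Tinv
    refine Tmul.congr' ?_
    filter_upwards [heq] with ξ hξ
    rw [← hξ]
    rw [inv_neg, mul_neg, neg_mul, neg_neg, div_eq_mul_inv]
  · have hGcont : ContinuousOn (Gfun f lm) (Icc 0 1) := Gfun_continuousOn hf.1 lm
    have TG0 : Tendsto (fun ξ => Gfun f lm (φ ξ)) (𝓝[<] ν) (𝓝 (Gfun f lm 1)) :=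
      ((hGcont.continuousWithinAt h1Icc).tendsto).comp ht'
    rw [hG1] at TG0
    refine TG0.congr' ?_
    filter_upwards [hODE] with ξ h
    exact h.1.symm

/-- Characterization of right-degeneracy of profiles and the boundary behaviour of `φ'`
at the finite right endpoint `ν⁺` of `I`. -/
theorem stmt2 (f D : ℝ → ℝ) (hf : FluxAssumption f) (hD : DiffAssumption D)
    (lm lp : ℝ) (h0 : 0 ≤ lm) (hl : lm < lp) (h1 : lp ≤ 1)
    (φ : ℝ → ℝ) (hφ : IsProfile f D lm lp φ) :
    ((D 1 = 0 ∧ lp = 1) ↔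
      ∃ ν : ℝ, {ξ | lm < φ ξ ∧ φ ξ < lp} ⊆ Iio ν ∧ ∀ ξ, ν ≤ ξ → φ ξ = 1) ∧
    (∀ ν : ℝ, {ξ | lm < φ ξ ∧ φ ξ < lp} ⊆ Iio ν → (∀ ξ, ν ≤ ξ → φ ξ = 1) →
      IsLUB {ξ | lm < φ ξ ∧ φ ξ < lp} ν →
      (derivWithin D (Icc 0 1) 1 < 0 →
        Tendsto (deriv φ) (𝓝[<] ν)
          (𝓝 (((1 - lm) * derivWithin f (Icc 0 1) 1 + f lm) / ((1 - lm) * derivWithin D (Icc 0 1) 1)))) ∧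
      (derivWithin D (Icc 0 1) 1 = 0 → Tendsto (deriv φ) (𝓝[<] ν) atTop) ∧
      Tendsto (fun ξ => D (φ ξ) * deriv φ ξ) (𝓝[<] ν) (𝓝 0)) := by
  constructor
  · constructor
    · rintro ⟨hD1, hlp⟩
      subst hlp
      exact lemB hf hD h0 hl hφ hD1
    · rintro ⟨ν, hsub, hone⟩
      exact lemA hf hD h0 hl h1 hφ hsub hone
  · intro ν hsub hone hlub
    exact lem2 hf hD h0 hl h1 hφ hsub hone hlub
end

section
/- Assume f satisfies (f), D satisfies (D), 0 ≤ ℓ⁻ < ℓ⁺ ≤ 1, c = (f(ℓ⁺)−f(ℓ⁻))/(ℓ⁺−ℓ⁻), g(ρ) = f(ρ) − cρ, and let φ be a profile with I = {ξ : ℓ⁻ < φ(ξ) < ℓ⁺}. If it is not the case that (D(0) = 0 and ℓ⁻ = 0), and it is not the case that (D(1) = 0 and ℓ⁺ = 1), then I = ℝ and lim_{ξ→−∞} φ′(ξ) = 0 = lim_{ξ→+∞} φ′(ξ). -/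
open Set Filter MeasureTheory
open scoped Topology Classical

/-- In the non-degenerate case, `I = ℝ` and `φ'` vanishes at `±∞`. -/
theorem stmt3 (f D : ℝ → ℝ) (hf : FluxAssumption f) (hD : DiffAssumption D)
    (lm lp : ℝ) (h0 : 0 ≤ lm) (hl : lm < lp) (h1 : lp ≤ 1)
    (φ : ℝ → ℝ) (hφ : IsProfile f D lm lp φ)
    (hnd0 : ¬ (D 0 = 0 ∧ lm = 0)) (hnd1 : ¬ (D 1 = 0 ∧ lp = 1)) :
    {ξ | lm < φ ξ ∧ φ ξ < lp} = univ ∧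
    Tendsto (deriv φ) atBot (𝓝 0) ∧ Tendsto (deriv φ) atTop (𝓝 0) := by
  obtain ⟨hfC, -, -, -, -⟩ := hf
  obtain ⟨hDC, hDnn, hDpos⟩ := hD
  obtain ⟨hφc, hφm, hφmem, hφbot, hφtop, hφC2, hφode⟩ := hφ
  set g : ℝ → ℝ := redFlux f lm lp with hgdef
  have hsub : Icc lm lp ⊆ Icc (0:ℝ) 1 := Icc_subset_Icc h0 h1
  -- positivity of D on [lm, lp]
  have hDa : 0 < D lm := by
    rcases eq_or_lt_of_le h0 with h | h
    · rw [← h]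
      exact lt_of_le_of_ne (hDnn 0 ⟨le_rfl, zero_le_one⟩)
        (Ne.symm fun hD0 => hnd0 ⟨hD0, h.symm⟩)
    · exact hDpos lm ⟨h, lt_of_lt_of_le hl h1⟩
  have hDb : 0 < D lp := by
    rcases eq_or_lt_of_le h1 with h | h
    · have hne : D 1 ≠ 0 := fun hD1 => hnd1 ⟨hD1, h⟩
      rw [h]
      exact lt_of_le_of_ne (hDnn 1 ⟨zero_le_one, le_rfl⟩) (Ne.symm hne)
    · exact hDpos lp ⟨lt_of_le_of_lt h0 hl, h⟩
  have hDpos' : ∀ u ∈ Icc lm lp, 0 < D u := by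
    intro u hu
    rcases eq_or_lt_of_le hu.1 with h | h
    · rw [← h]; exact hDa
    rcases eq_or_lt_of_le hu.2 with h | h'
    · rw [h]; exact hDb
    · exact hDpos u ⟨lt_of_le_of_lt h0 h, lt_of_lt_of_le h' h1⟩
  -- a positive lower bound for D on [lm, lp]
  have hDc : ContinuousOn D (Icc lm lp) := (hDC.continuousOn).mono hsub
  obtain ⟨uδ, huδ, hδmin⟩ := isCompact_Icc.exists_isMinOn (nonempty_Icc.mpr hl.le) hDc
  set δ : ℝ := D uδ with hδdef
  have hδ0 : 0 < δ := hDpos' uδ huδ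
  have hδle : ∀ u ∈ Icc lm lp, δ ≤ D u := fun u hu => hδmin hu
  -- Lipschitz constant for g on [lm, lp]
  have hgeq : g = fun u => f u - waveSpeed f lm lp * u := rfl
  have hgC : ContDiffOn ℝ 1 g (Icc 0 1) := by
    rw [hgeq]
    exact hfC.sub ((contDiff_const.mul contDiff_id).contDiffOn)
  have hU : UniqueDiffOn ℝ (Icc (0:ℝ) 1) := uniqueDiffOn_Icc zero_lt_one
  obtain ⟨C, hC⟩ := isCompact_Icc.exists_bound_of_continuousOn
    (hgC.continuousOn_derivWithin hU le_rfl)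
  set K : ℝ := max C 0 with hKdef
  have hK0 : 0 ≤ K := le_max_right _ _
  have hKlip : ∀ u ∈ Icc lm lp, ∀ v ∈ Icc lm lp, |g u - g v| ≤ K * |u - v| := by
    intro u hu v hv
    have := Convex.norm_image_sub_le_of_norm_derivWithin_le (C := K)
      (hgC.differentiableOn one_ne_zero)
      (fun x hx => (hC x hx).trans (le_max_left _ _)) (convex_Icc 0 1) (hsub hv) (hsub hu)
    simpa [Real.norm_eq_abs] using this
  set L : ℝ := K / δ with hLdef
  have hL0 : 0 ≤ L := div_nonneg hK0 hδ0.le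
  -- g lp = g lm
  have hgba : g lp = g lm := by
    have hne : lp - lm ≠ 0 := sub_ne_zero.mpr hl.ne'
    simp only [hgdef, redFlux, waveSpeed]
    field_simp
    ring
  -- I is open
  have hIopen : IsOpen {ξ | lm < φ ξ ∧ φ ξ < lp} := by
    have : {ξ | lm < φ ξ ∧ φ ξ < lp} = φ ⁻¹' (Ioo lm lp) := rfl
    rw [this]
    exact isOpen_Ioo.preimage hφc
  -- differentiability on I
  have hdiff : ∀ ξ, lm < φ ξ → φ ξ < lp → HasDerivAt φ (deriv φ ξ) ξ := by
    intro ξ h1' h2'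
    have hξ : ξ ∈ {ξ | lm < φ ξ ∧ φ ξ < lp} := ⟨h1', h2'⟩
    exact ((hφC2.differentiableOn (by norm_num)).differentiableAt
      (hIopen.mem_nhds hξ)).hasDerivAt
  -- derivative bounds on I
  have hbound1 : ∀ ξ, lm < φ ξ → φ ξ < lp → deriv φ ξ ≤ L * (φ ξ - lm) := by
    intro ξ h1' h2'
    obtain ⟨hpos, heq⟩ := hφode ξ h1' h2'
    have hmem' : φ ξ ∈ Icc lm lp := hφmem ξ
    have h3 : g (φ ξ) - g lm ≤ K * (φ ξ - lm) := by
      have h4 := hKlip (φ ξ) hmem' lm (left_mem_Icc.mpr hl.le)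
      rw [abs_of_nonneg (sub_nonneg.mpr hmem'.1)] at h4
      exact (le_abs_self _).trans h4
    have h5 : δ * deriv φ ξ ≤ K * (φ ξ - lm) :=
      (mul_le_mul_of_nonneg_right (hδle _ hmem') hpos.le).trans (heq ▸ h3)
    rw [hLdef, div_mul_eq_mul_div, le_div_iff₀ hδ0]
    linarith
  have hbound2 : ∀ ξ, lm < φ ξ → φ ξ < lp → deriv φ ξ ≤ L * (lp - φ ξ) := by
    intro ξ h1' h2'
    obtain ⟨hpos, heq⟩ := hφode ξ h1' h2'
    have hmem' : φ ξ ∈ Icc lm lp := hφmem ξ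
    have h3 : g (φ ξ) - g lm ≤ K * (lp - φ ξ) := by
      have h4 := hKlip (φ ξ) hmem' lp (right_mem_Icc.mpr hl.le)
      have habs : |φ ξ - lp| = lp - φ ξ := by
        rw [abs_of_nonpos (sub_nonpos.mpr hmem'.2)]; ring
      rw [habs] at h4
      have h5 := (le_abs_self (g (φ ξ) - g lp)).trans h4
      rw [← hgba]
      linarith
    have h5 : δ * deriv φ ξ ≤ K * (lp - φ ξ) :=
      (mul_le_mul_of_nonneg_right (hδle _ hmem') hpos.le).trans (heq ▸ h3)
    rw [hLdef, div_mul_eq_mul_div, le_div_iff₀ hδ0]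
    linarith
  -- the profile never touches lm
  have hlow : ∀ ξ, lm < φ ξ := by
    by_contra hcon
    push_neg at hcon
    obtain ⟨ξ₀, hξ₀⟩ := hcon
    set S : Set ℝ := {ξ | φ ξ = lm} with hSdef
    have hS0 : ξ₀ ∈ S := le_antisymm hξ₀ (hφmem ξ₀).1
    have hSclosed : IsClosed S := isClosed_eq hφc continuous_const
    have hSbdd : BddAbove S := by
      obtain ⟨N, hN⟩ := (eventually_atTop.mp (hφtop.eventually (eventually_gt_nhds hl)))
      refine ⟨N, fun ξ hξ => ?_⟩
      by_contra hNξ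
      push_neg at hNξ
      exact absurd hξ (ne_of_gt (hN ξ hNξ.le))
    set ξ₁ : ℝ := sSup S with hξ₁def
    have hξ₁S : φ ξ₁ = lm := hSclosed.csSup_mem ⟨ξ₀, hS0⟩ hSbdd
    have hnotS : ∀ x, ξ₁ < x → lm < φ x := by
      intro x hx
      refine lt_of_le_of_ne (hφmem x).1 fun h => ?_
      exact absurd (le_csSup hSbdd h.symm) (not_le.mpr hx)
    -- pick ξ₂ > ξ₁ with φ ξ₂ < lp
    have hev : ∀ᶠ x in 𝓝[>] ξ₁, φ x < lp := by
      refine Filter.Eventually.filter_mono nhdsWithin_le_nhds ?_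
      exact hφc.continuousAt.eventually_lt continuousAt_const (by rw [hξ₁S]; exact hl)
    obtain ⟨ξ₂, hξ₂lt, hξ₂gt⟩ := (hev.and (eventually_mem_nhdsWithin)).exists
    have hle : ξ₁ ≤ ξ₂ := hξ₂gt.le
    -- membership in I on the interior
    have hmemI : ∀ x ∈ Ioo ξ₁ ξ₂, lm < φ x ∧ φ x < lp := by
      intro x hx
      exact ⟨hnotS x hx.1, lt_of_le_of_lt (hφm hx.2.le) hξ₂lt⟩
    set F : ℝ → ℝ := fun ξ => (φ ξ - lm) * Real.exp (-L * ξ) with hFdef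
    have hder : ∀ x ∈ Ioo ξ₁ ξ₂,
        HasDerivAt F ((deriv φ x - L * (φ x - lm)) * Real.exp (-L * x)) x := by
      intro x hx
      obtain ⟨hx1, hx2⟩ := hmemI x hx
      have h1 : HasDerivAt (fun y => φ y - lm) (deriv φ x) x := (hdiff x hx1 hx2).sub_const lm
      have h2 : HasDerivAt (fun y => Real.exp (-L * y)) (Real.exp (-L * x) * (-L * 1)) x :=
        ((hasDerivAt_id x).const_mul (-L)).exp
      have h3 := h1.mul h2
      exact h3.congr_deriv (by ring)
    have hanti : AntitoneOn F (Icc ξ₁ ξ₂) := by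
      apply antitoneOn_of_deriv_nonpos (convex_Icc _ _)
      · exact ((hφc.sub continuous_const).mul
          (Real.continuous_exp.comp (continuous_const.mul continuous_id))).continuousOn
      · intro x hx
        rw [interior_Icc] at hx
        exact (hder x hx).differentiableAt.differentiableWithinAt
      · intro x hx
        rw [interior_Icc] at hx
        rw [(hder x hx).deriv]
        obtain ⟨hx1, hx2⟩ := hmemI x hx
        have := hbound1 x hx1 hx2
        have he := (Real.exp_pos (-L * x)).le
        nlinarith
    have hF1 : F ξ₁ = 0 := by simp [hFdef, hξ₁S]
    have hF2 : F ξ₂ ≤ 0 := by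
      rw [← hF1]
      exact hanti (left_mem_Icc.mpr hle) (right_mem_Icc.mpr hle) hle
    have hgt : lm < φ ξ₂ := hnotS ξ₂ hξ₂gt
    have he := Real.exp_pos (-L * ξ₂)
    have hF2' : (φ ξ₂ - lm) * Real.exp (-L * ξ₂) ≤ 0 := hF2
    nlinarith
  -- the profile never touches lp
  have hhigh : ∀ ξ, φ ξ < lp := by
    by_contra hcon
    push_neg at hcon
    obtain ⟨ξ₀, hξ₀⟩ := hcon
    set S : Set ℝ := {ξ | φ ξ = lp} with hSdef
    have hS0 : ξ₀ ∈ S := le_antisymm (hφmem ξ₀).2 hξ₀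
    have hSclosed : IsClosed S := isClosed_eq hφc continuous_const
    have hSbdd : BddBelow S := by
      obtain ⟨N, hN⟩ := (eventually_atBot.mp (hφbot.eventually (eventually_lt_nhds hl)))
      refine ⟨N, fun ξ hξ => ?_⟩
      by_contra hNξ
      push_neg at hNξ
      exact absurd hξ (ne_of_lt (hN ξ hNξ.le))
    set ξ₁ : ℝ := sInf S with hξ₁def
    have hξ₁S : φ ξ₁ = lp := hSclosed.csInf_mem ⟨ξ₀, hS0⟩ hSbdd
    have hnotS : ∀ x, x < ξ₁ → φ x < lp := by
      intro x hx
      refine lt_of_le_of_ne (hφmem x).2 fun h => ?_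
      exact absurd (csInf_le hSbdd h) (not_le.mpr hx)
    -- pick ξ₂ < ξ₁ with lm < φ ξ₂
    have hev : ∀ᶠ x in 𝓝[<] ξ₁, lm < φ x := by
      refine Filter.Eventually.filter_mono nhdsWithin_le_nhds ?_
      exact continuousAt_const.eventually_lt hφc.continuousAt (by rw [hξ₁S]; exact hl)
    obtain ⟨ξ₂, hξ₂lt, hξ₂gt⟩ := (hev.and (eventually_mem_nhdsWithin)).exists
    have hle : ξ₂ ≤ ξ₁ := hξ₂gt.le
    have hmemI : ∀ x ∈ Ioo ξ₂ ξ₁, lm < φ x ∧ φ x < lp := by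
      intro x hx
      exact ⟨lt_of_lt_of_le hξ₂lt (hφm hx.1.le), hnotS x hx.2⟩
    set F : ℝ → ℝ := fun ξ => (lp - φ ξ) * Real.exp (L * ξ) with hFdef
    have hder : ∀ x ∈ Ioo ξ₂ ξ₁,
        HasDerivAt F ((L * (lp - φ x) - deriv φ x) * Real.exp (L * x)) x := by
      intro x hx
      obtain ⟨hx1, hx2⟩ := hmemI x hx
      have h1 : HasDerivAt (fun y => lp - φ y) (-deriv φ x) x := (hdiff x hx1 hx2).const_sub lp
      have h2 : HasDerivAt (fun y => Real.exp (L * y)) (Real.exp (L * x) * (L * 1)) x :=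
        ((hasDerivAt_id x).const_mul L).exp
      have h3 := h1.mul h2
      exact h3.congr_deriv (by ring)
    have hmono : MonotoneOn F (Icc ξ₂ ξ₁) := by
      apply monotoneOn_of_deriv_nonneg (convex_Icc _ _)
      · exact ((continuous_const.sub hφc).mul
          (Real.continuous_exp.comp (continuous_const.mul continuous_id))).continuousOn
      · intro x hx
        rw [interior_Icc] at hx
        exact (hder x hx).differentiableAt.differentiableWithinAt
      · intro x hx
        rw [interior_Icc] at hx
        rw [(hder x hx).deriv]
        obtain ⟨hx1, hx2⟩ := hmemI x hx
        have := hbound2 x hx1 hx2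
        have he := (Real.exp_pos (L * x)).le
        nlinarith
    have hF1 : F ξ₁ = 0 := by simp [hFdef, hξ₁S]
    have hF2 : F ξ₂ ≤ 0 := by
      rw [← hF1]
      exact hmono (left_mem_Icc.mpr hle) (right_mem_Icc.mpr hle) hle
    have hgt : φ ξ₂ < lp := hnotS ξ₂ hξ₂gt
    have he := Real.exp_pos (L * ξ₂)
    have hF2' : (lp - φ ξ₂) * Real.exp (L * ξ₂) ≤ 0 := hF2
    nlinarith
  -- conclusion about I
  have hIuniv : {ξ | lm < φ ξ ∧ φ ξ < lp} = univ :=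
    eq_univ_of_forall fun ξ => ⟨hlow ξ, hhigh ξ⟩
  refine ⟨hIuniv, ?_, ?_⟩
  all_goals {
    set H : ℝ → ℝ := fun u => (g u - g lm) / D u with hHdef
    have hHcont : ContinuousOn H (Icc lm lp) := by
      apply ContinuousOn.div
      · exact ((hgC.continuousOn.mono hsub).sub continuousOn_const)
      · exact hDc
      · exact fun u hu => (hDpos' u hu).ne'
    have hderiv_eq : ∀ ξ, deriv φ ξ = H (φ ξ) := by
      intro ξ
      obtain ⟨hpos, heq⟩ := hφode ξ (hlow ξ) (hhigh ξ)
      have hD0 : D (φ ξ) ≠ 0 := (hDpos' _ (hφmem ξ)).ne'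
      rw [hHdef]
      rw [eq_div_iff hD0, mul_comm]
      exact heq
    first
    | · -- atBot
        have h1 : Tendsto φ atBot (𝓝[Icc lm lp] lm) :=
          tendsto_nhdsWithin_iff.mpr ⟨hφbot, Eventually.of_forall hφmem⟩
        have h2 : Tendsto (fun ξ => H (φ ξ)) atBot (𝓝 (H lm)) :=
          (hHcont lm (left_mem_Icc.mpr hl.le)).tendsto.comp h1
        have hH0 : H lm = 0 := by simp [hHdef]
        rw [hH0] at h2
        exact h2.congr fun ξ => (hderiv_eq ξ).symm
    | · -- atTop
        have h1 : Tendsto φ atTop (𝓝[Icc lm lp] lp) :=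
          tendsto_nhdsWithin_iff.mpr ⟨hφtop, Eventually.of_forall hφmem⟩
        have h2 : Tendsto (fun ξ => H (φ ξ)) atTop (𝓝 (H lp)) :=
          (hHcont lp (right_mem_Icc.mpr hl.le)).tendsto.comp h1
        have hH0 : H lp = 0 := by simp [hHdef, hgba]
        rw [hH0] at h2
        exact h2.congr fun ξ => (hderiv_eq ξ).symm
  }
end

section
/- Assume f satisfies (f), D satisfies (D), 0 ≤ ℓ⁻ < ℓ⁺ ≤ 1, let φ be a profile, and suppose c = (f(ℓ⁺)−f(ℓ⁻))/(ℓ⁺−ℓ⁻) ≠ 0. Define ν⁻ ∈ ℝ ∪ {−∞} as the finite left endpoint of I = {ξ : ℓ⁻ < φ(ξ) < ℓ⁺} when φ ≡ 0 on a left half-line (which happens exactly when D(0)=0 and ℓ⁻=0) and ν⁻ = −∞ otherwise; define ν⁺ symmetrically, so that I = (ν⁻, ν⁺); set ω = min{ν⁻/c, ν⁺/c}. Then the following are equivalent: (a) the wave is degenerate, i.e. (D(0) = 0 and ℓ⁻ = 0) or (D(1) = 0 and ℓ⁺ = 1); (b) exactly one of the two conditions (D(0) = 0 and ℓ⁻ =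 0), (D(1) = 0 and ℓ⁺ = 1) holds; (c) ω is finite. Moreover, if ν⁻ is finite then c = f(ℓ⁺)/ℓ⁺ > 0 and ω = ν⁻/c, while if ν⁺ is finite then c = −f(ℓ⁻)/(1−ℓ⁻) < 0 and ω = ν⁺/c. -/
open Set Filter MeasureTheory
open scoped Topology Classical

theorem exists_lip (F : ℝ → ℝ) (hF : ContDiffOn ℝ 1 F (Icc 0 1)) :
    ∃ L > 0, ∀ x ∈ Icc (0:ℝ) 1, ∀ y ∈ Icc (0:ℝ) 1, |F y - F x| ≤ L * |y - x| := by
  have hdiff : DifferentiableOn ℝ F (Icc 0 1) := hF.differentiableOn one_ne_zero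
  have hcont : ContinuousOn (derivWithin F (Icc 0 1)) (Icc 0 1) :=
    hF.continuousOn_derivWithin (uniqueDiffOn_Icc zero_lt_one) le_rfl
  obtain ⟨C, hC⟩ := isCompact_Icc.exists_bound_of_continuousOn hcont
  refine ⟨max C 1, lt_of_lt_of_le one_pos (le_max_right _ _), ?_⟩
  intro x hx y hy
  have h : ‖F y - F x‖ ≤ (max C 1) * ‖y - x‖ := Convex.norm_image_sub_le_of_norm_derivWithin_le hdiff
    (fun z hz => (hC z hz).trans (le_max_left _ _)) (convex_Icc 0 1) hx hy
  simpa [Real.norm_eq_abs] using h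


theorem chord_lt {f : ℝ → ℝ} (hf : FluxAssumption f) {a b x : ℝ}
    (ha : a ∈ Icc (0:ℝ) 1) (hb : b ∈ Icc (0:ℝ) 1) (hax : a < x) (hxb : x < b) :
    ((b - x)/(b - a)) * f a + ((x - a)/(b - a)) * f b < f x := by
  have hab : a < b := hax.trans hxb
  have hba : (0:ℝ) < b - a := by linarith
  have h1 : (0:ℝ) < (b-x)/(b-a) := div_pos (by linarith) hba
  have h2 : (0:ℝ) < (x-a)/(b-a) := div_pos (by linarith) hba
  have h3 : (b-x)/(b-a) + (x-a)/(b-a) = 1 := by field_simp; ring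
  have h := hf.2.1.2 ha hb (ne_of_lt hab) h1 h2 h3
  have hx : ((b-x)/(b-a)) • a + ((x-a)/(b-a)) • b = x := by
    simp only [smul_eq_mul]; field_simp; ring
  rw [hx] at h
  simpa [smul_eq_mul] using h

theorem g_lp_eq {f : ℝ → ℝ} {lm lp : ℝ} (hl : lm < lp) :
    redFlux f lm lp lp = redFlux f lm lp lm := by
  unfold redFlux waveSpeed
  have h : lp - lm ≠ 0 := sub_ne_zero.2 (ne_of_gt hl)
  field_simp
  ring

theorem C1 {f : ℝ → ℝ} (hf : FluxAssumption f) {lm lp ρ : ℝ}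
    (h0 : 0 ≤ lm) (h1 : lp ≤ 1) (hρ : ρ ∈ Ioo lm lp) :
    redFlux f lm lp lm < redFlux f lm lp ρ := by
  have hl : lm < lp := hρ.1.trans hρ.2
  have h := chord_lt hf ⟨h0, by linarith [hρ.2]⟩ ⟨by linarith [hρ.1], h1⟩ hρ.1 hρ.2
  have hne : lp - lm ≠ 0 := sub_ne_zero.2 (ne_of_gt hl)
  have heq : ((lp - ρ)/(lp - lm)) * f lm + ((ρ - lm)/(lp - lm)) * f lp
      = f lm + ((f lp - f lm)/(lp - lm)) * (ρ - lm) := by field_simp; ring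
  unfold redFlux waveSpeed
  rw [heq] at h
  nlinarith [h]

theorem C2 {f : ℝ → ℝ} (hf : FluxAssumption f) {lp ρ1 ρ : ℝ} (h1 : lp ≤ 1)
    (hρ1 : ρ1 ∈ Ioo 0 lp) (hρ : 0 < ρ) (hρρ1 : ρ ≤ ρ1) :
    (redFlux f 0 lp ρ1 - redFlux f 0 lp 0)/ρ1 * ρ ≤ redFlux f 0 lp ρ - redFlux f 0 lp 0 := by
  have hρ1pos : 0 < ρ1 := hρ1.1
  have hf0 : f 0 = 0 := hf.2.2.2.1
  rcases eq_or_lt_of_le hρρ1 with h|h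
  · subst h; rw [div_mul_cancel₀]; exact ne_of_gt hρ1pos
  · have hc := chord_lt hf ⟨le_rfl, zero_le_one⟩ ⟨hρ1pos.le, by linarith [hρ1.2]⟩ hρ h
    rw [hf0, mul_zero, zero_add] at hc
    -- hc : (ρ - 0)/(ρ1 - 0) * f ρ1 < f ρ
    unfold redFlux
    rw [hf0]
    have : (f ρ1 - waveSpeed f 0 lp * ρ1 - (0 - waveSpeed f 0 lp * 0))/ρ1 * ρ
        = (ρ - 0)/(ρ1 - 0) * f ρ1 - waveSpeed f 0 lp * ρ := by have := hρ1pos.ne'; field_simp; ring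
    rw [this]
    linarith


theorem C3 {f : ℝ → ℝ} (hf : FluxAssumption f) {lm ρ1 ρ : ℝ} (h0 : 0 ≤ lm)
    (hρ1 : ρ1 ∈ Ioo lm 1) (hρ : ρ1 ≤ ρ) (hρ2 : ρ < 1) :
    (redFlux f lm 1 ρ1 - redFlux f lm 1 lm)/(1 - ρ1) * (1 - ρ)
      ≤ redFlux f lm 1 ρ - redFlux f lm 1 lm := by
  have hl : lm < 1 := hρ1.1.trans hρ1.2
  have hf1 : f 1 = 0 := hf.2.2.2.2
  have hne : (1:ℝ) - ρ1 ≠ 0 := sub_ne_zero.2 (ne_of_gt hρ1.2)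
  have hglm : redFlux f lm 1 lm = redFlux f lm 1 1 := (g_lp_eq hl).symm
  rw [hglm]
  rcases eq_or_lt_of_le hρ with h|h
  · subst h; rw [div_mul_cancel₀ _ hne]
  · have hc := chord_lt hf ⟨by linarith [hρ1.1], hρ1.2.le⟩ ⟨zero_le_one, le_rfl⟩ h hρ2
    rw [hf1, mul_zero, add_zero] at hc
    -- hc : (1 - ρ)/(1 - ρ1) * f ρ1 < f ρ
    unfold redFlux
    rw [hf1]
    have heq : (f ρ1 - waveSpeed f lm 1 * ρ1 - (0 - waveSpeed f lm 1 * 1))/(1 - ρ1) * (1 - ρ)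
        = (1 - ρ)/(1 - ρ1) * f ρ1 + waveSpeed f lm 1 * (1 - ρ) := by field_simp; ring
    rw [heq]
    nlinarith [hc]

theorem f_pos {f : ℝ → ℝ} (hf : FluxAssumption f) {x : ℝ} (hx : x ∈ Ioo (0:ℝ) 1) :
    0 < f x := by
  have h := chord_lt hf ⟨le_rfl, zero_le_one⟩ ⟨zero_le_one, le_rfl⟩ hx.1 hx.2
  rw [hf.2.2.2.1, hf.2.2.2.2] at h
  simpa using h


variable {f D : ℝ → ℝ} {lm lp : ℝ} {φ : ℝ → ℝ}


theorem I_nonempty (hφ : IsProfile f D lm lp φ) (hl : lm < lp) :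
    ∃ ξ0, lm < φ ξ0 ∧ φ ξ0 < lp := by
  obtain ⟨hcont, hmono, hmem, hbot, htop, -, -⟩ := hφ
  have hm1 : lm < (lm + lp)/2 := by linarith
  have hm2 : (lm + lp)/2 < lp := by linarith
  obtain ⟨ξa, hξa⟩ := (hbot.eventually_lt_const hm1).exists
  obtain ⟨ξb, hξb⟩ := (htop.eventually_const_lt hm2).exists
  have hab : ξa ≤ ξb := by
    by_contra h; push_neg at h
    exact absurd (hmono h.le) (by linarith)
  obtain ⟨ξ0, -, hξ0⟩ := intermediate_value_Icc hab hcont.continuousOn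
    ⟨hξa.le, hξb.le⟩
  exact ⟨ξ0, by rw [hξ0]; exact hm1, by rw [hξ0]; exact hm2⟩

theorem I_open (hφ : IsProfile f D lm lp φ) :
    IsOpen {ξ | lm < φ ξ ∧ φ ξ < lp} := by
  have : {ξ | lm < φ ξ ∧ φ ξ < lp} = φ ⁻¹' (Ioo lm lp) := rfl
  rw [this]
  exact isOpen_Ioo.preimage hφ.1

theorem I_conv (hφ : IsProfile f D lm lp φ) {ξ ζ η : ℝ}
    (hξ : lm < φ ξ ∧ φ ξ < lp) (hη : lm < φ η ∧ φ η < lp) (h1 : ξ ≤ ζ) (h2 : ζ ≤ η) :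
    lm < φ ζ ∧ φ ζ < lp :=
  ⟨lt_of_lt_of_le hξ.1 (hφ.2.1 h1), lt_of_le_of_lt (hφ.2.1 h2) hη.2⟩

theorem I_diff (hφ : IsProfile f D lm lp φ) {ξ : ℝ} (hξ : lm < φ ξ ∧ φ ξ < lp) :
    DifferentiableAt ℝ φ ξ :=
  ((hφ.2.2.2.2.2.1.differentiableOn (by norm_num)).differentiableAt
    ((I_open hφ).mem_nhds hξ))


theorem bddBelow_of_deg (hf : FluxAssumption f) (hD : DiffAssumption D)
    (hl : 0 < lp) (h1 : lp ≤ 1)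
    (hφ : IsProfile f D 0 lp φ) (hD0 : D 0 = 0) :
    BddBelow {ξ | (0:ℝ) < φ ξ ∧ φ ξ < lp} := by
  obtain ⟨ξ0, hξ0⟩ := I_nonempty hφ hl
  set ρ1 := φ ξ0 with hρ1def
  have hρ1 : ρ1 ∈ Ioo 0 lp := ⟨hξ0.1, hξ0.2⟩
  have hG1 : 0 < redFlux f 0 lp ρ1 - redFlux f 0 lp 0 :=
    sub_pos.2 (C1 hf le_rfl h1 hρ1)
  obtain ⟨L, hLpos, hLip⟩ := exists_lip D hD.1
  set k := (redFlux f 0 lp ρ1 - redFlux f 0 lp 0)/ρ1 with hkdef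
  have hk : 0 < k := div_pos hG1 hρ1.1
  refine ⟨ξ0 - ρ1 * L / k, fun ξ1 hξ1 => ?_⟩
  by_contra hlt
  push_neg at hlt
  have hx10 : ξ1 < ξ0 := by
    have : 0 < ρ1 * L / k := div_pos (mul_pos hρ1.1 hLpos) hk
    linarith
  -- derivative lower bound on Ioo ξ1 ξ0
  have hderiv : ∀ ζ ∈ Ioo ξ1 ξ0, k / L ≤ deriv φ ζ := by
    intro ζ hζ
    have hζI : 0 < φ ζ ∧ φ ζ < lp := I_conv hφ hξ1 hξ0 hζ.1.le hζ.2.le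
    have hmem := hφ.2.2.1 ζ
    have hφle : φ ζ ≤ ρ1 := hφ.2.1 hζ.2.le
    obtain ⟨hdpos, heq⟩ := hφ.2.2.2.2.2.2 ζ hζI.1 hζI.2
    have hGlow : k * φ ζ ≤ redFlux f 0 lp (φ ζ) - redFlux f 0 lp 0 := by
      have := C2 hf h1 hρ1 hζI.1 hφle
      rw [hkdef]; linarith [this]
    have hDle : D (φ ζ) ≤ L * φ ζ := by
      have hm : φ ζ ∈ Icc (0:ℝ) 1 := ⟨hζI.1.le, le_trans hζI.2.le h1⟩
      have h := hLip 0 ⟨le_rfl, zero_le_one⟩ (φ ζ) hm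
      rw [hD0, sub_zero, sub_zero, abs_of_nonneg hζI.1.le] at h
      calc D (φ ζ) ≤ |D (φ ζ)| := le_abs_self _
        _ ≤ L * φ ζ := h
    have hDpos : 0 < D (φ ζ) := hD.2.2 _ ⟨hζI.1, lt_of_lt_of_le hζI.2 h1⟩
    rw [div_le_iff₀ hLpos]
    nlinarith [hζI.1, hdpos, hDpos]
  have hmonu : MonotoneOn (fun ξ => φ ξ - (k/L) * ξ) (Icc ξ1 ξ0) := by
    apply monotoneOn_of_deriv_nonneg (convex_Icc _ _)
      ((hφ.1.sub (continuous_const.mul continuous_id')).continuousOn)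
    · intro ζ hζ
      rw [interior_Icc] at hζ
      have hζI := I_conv hφ hξ1 hξ0 hζ.1.le hζ.2.le
      exact ((I_diff hφ hζI).sub ((differentiable_id.const_mul _) ζ)).differentiableWithinAt
    · intro ζ hζ
      rw [interior_Icc] at hζ
      have hζI := I_conv hφ hξ1 hξ0 hζ.1.le hζ.2.le
      have hh : HasDerivAt (fun ξ => φ ξ - k/L * ξ) (deriv φ ζ - k/L * 1) ζ := by
        exact (I_diff hφ hζI).hasDerivAt.sub (HasDerivAt.const_mul (k/L) (hasDerivAt_id ζ))
      rw [show deriv (φ - (fun x => k / L) * fun x => x) ζ = deriv (fun ξ => φ ξ - k/L * ξ) ζ from rfl, hh.deriv]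
      have := hderiv ζ hζ
      linarith
  have h01 := hmonu (left_mem_Icc.2 hx10.le) (right_mem_Icc.2 hx10.le) hx10.le
  simp only at h01
  -- φ ξ1 - (k/L) ξ1 ≤ φ ξ0 - (k/L) ξ0
  have hklpos : 0 < k / L := div_pos hk hLpos
  have hφb : (0:ℝ) < φ ξ1 := hξ1.1
  have hstep : k / L * (ξ0 - ξ1) ≤ ρ1 := by nlinarith [h01]
  have hcontra : ρ1 * L / k < ξ0 - ξ1 := by linarith
  rw [div_lt_iff₀ hk] at hcontra
  rw [div_mul_eq_mul_div, div_le_iff₀ hLpos] at hstep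
  nlinarith [hstep, hcontra]


theorem deg_of_bddBelow (hf : FluxAssumption f) (hD : DiffAssumption D)
    (h0 : 0 ≤ lm) (hl : lm < lp) (h1 : lp ≤ 1) (hφ : IsProfile f D lm lp φ)
    (hbdd : BddBelow {ξ | lm < φ ξ ∧ φ ξ < lp}) : D 0 = 0 ∧ lm = 0 := by
  by_contra hnot
  set I := {ξ | lm < φ ξ ∧ φ ξ < lp} with hIdef
  have hlm1 : lm < 1 := lt_of_lt_of_le hl h1
  have hDlm : 0 < D lm := by
    rcases eq_or_lt_of_le h0 with h|h
    · rcases eq_or_lt_of_le (hD.2.1 0 ⟨le_rfl, zero_le_one⟩) with h'|h'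
      · exact absurd ⟨h'.symm, h.symm⟩ hnot
      · rwa [← h]
    · exact hD.2.2 lm ⟨h, hlm1⟩
  obtain ⟨ξ0, hξ0⟩ := I_nonempty hφ hl
  have hne : I.Nonempty := ⟨ξ0, hξ0⟩
  set x := sInf I with hxdef
  have hxle : ∀ ξ ∈ I, x ≤ ξ := fun ξ hξ => csInf_le hbdd hξ
  have hxnotI : x ∉ I := by
    intro hx
    obtain ⟨ε, hε, hsub⟩ := Metric.mem_nhds_iff.1 ((I_open hφ).mem_nhds hx)
    have hmem : x - ε/2 ∈ I := hsub (by
      simp only [Metric.mem_ball, Real.dist_eq]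
      rw [abs_of_nonpos (by linarith)]
      linarith)
    linarith [hxle _ hmem]
  have hxξ0 : x < ξ0 := lt_of_le_of_ne (hxle ξ0 hξ0) (fun h => hxnotI (h ▸ hξ0))
  have hφeq : ∀ ξ < x, φ ξ = lm := by
    intro ξ hξ
    have hnI : ξ ∉ I := fun hI => absurd (hxle ξ hI) (not_le.2 hξ)
    rcases eq_or_lt_of_le (hφ.2.2.1 ξ).1 with h|h
    · exact h.symm
    · exact absurd ⟨h, lt_of_le_of_lt (hφ.2.1 (le_of_lt (hξ.trans hxξ0))) hξ0.2⟩ hnI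
  have hφx : φ x = lm := by
    have hseq : Tendsto (fun n : ℕ => x - 1/(n+1)) atTop (𝓝 x) := by
      have h := tendsto_one_div_add_atTop_nhds_zero_nat (𝕜 := ℝ)
      simpa using tendsto_const_nhds.sub h
    have h2 : Tendsto (fun n : ℕ => φ (x - 1/(n+1))) atTop (𝓝 (φ x)) :=
      (hφ.1.continuousAt.tendsto).comp hseq
    have h3 : (fun n : ℕ => φ (x - 1/(n+1))) = fun _ => lm := by
      funext n
      refine hφeq _ ?_
      have h5 : (0:ℝ) < 1/(n+1) := by positivity
      linarith
    rw [h3] at h2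
    exact tendsto_nhds_unique h2 tendsto_const_nhds
  -- continuity data
  have hDc : ContinuousWithinAt D (Icc 0 1) lm :=
    (hD.1.continuousOn) lm ⟨h0, hlm1.le⟩
  rw [Metric.continuousWithinAt_iff] at hDc
  obtain ⟨δ, hδpos, hδ⟩ := hDc (D lm / 2) (by positivity)
  obtain ⟨Lf, hLfpos, hLipf⟩ := exists_lip f hf.1
  set c := waveSpeed f lm lp with hcdef
  set L := Lf + |c| + 1 with hLdef
  have hLpos : 0 < L := by positivity
  have hGle : ∀ ρ ∈ Icc (0:ℝ) 1, lm ≤ ρ →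
      redFlux f lm lp ρ - redFlux f lm lp lm ≤ L * (ρ - lm) := by
    intro ρ hρ hlρ
    have h := hLipf lm ⟨h0, hlm1.le⟩ ρ hρ
    rw [abs_of_nonneg (sub_nonneg.2 hlρ)] at h
    have habs : f ρ - f lm ≤ Lf * (ρ - lm) := (le_abs_self _).trans h
    have hcc : -c * (ρ - lm) ≤ |c| * (ρ - lm) :=
      mul_le_mul_of_nonneg_right (neg_le_abs c) (sub_nonneg.2 hlρ)
    unfold redFlux
    rw [← hcdef]
    nlinarith [sub_nonneg.2 hlρ]
  obtain ⟨η, hηpos, hη⟩ := Metric.continuousAt_iff.1 hφ.1.continuousAt δ hδpos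
  set ξ1 := min (x + η/2) ξ0 with hξ1def
  have hξ1x : x < ξ1 := lt_min (by linarith) hxξ0
  have hsubI : ∀ ζ, x < ζ → ζ ≤ ξ1 → ζ ∈ I := by
    intro ζ h1' h2'
    obtain ⟨ξ', hξ'I, hξ'lt⟩ := exists_lt_of_csInf_lt hne h1'
    exact I_conv hφ hξ'I hξ0 hξ'lt.le (h2'.trans (min_le_right _ _))
  have hξ1I : ξ1 ∈ I := hsubI ξ1 hξ1x le_rfl
  have hφξ1 : φ ξ1 - lm < δ := by
    have hd : dist ξ1 x < η := by
      rw [Real.dist_eq, abs_of_pos (sub_pos.2 hξ1x)]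
      have : ξ1 ≤ x + η/2 := min_le_left _ _
      linarith
    have := hη hd
    rw [hφx, Real.dist_eq] at this
    exact (le_abs_self _).trans_lt this
  set d2 := D lm / 2 with hd2def
  have hd2 : 0 < d2 := by positivity
  set K := L / d2 with hKdef
  have hDge : ∀ ζ, x < ζ → ζ ≤ ξ1 → d2 ≤ D (φ ζ) := by
    intro ζ h1' h2'
    have hζI : ζ ∈ I := hsubI ζ h1' h2'
    have hmem : φ ζ ∈ Icc (0:ℝ) 1 := ⟨h0.trans hζI.1.le, hζI.2.le.trans h1⟩
    have hmono : φ ζ ≤ φ ξ1 := hφ.2.1 h2'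
    have hdist : dist (φ ζ) lm < δ := by
      rw [Real.dist_eq, abs_of_pos (sub_pos.2 hζI.1)]
      linarith
    have h6 := hδ hmem hdist
    rw [Real.dist_eq] at h6
    have h7 := abs_lt.1 h6
    rw [hd2def]
    linarith [h7.1]
  -- the Gronwall comparison function
  set h : ℝ → ℝ := fun ξ => (φ ξ - lm) * Real.exp (-K * ξ) with hhdef
  have hanti : AntitoneOn h (Icc x ξ1) := by
    apply antitoneOn_of_deriv_nonpos (convex_Icc _ _)
    · exact ((hφ.1.sub continuous_const).mul
        (Real.continuous_exp.comp (continuous_const.mul continuous_id'))).continuousOn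
    · intro ζ hζ
      rw [interior_Icc] at hζ
      have hζI : ζ ∈ I := hsubI ζ hζ.1 hζ.2.le
      exact (((I_diff hφ hζI).sub_const lm).mul
        ((Real.differentiable_exp.comp ((differentiable_const _).mul differentiable_fun_id)) ζ)).differentiableWithinAt
    · intro ζ hζ
      rw [interior_Icc] at hζ
      have hζI : ζ ∈ I := hsubI ζ hζ.1 hζ.2.le
      have hE : (0:ℝ) < Real.exp (-K * ζ) := Real.exp_pos _
      have hlin : HasDerivAt (fun ξ : ℝ => -K * ξ) (-K) ζ := by
        simpa using HasDerivAt.const_mul (-K) (hasDerivAt_id ζ)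
      have hexp : HasDerivAt (fun ξ : ℝ => Real.exp (-K * ξ))
          (Real.exp (-K * ζ) * (-K)) ζ := hlin.exp
      have hsub : HasDerivAt (fun ξ => φ ξ - lm) (deriv φ ζ) ζ :=
        (I_diff hφ hζI).hasDerivAt.sub_const lm
      have hh : HasDerivAt h
          (deriv φ ζ * Real.exp (-K * ζ) + (φ ζ - lm) * (Real.exp (-K * ζ) * (-K))) ζ :=
        hsub.mul hexp
      rw [hh.deriv]
      -- key inequality : deriv φ ζ ≤ K * (φ ζ - lm)
      obtain ⟨hdpos, heq⟩ := hφ.2.2.2.2.2.2 ζ hζI.1 hζI.2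
      have hmem : φ ζ ∈ Icc (0:ℝ) 1 := ⟨h0.trans hζI.1.le, hζI.2.le.trans h1⟩
      have hG := hGle (φ ζ) hmem hζI.1.le
      have hDg := hDge ζ hζ.1 hζ.2.le
      have hkey : deriv φ ζ ≤ K * (φ ζ - lm) := by
        have hstep : deriv φ ζ * d2 ≤ L * (φ ζ - lm) := by nlinarith
        rw [hKdef, div_mul_eq_mul_div, le_div_iff₀ hd2]
        linarith [hstep]
      nlinarith [mul_le_mul_of_nonneg_right hkey hE.le]
  have hfinal := hanti (left_mem_Icc.2 hξ1x.le) (right_mem_Icc.2 hξ1x.le) hξ1x.le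
  have hx0 : h x = 0 := by
    rw [hhdef]
    simp [hφx]
  have hpos : 0 < h ξ1 := mul_pos (sub_pos.2 hξ1I.1) (Real.exp_pos _)
  rw [hx0] at hfinal
  linarith


theorem bddAbove_of_deg (hf : FluxAssumption f) (hD : DiffAssumption D)
    (h0 : 0 ≤ lm) (hl : lm < 1)
    (hφ : IsProfile f D lm 1 φ) (hD1 : D 1 = 0) :
    BddAbove {ξ | lm < φ ξ ∧ φ ξ < 1} := by
  obtain ⟨ξ0, hξ0⟩ := I_nonempty hφ hl
  set ρ1 := φ ξ0 with hρ1def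
  have hρ1 : ρ1 ∈ Ioo lm 1 := ⟨hξ0.1, hξ0.2⟩
  have hG1 : 0 < redFlux f lm 1 ρ1 - redFlux f lm 1 lm :=
    sub_pos.2 (C1 hf h0 le_rfl hρ1)
  obtain ⟨L, hLpos, hLip⟩ := exists_lip D hD.1
  set k := (redFlux f lm 1 ρ1 - redFlux f lm 1 lm)/(1 - ρ1) with hkdef
  have h1ρ1 : 0 < 1 - ρ1 := by linarith [hρ1.2]
  have hk : 0 < k := div_pos hG1 h1ρ1
  refine ⟨ξ0 + (1 - ρ1) * L / k, fun ξ1 hξ1 => ?_⟩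
  by_contra hlt
  push_neg at hlt
  have hx10 : ξ0 < ξ1 := by
    have : 0 < (1 - ρ1) * L / k := div_pos (mul_pos h1ρ1 hLpos) hk
    linarith
  have hderiv : ∀ ζ ∈ Ioo ξ0 ξ1, k / L ≤ deriv φ ζ := by
    intro ζ hζ
    have hζI : lm < φ ζ ∧ φ ζ < 1 := I_conv hφ hξ0 hξ1 hζ.1.le hζ.2.le
    have hφge : ρ1 ≤ φ ζ := hφ.2.1 hζ.1.le
    obtain ⟨hdpos, heq⟩ := hφ.2.2.2.2.2.2 ζ hζI.1 hζI.2
    have hGlow : k * (1 - φ ζ) ≤ redFlux f lm 1 (φ ζ) - redFlux f lm 1 lm := by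
      have := C3 hf h0 hρ1 hφge hζI.2
      rw [hkdef]; linarith [this]
    have hDle : D (φ ζ) ≤ L * (1 - φ ζ) := by
      have hm : φ ζ ∈ Icc (0:ℝ) 1 := ⟨h0.trans hζI.1.le, hζI.2.le⟩
      have h := hLip 1 ⟨zero_le_one, le_rfl⟩ (φ ζ) hm
      have h2 : |φ ζ - 1| = 1 - φ ζ := by
        rw [abs_of_nonpos (by linarith [hζI.2])]; ring
      rw [hD1, sub_zero, h2] at h
      exact (le_abs_self _).trans h
    have hDpos : 0 < D (φ ζ) := hD.2.2 _ ⟨lt_of_le_of_lt h0 hζI.1, hζI.2⟩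
    rw [div_le_iff₀ hLpos]
    nlinarith [hζI.2, hdpos, hDpos]
  have hmonu : MonotoneOn (fun ξ => φ ξ - (k/L) * ξ) (Icc ξ0 ξ1) := by
    apply monotoneOn_of_deriv_nonneg (convex_Icc _ _)
      ((hφ.1.sub (continuous_const.mul continuous_id')).continuousOn)
    · intro ζ hζ
      rw [interior_Icc] at hζ
      have hζI := I_conv hφ hξ0 hξ1 hζ.1.le hζ.2.le
      exact ((I_diff hφ hζI).sub ((differentiable_id.const_mul _) ζ)).differentiableWithinAt
    · intro ζ hζ
      rw [interior_Icc] at hζ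
      have hζI := I_conv hφ hξ0 hξ1 hζ.1.le hζ.2.le
      have hh : HasDerivAt (fun ξ => φ ξ - k/L * ξ) (deriv φ ζ - k/L * 1) ζ := by
        exact (I_diff hφ hζI).hasDerivAt.sub (HasDerivAt.const_mul (k/L) (hasDerivAt_id ζ))
      rw [show deriv (φ - (fun x => k / L) * fun x => x) ζ = deriv (fun ξ => φ ξ - k/L * ξ) ζ from rfl, hh.deriv]
      have := hderiv ζ hζ
      linarith
  have h01 := hmonu (left_mem_Icc.2 hx10.le) (right_mem_Icc.2 hx10.le) hx10.le
  simp only at h01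
  have hklpos : 0 < k / L := div_pos hk hLpos
  have hφb : φ ξ1 < 1 := hξ1.2
  have hstep : k / L * (ξ1 - ξ0) ≤ 1 - ρ1 := by nlinarith [h01]
  have hcontra : (1 - ρ1) * L / k < ξ1 - ξ0 := by linarith
  rw [div_lt_iff₀ hk] at hcontra
  rw [div_mul_eq_mul_div, div_le_iff₀ hLpos] at hstep
  nlinarith [hstep, hcontra]


theorem deg_of_bddAbove (hf : FluxAssumption f) (hD : DiffAssumption D)
    (h0 : 0 ≤ lm) (hl : lm < lp) (h1 : lp ≤ 1) (hφ : IsProfile f D lm lp φ)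
    (hbdd : BddAbove {ξ | lm < φ ξ ∧ φ ξ < lp}) : D 1 = 0 ∧ lp = 1 := by
  by_contra hnot
  set I := {ξ | lm < φ ξ ∧ φ ξ < lp} with hIdef
  have hlp0 : 0 < lp := lt_of_le_of_lt h0 hl
  have hDlp : 0 < D lp := by
    rcases eq_or_lt_of_le h1 with h|h
    · rcases eq_or_lt_of_le (hD.2.1 1 ⟨zero_le_one, le_rfl⟩) with h'|h'
      · exact absurd ⟨h'.symm, h⟩ hnot
      · rwa [h]
    · exact hD.2.2 lp ⟨hlp0, h⟩
  obtain ⟨ξ0, hξ0⟩ := I_nonempty hφ hl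
  have hne : I.Nonempty := ⟨ξ0, hξ0⟩
  set y := sSup I with hydef
  have hyle : ∀ ξ ∈ I, ξ ≤ y := fun ξ hξ => le_csSup hbdd hξ
  have hynotI : y ∉ I := by
    intro hy
    obtain ⟨ε, hε, hsub⟩ := Metric.mem_nhds_iff.1 ((I_open hφ).mem_nhds hy)
    have hmem : y + ε/2 ∈ I := hsub (by
      simp only [Metric.mem_ball, Real.dist_eq]
      rw [abs_of_nonneg (by linarith)]
      linarith)
    linarith [hyle _ hmem]
  have hξ0y : ξ0 < y := lt_of_le_of_ne (hyle ξ0 hξ0) (fun h => hynotI (h ▸ hξ0))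
  have hφeq : ∀ ξ, y < ξ → φ ξ = lp := by
    intro ξ hξ
    have hnI : ξ ∉ I := fun hI => absurd (hyle ξ hI) (not_le.2 hξ)
    rcases eq_or_lt_of_le (hφ.2.2.1 ξ).2 with h|h
    · exact h
    · exact absurd ⟨lt_of_lt_of_le hξ0.1 (hφ.2.1 (le_of_lt (hξ0y.trans hξ))), h⟩ hnI
  have hφy : φ y = lp := by
    have hseq : Tendsto (fun n : ℕ => y + 1/(n+1)) atTop (𝓝 y) := by
      have h := tendsto_one_div_add_atTop_nhds_zero_nat (𝕜 := ℝ)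
      simpa using tendsto_const_nhds.add h
    have h2 : Tendsto (fun n : ℕ => φ (y + 1/(n+1))) atTop (𝓝 (φ y)) :=
      (hφ.1.continuousAt.tendsto).comp hseq
    have h3 : (fun n : ℕ => φ (y + 1/(n+1))) = fun _ => lp := by
      funext n
      refine hφeq _ ?_
      have h5 : (0:ℝ) < 1/(n+1) := by positivity
      linarith
    rw [h3] at h2
    exact tendsto_nhds_unique h2 tendsto_const_nhds
  -- continuity data
  have hDc : ContinuousWithinAt D (Icc 0 1) lp :=
    (hD.1.continuousOn) lp ⟨hlp0.le, h1⟩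
  rw [Metric.continuousWithinAt_iff] at hDc
  obtain ⟨δ, hδpos, hδ⟩ := hDc (D lp / 2) (by positivity)
  obtain ⟨Lf, hLfpos, hLipf⟩ := exists_lip f hf.1
  set c := waveSpeed f lm lp with hcdef
  set L := Lf + |c| + 1 with hLdef
  have hLpos : 0 < L := by positivity
  have hGle : ∀ ρ ∈ Icc (0:ℝ) 1, ρ ≤ lp →
      redFlux f lm lp ρ - redFlux f lm lp lm ≤ L * (lp - ρ) := by
    intro ρ hρ hlρ
    have h := hLipf lp ⟨hlp0.le, h1⟩ ρ hρ
    have h2 : |ρ - lp| = lp - ρ := by rw [abs_of_nonpos (by linarith)]; ring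
    rw [h2] at h
    have habs : f ρ - f lp ≤ Lf * (lp - ρ) := (le_abs_self _).trans h
    have hcc : c * (lp - ρ) ≤ |c| * (lp - ρ) :=
      mul_le_mul_of_nonneg_right (le_abs_self c) (by linarith)
    have hglm : redFlux f lm lp lm = redFlux f lm lp lp := (g_lp_eq hl).symm
    rw [hglm]
    unfold redFlux
    rw [← hcdef]
    nlinarith [sub_nonneg.2 hlρ]
  obtain ⟨η, hηpos, hη⟩ := Metric.continuousAt_iff.1 hφ.1.continuousAt δ hδpos
  set ξ1 := max (y - η/2) ξ0 with hξ1def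
  have hξ1y : ξ1 < y := max_lt (by linarith) hξ0y
  have hξ1I : ξ1 ∈ I := by
    obtain ⟨ξ', hξ'I, hξ'gt⟩ := exists_lt_of_lt_csSup hne hξ1y
    exact I_conv hφ hξ0 hξ'I (le_max_right _ _) hξ'gt.le
  have hsubI : ∀ ζ, ξ1 ≤ ζ → ζ < y → ζ ∈ I := by
    intro ζ h1' h2'
    obtain ⟨ξ', hξ'I, hξ'gt⟩ := exists_lt_of_lt_csSup hne h2'
    exact I_conv hφ hξ1I hξ'I h1' hξ'gt.le
  have hφξ1 : lp - φ ξ1 < δ := by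
    have hd : dist ξ1 y < η := by
      rw [Real.dist_eq, abs_of_nonpos (by linarith)]
      have : y - η/2 ≤ ξ1 := le_max_left _ _
      linarith
    have := hη hd
    rw [hφy, Real.dist_eq] at this
    have h6 := abs_lt.1 this
    linarith [h6.1]
  set d2 := D lp / 2 with hd2def
  have hd2 : 0 < d2 := by positivity
  set K := L / d2 with hKdef
  have hDge : ∀ ζ, ξ1 ≤ ζ → ζ < y → d2 ≤ D (φ ζ) := by
    intro ζ h1' h2'
    have hζI : ζ ∈ I := hsubI ζ h1' h2'
    have hmem : φ ζ ∈ Icc (0:ℝ) 1 := ⟨h0.trans hζI.1.le, hζI.2.le.trans h1⟩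
    have hmono : φ ξ1 ≤ φ ζ := hφ.2.1 h1'
    have hdist : dist (φ ζ) lp < δ := by
      rw [Real.dist_eq, abs_of_nonpos (by linarith [hζI.2])]
      linarith
    have h6 := hδ hmem hdist
    rw [Real.dist_eq] at h6
    have h7 := abs_lt.1 h6
    rw [hd2def]
    linarith [h7.1]
  set h : ℝ → ℝ := fun ξ => (lp - φ ξ) * Real.exp (K * ξ) with hhdef
  have hmon : MonotoneOn h (Icc ξ1 y) := by
    apply monotoneOn_of_deriv_nonneg (convex_Icc _ _)
    · exact ((continuous_const.sub hφ.1).mul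
        (Real.continuous_exp.comp (continuous_const.mul continuous_id'))).continuousOn
    · intro ζ hζ
      rw [interior_Icc] at hζ
      have hζI : ζ ∈ I := hsubI ζ hζ.1.le hζ.2
      exact (((I_diff hφ hζI).const_sub lp).mul
        ((Real.differentiable_exp.comp ((differentiable_const _).mul differentiable_fun_id)) ζ)).differentiableWithinAt
    · intro ζ hζ
      rw [interior_Icc] at hζ
      have hζI : ζ ∈ I := hsubI ζ hζ.1.le hζ.2
      have hE : (0:ℝ) < Real.exp (K * ζ) := Real.exp_pos _
      have hlin : HasDerivAt (fun ξ : ℝ => K * ξ) K ζ := by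
        simpa using HasDerivAt.const_mul K (hasDerivAt_id ζ)
      have hexp : HasDerivAt (fun ξ : ℝ => Real.exp (K * ξ))
          (Real.exp (K * ζ) * K) ζ := hlin.exp
      have hsub : HasDerivAt (fun ξ => lp - φ ξ) (-deriv φ ζ) ζ :=
        (I_diff hφ hζI).hasDerivAt.const_sub lp
      have hh : HasDerivAt h
          (-deriv φ ζ * Real.exp (K * ζ) + (lp - φ ζ) * (Real.exp (K * ζ) * K)) ζ :=
        hsub.mul hexp
      rw [hh.deriv]
      obtain ⟨hdpos, heq⟩ := hφ.2.2.2.2.2.2 ζ hζI.1 hζI.2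
      have hmem : φ ζ ∈ Icc (0:ℝ) 1 := ⟨h0.trans hζI.1.le, hζI.2.le.trans h1⟩
      have hG := hGle (φ ζ) hmem hζI.2.le
      have hDg := hDge ζ hζ.1.le hζ.2
      have hkey : deriv φ ζ ≤ K * (lp - φ ζ) := by
        have hstep : deriv φ ζ * d2 ≤ L * (lp - φ ζ) := by nlinarith
        rw [hKdef, div_mul_eq_mul_div, le_div_iff₀ hd2]
        linarith [hstep]
      nlinarith [mul_le_mul_of_nonneg_right hkey hE.le]
  have hfinal := hmon (left_mem_Icc.2 hξ1y.le) (right_mem_Icc.2 hξ1y.le) hξ1y.le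
  have hy0 : h y = 0 := by
    rw [hhdef]
    simp [hφy]
  have hpos : 0 < h ξ1 := mul_pos (sub_pos.2 hξ1I.2) (Real.exp_pos _)
  rw [hy0] at hfinal
  linarith


theorem ereal_sInf_coe {s : Set ℝ} (hne : s.Nonempty) (hbdd : BddBelow s) :
    sInf (Real.toEReal '' s) = ((sInf s : ℝ) : EReal) :=
  (Monotone.map_csInf_of_continuousAt (continuous_coe_real_ereal.continuousAt)
    (fun _ _ h => EReal.coe_le_coe_iff.2 h) hne hbdd).symm
theorem ereal_sSup_coe {s : Set ℝ} (hne : s.Nonempty) (hbdd : BddAbove s) :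
    sSup (Real.toEReal '' s) = ((sSup s : ℝ) : EReal) :=
  (Monotone.map_csSup_of_continuousAt (continuous_coe_real_ereal.continuousAt)
    (fun _ _ h => EReal.coe_le_coe_iff.2 h) hne hbdd).symm
theorem ereal_sInf_bot {s : Set ℝ} (h : ¬ BddBelow s) :
    sInf (Real.toEReal '' s) = ⊥ := by
  rw [EReal.eq_bot_iff_forall_lt]
  intro b
  obtain ⟨x, hx, hxb⟩ : ∃ x ∈ s, x < b := by
    by_contra h'; push_neg at h'; exact h ⟨b, fun y hy => h' y hy⟩
  exact lt_of_le_of_lt (sInf_le ⟨x, hx, rfl⟩) (by exact_mod_cast hxb)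
theorem ereal_sSup_top {s : Set ℝ} (h : ¬ BddAbove s) :
    sSup (Real.toEReal '' s) = ⊤ := by
  rw [EReal.eq_top_iff_forall_lt]
  intro b
  obtain ⟨x, hx, hxb⟩ : ∃ x ∈ s, b < x := by
    by_contra h'; push_neg at h'; exact h ⟨b, fun y hy => h' y hy⟩
  exact lt_of_lt_of_le (by exact_mod_cast hxb) (le_sSup ⟨x, hx, rfl⟩)


/-- For a non-stationary traveling wave, degeneracy is equivalent to exactly one of the two
degeneracy conditions, and to finiteness of `ω = min{ν⁻/c, ν⁺/c}`; moreover the sign of `c`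
and the value of `ω` are determined by which endpoint of `I` is finite. -/


theorem stmt5 (f D : ℝ → ℝ) (hf : FluxAssumption f) (hD : DiffAssumption D)
    (lm lp : ℝ) (h0 : 0 ≤ lm) (hl : lm < lp) (h1 : lp ≤ 1)
    (φ : ℝ → ℝ) (hφ : IsProfile f D lm lp φ)
    (hc : waveSpeed f lm lp ≠ 0)
    (νm νp ω : EReal)
    (hνm : νm = sInf (Real.toEReal '' {ξ | lm < φ ξ ∧ φ ξ < lp}))
    (hνp : νp = sSup (Real.toEReal '' {ξ | lm < φ ξ ∧ φ ξ < lp}))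
    (hω : ω = min (νm * (((waveSpeed f lm lp)⁻¹ : ℝ) : EReal))
                  (νp * (((waveSpeed f lm lp)⁻¹ : ℝ) : EReal))) :
    (((D 0 = 0 ∧ lm = 0) ∨ (D 1 = 0 ∧ lp = 1)) ↔
      Xor' (D 0 = 0 ∧ lm = 0) (D 1 = 0 ∧ lp = 1)) ∧
    (((D 0 = 0 ∧ lm = 0) ∨ (D 1 = 0 ∧ lp = 1)) ↔ ∃ w : ℝ, ω = (w : EReal)) ∧
    (∀ x : ℝ, νm = (x : EReal) →
      waveSpeed f lm lp = f lp / lp ∧ 0 < waveSpeed f lm lp ∧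
        ω = ((x / waveSpeed f lm lp : ℝ) : EReal)) ∧
    (∀ x : ℝ, νp = (x : EReal) →
      waveSpeed f lm lp = -f lm / (1 - lm) ∧ waveSpeed f lm lp < 0 ∧
        ω = ((x / waveSpeed f lm lp : ℝ) : EReal)) := by
  have hf0 : f 0 = 0 := hf.2.2.2.1
  have hf1 : f 1 = 0 := hf.2.2.2.2
  obtain ⟨ξa, hξa⟩ := I_nonempty hφ hl
  have hIne : {ξ | lm < φ ξ ∧ φ ξ < lp}.Nonempty := ⟨ξa, hξa⟩
  have hnotboth : ¬((D 0 = 0 ∧ lm = 0) ∧ (D 1 = 0 ∧ lp = 1)) := by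
    rintro ⟨⟨-, hlm⟩, ⟨-, hlp⟩⟩
    apply hc
    unfold waveSpeed
    rw [hlm, hlp, hf0, hf1]
    norm_num
  have hK1 : BddBelow {ξ | lm < φ ξ ∧ φ ξ < lp} ↔ (D 0 = 0 ∧ lm = 0) := by
    constructor
    · exact fun h => deg_of_bddBelow hf hD h0 hl h1 hφ h
    · rintro ⟨hD0, hlm⟩
      subst hlm
      exact bddBelow_of_deg hf hD hl h1 hφ hD0
  have hK2 : BddAbove {ξ | lm < φ ξ ∧ φ ξ < lp} ↔ (D 1 = 0 ∧ lp = 1) := by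
    constructor
    · exact fun h => deg_of_bddAbove hf hD h0 hl h1 hφ h
    · rintro ⟨hD1, hlp⟩
      subst hlp
      exact bddAbove_of_deg hf hD h0 hl hφ hD1
  have hcl : (D 0 = 0 ∧ lm = 0) →
      waveSpeed f lm lp = f lp / lp ∧ 0 < waveSpeed f lm lp := by
    rintro ⟨-, hlm⟩
    subst hlm
    have hlp1 : lp < 1 := by
      rcases eq_or_lt_of_le h1 with h|h
      · exfalso; apply hc; unfold waveSpeed; rw [h, hf0, hf1]; norm_num
      · exact h
    have heq : waveSpeed f 0 lp = f lp / lp := by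
      unfold waveSpeed; rw [hf0, sub_zero, sub_zero]
    exact ⟨heq, heq ▸ div_pos (f_pos hf ⟨hl, hlp1⟩) hl⟩
  have hcr : (D 1 = 0 ∧ lp = 1) →
      waveSpeed f lm lp = -f lm / (1 - lm) ∧ waveSpeed f lm lp < 0 := by
    rintro ⟨-, hlp⟩
    subst hlp
    have hlm0 : 0 < lm := by
      rcases eq_or_lt_of_le h0 with h|h
      · exfalso; apply hc; unfold waveSpeed; rw [← h, hf0, hf1]; norm_num
      · exact h
    have heq : waveSpeed f lm 1 = -f lm / (1 - lm) := by
      unfold waveSpeed; rw [hf1, zero_sub, neg_div]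
    refine ⟨heq, heq ▸ div_neg_of_neg_of_pos (neg_neg_of_pos (f_pos hf ⟨hlm0, hl⟩)) (by linarith)⟩
  -- part 3
  have part3 : ∀ x : ℝ, νm = (x : EReal) →
      waveSpeed f lm lp = f lp / lp ∧ 0 < waveSpeed f lm lp ∧
        ω = ((x / waveSpeed f lm lp : ℝ) : EReal) := by
    intro x hx
    have hbb : BddBelow {ξ | lm < φ ξ ∧ φ ξ < lp} := by
      by_contra hnb
      rw [hνm, ereal_sInf_bot hnb] at hx
      exact absurd hx.symm (EReal.coe_ne_bot x)
    have hdegL := hK1.1 hbb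
    obtain ⟨heq, hpos⟩ := hcl hdegL
    have hnba : ¬ BddAbove {ξ | lm < φ ξ ∧ φ ξ < lp} := fun h => hnotboth ⟨hdegL, hK2.1 h⟩
    have hνptop : νp = ⊤ := by rw [hνp, ereal_sSup_top hnba]
    refine ⟨heq, hpos, ?_⟩
    have hicpos : (0:EReal) < (((waveSpeed f lm lp)⁻¹ : ℝ) : EReal) := by
      exact_mod_cast inv_pos.2 hpos
    rw [hω, hx, hνptop, EReal.top_mul_of_pos hicpos, min_eq_left le_top,
      ← EReal.coe_mul, div_eq_mul_inv]
  -- part 4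
  have part4 : ∀ x : ℝ, νp = (x : EReal) →
      waveSpeed f lm lp = -f lm / (1 - lm) ∧ waveSpeed f lm lp < 0 ∧
        ω = ((x / waveSpeed f lm lp : ℝ) : EReal) := by
    intro x hx
    have hba : BddAbove {ξ | lm < φ ξ ∧ φ ξ < lp} := by
      by_contra hnb
      rw [hνp, ereal_sSup_top hnb] at hx
      exact absurd hx.symm (EReal.coe_ne_top x)
    have hdegR := hK2.1 hba
    obtain ⟨heq, hneg⟩ := hcr hdegR
    have hnbb : ¬ BddBelow {ξ | lm < φ ξ ∧ φ ξ < lp} := fun h => hnotboth ⟨hK1.1 h, hdegR⟩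
    have hνmbot : νm = ⊥ := by rw [hνm, ereal_sInf_bot hnbb]
    refine ⟨heq, hneg, ?_⟩
    have hicneg : (((waveSpeed f lm lp)⁻¹ : ℝ) : EReal) < 0 := by
      exact_mod_cast inv_neg''.2 hneg
    rw [hω, hx, hνmbot, EReal.bot_mul_of_neg hicneg, min_eq_right le_top,
      ← EReal.coe_mul, div_eq_mul_inv]
  refine ⟨?_, ?_, part3, part4⟩
  · constructor
    · rintro (h | h)
      · exact Or.inl ⟨h, fun hr => hnotboth ⟨h, hr⟩⟩
      · exact Or.inr ⟨h, fun hl' => hnotboth ⟨hl', h⟩⟩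
    · rintro (⟨h, -⟩ | ⟨h, -⟩)
      · exact Or.inl h
      · exact Or.inr h
  · constructor
    · rintro (hdegL | hdegR)
      · have hbb := hK1.2 hdegL
        have hval : νm = ((sInf {ξ | lm < φ ξ ∧ φ ξ < lp} : ℝ) : EReal) := by
          rw [hνm, ereal_sInf_coe hIne hbb]
        exact ⟨_, (part3 _ hval).2.2⟩
      · have hba := hK2.2 hdegR
        have hval : νp = ((sSup {ξ | lm < φ ξ ∧ φ ξ < lp} : ℝ) : EReal) := by
          rw [hνp, ereal_sSup_coe hIne hba]
        exact ⟨_, (part4 _ hval).2.2⟩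
    · rintro ⟨w, hw⟩
      by_contra hnor
      have hnL : ¬(D 0 = 0 ∧ lm = 0) := fun h => hnor (Or.inl h)
      have hnR : ¬(D 1 = 0 ∧ lp = 1) := fun h => hnor (Or.inr h)
      have hνmbot : νm = ⊥ := by
        rw [hνm, ereal_sInf_bot (fun h => hnL (hK1.1 h))]
      have hνptop : νp = ⊤ := by
        rw [hνp, ereal_sSup_top (fun h => hnR (hK2.1 h))]
      rcases lt_or_gt_of_ne hc with hneg | hpos
      · have hicneg : (((waveSpeed f lm lp)⁻¹ : ℝ) : EReal) < 0 := by
          exact_mod_cast inv_neg''.2 hneg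
        rw [hω, hνmbot, hνptop, EReal.bot_mul_of_neg hicneg,
          EReal.top_mul_of_neg hicneg, min_eq_right bot_le] at hw
        exact EReal.coe_ne_bot w hw.symm
      · have hicpos : (0:EReal) < (((waveSpeed f lm lp)⁻¹ : ℝ) : EReal) := by
          exact_mod_cast inv_pos.2 hpos
        rw [hω, hνmbot, hνptop, EReal.bot_mul_of_pos hicpos,
          min_eq_left bot_le] at hw
        exact EReal.coe_ne_bot w hw.symm
end

section
/- In the network setup, let φ_h be a profile for each h ∈ H, and define the parabolic flux F_h(u,p) = f_h(u) − D_h(u)·p. Then the following are equivalent: (a) for almost every t ∈ ℝ and every j ∈ J, F_j(φ_j(−c_j t), φ_j′(−c_j t)) = Σ_{i∈I} α_{i,j} F_i(φ_i(−c_i t), φ_i′(−c_i t)); (b) for every t ∈ ℝ and every j ∈ J, c_j φ_j(c_j t) + g_j(ℓ_j⁻) = Σ_{i∈I} α_{i,j} [c_i φ_i(c_i t) + g_i(ℓ_i⁻)] (the coupling condition (Tool)). Moreover, in (b) any occurrence of g_h(ℓ_h⁻) may be replaced by g_h(ℓ_h⁺), since g_h(ℓ_h⁺) = g_h(ℓ_h⁻)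 for every h ∈ H. -/
open Set Filter MeasureTheory
open scoped Topology Classical

/-- Speed of road `h` given end–state functions. -/
noncomputable def spd {H : Type*} (f : H → ℝ → ℝ) (lm lp : H → ℝ) (h : H) : ℝ :=
  waveSpeed (f h) (lm h) (lp h)

/-- Reduced flux of road `h` given end–state functions. -/
noncomputable def gred {H : Type*} (f : H → ℝ → ℝ) (lm lp : H → ℝ) (h : H) (ρ : ℝ) : ℝ :=
  redFlux (f h) (lm h) (lp h) ρ

/-- The network setup: flux/diffusivity assumptions on each road, and coefficients
`α i j ∈ (0,1]` with unit row sums. -/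
def NetworkSetup {m n : ℕ} (f D : Fin m ⊕ Fin n → ℝ → ℝ) (α : Fin m → Fin n → ℝ) : Prop :=
  (∀ h, FluxAssumption (f h)) ∧ (∀ h, DiffAssumption (D h)) ∧
  (∀ i j, α i j ∈ Ioc (0:ℝ) 1) ∧ (∀ i, ∑ j, α i j = 1)

/-- Admissible end states: `0 ≤ ℓ_h⁻ < ℓ_h⁺ ≤ 1` for every road. -/
def EndStates {H : Type*} (lm lp : H → ℝ) : Prop :=
  ∀ h, 0 ≤ lm h ∧ lm h < lp h ∧ lp h ≤ 1

/-- The coupling condition (Tool):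
`c_j φ_j(c_j t) + g_j(ℓ_j⁻) = ∑_i α_{i,j} (c_i φ_i(c_i t) + g_i(ℓ_i⁻))` for all `t, j`. -/
def Tool {m n : ℕ} (f : Fin m ⊕ Fin n → ℝ → ℝ) (α : Fin m → Fin n → ℝ)
    (lm lp : Fin m ⊕ Fin n → ℝ) (φ : Fin m ⊕ Fin n → ℝ → ℝ) : Prop :=
  ∀ t : ℝ, ∀ j : Fin n,
    spd f lm lp (Sum.inr j) * φ (Sum.inr j) (spd f lm lp (Sum.inr j) * t)
      + gred f lm lp (Sum.inr j) (lm (Sum.inr j))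
    = ∑ i : Fin m, α i j *
        (spd f lm lp (Sum.inl i) * φ (Sum.inl i) (spd f lm lp (Sum.inl i) * t)
          + gred f lm lp (Sum.inl i) (lm (Sum.inl i)))

/-- A traveling wave of the network problem at profile level: a family of profiles
satisfying the coupling condition (Tool). -/
def IsTravelingWave {m n : ℕ} (f D : Fin m ⊕ Fin n → ℝ → ℝ) (α : Fin m → Fin n → ℝ)
    (lm lp : Fin m ⊕ Fin n → ℝ) (φ : Fin m ⊕ Fin n → ℝ → ℝ) : Prop :=
  (∀ h, IsProfile (f h) (D h) (lm h) (lp h) (φ h)) ∧ Tool f α lm lp φ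

/-- `L_{i,j}⁻`: `ℓ_i⁻` if `c_i c_j ≥ 0`, and `ℓ_i⁺` otherwise. -/
noncomputable def Lminus {m n : ℕ} (f : Fin m ⊕ Fin n → ℝ → ℝ)
    (lm lp : Fin m ⊕ Fin n → ℝ) (i : Fin m) (j : Fin n) : ℝ :=
  if 0 ≤ spd f lm lp (Sum.inl i) * spd f lm lp (Sum.inr j) then lm (Sum.inl i)
  else lp (Sum.inl i)

/-- `L_{i,j}⁺`: `ℓ_i⁺` if `c_i c_j ≥ 0`, and `ℓ_i⁻` otherwise. -/
noncomputable def Lplus {m n : ℕ} (f : Fin m ⊕ Fin n → ℝ → ℝ)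
    (lm lp : Fin m ⊕ Fin n → ℝ) (i : Fin m) (j : Fin n) : ℝ :=
  if 0 ≤ spd f lm lp (Sum.inl i) * spd f lm lp (Sum.inr j) then lp (Sum.inl i)
  else lm (Sum.inl i)

/-- `k_j = ∑_{i ∈ I₀ᶜ} A_{i,j} L_{i,j}⁻ - ℓ_j⁻` with `A_{i,j} = α_{i,j} c_i / c_j`. -/
noncomputable def kconst {m n : ℕ} (f : Fin m ⊕ Fin n → ℝ → ℝ) (α : Fin m → Fin n → ℝ)
    (lm lp : Fin m ⊕ Fin n → ℝ) (j : Fin n) : ℝ :=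
  (∑ i ∈ Finset.univ.filter (fun i : Fin m => spd f lm lp (Sum.inl i) ≠ 0),
      (α i j * (spd f lm lp (Sum.inl i) / spd f lm lp (Sum.inr j))) * Lminus f lm lp i j)
    - lm (Sum.inr j)

lemma redFlux_endpoints (f : ℝ → ℝ) {a b : ℝ} (hab : a < b) :
    redFlux f a b b = redFlux f a b a := by
  have hne : b - a ≠ 0 := sub_ne_zero.mpr (ne_of_gt hab)
  simp only [redFlux, waveSpeed]
  field_simp
  ring

lemma profile_key {f D : ℝ → ℝ} {a b : ℝ} {φ : ℝ → ℝ} (hab : a < b)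
    (hp : IsProfile f D a b φ) (ξ : ℝ) :
    f (φ ξ) - D (φ ξ) * deriv φ ξ = waveSpeed f a b * φ ξ + redFlux f a b a := by
  obtain ⟨hc, hmono, hrange, _, _, _, hode⟩ := hp
  rcases lt_or_eq_of_le (hrange ξ).1 with hlt | heq
  · rcases lt_or_eq_of_le (hrange ξ).2 with hlt2 | heq2
    · have h := (hode ξ hlt hlt2).2
      simp only [redFlux] at h ⊢
      linarith
    · -- φ ξ = b : local max, deriv = 0
      have hmax : IsLocalMax φ ξ := by
        apply IsMaxOn.isLocalMax (s := Set.univ) _ Filter.univ_mem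
        intro x _
        simp only [heq2]
        exact (hrange x).2
      have hd : deriv φ ξ = 0 := hmax.deriv_eq_zero
      have hgb := redFlux_endpoints f hab
      rw [heq2, hd]
      simp only [redFlux] at hgb ⊢
      linarith
  · -- φ ξ = a : local min, deriv = 0
    have hmin : IsLocalMin φ ξ := by
      apply IsMinOn.isLocalMin (s := Set.univ) _ Filter.univ_mem
      intro x _
      simp only [← heq]
      exact (hrange x).1
    have hd : deriv φ ξ = 0 := hmin.deriv_eq_zero
    rw [← heq, hd]
    simp only [redFlux]
    ring

/-- Equivalence of the a.e. parabolic-flux coupling with the coupling condition (Tool),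
together with `g_h(ℓ_h⁺) = g_h(ℓ_h⁻)`. -/
theorem stmt6 (m n : ℕ) (hm : 0 < m) (hn : 0 < n)
    (f D : Fin m ⊕ Fin n → ℝ → ℝ) (α : Fin m → Fin n → ℝ)
    (hnet : NetworkSetup f D α)
    (lm lp : Fin m ⊕ Fin n → ℝ) (hends : EndStates lm lp)
    (φ : Fin m ⊕ Fin n → ℝ → ℝ)
    (hφ : ∀ h, IsProfile (f h) (D h) (lm h) (lp h) (φ h)) :
    ((∀ᵐ t ∂(volume : Measure ℝ), ∀ j : Fin n,
        f (Sum.inr j) (φ (Sum.inr j) (-(spd f lm lp (Sum.inr j)) * t))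
          - D (Sum.inr j) (φ (Sum.inr j) (-(spd f lm lp (Sum.inr j)) * t))
            * deriv (φ (Sum.inr j)) (-(spd f lm lp (Sum.inr j)) * t)
        = ∑ i : Fin m, α i j *
            (f (Sum.inl i) (φ (Sum.inl i) (-(spd f lm lp (Sum.inl i)) * t))
              - D (Sum.inl i) (φ (Sum.inl i) (-(spd f lm lp (Sum.inl i)) * t))
                * deriv (φ (Sum.inl i)) (-(spd f lm lp (Sum.inl i)) * t))) ↔
      Tool f α lm lp φ) ∧
    (∀ h, gred f lm lp h (lp h) = gred f lm lp h (lm h)) := by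
  have hab : ∀ h, lm h < lp h := fun h => (hends h).2.1
  have key : ∀ h ξ, f h (φ h ξ) - D h (φ h ξ) * deriv (φ h) ξ
      = spd f lm lp h * φ h ξ + gred f lm lp h (lm h) :=
    fun h ξ => profile_key (hab h) (hφ h) ξ
  constructor
  · constructor
    · -- a.e. flux coupling → Tool
      intro hae
      have hae' : ∀ j : Fin n, ∀ᵐ t ∂(volume : Measure ℝ),
          (fun t => spd f lm lp (Sum.inr j) * φ (Sum.inr j) (-(spd f lm lp (Sum.inr j)) * t)
            + gred f lm lp (Sum.inr j) (lm (Sum.inr j))) t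
          = (fun t => ∑ i : Fin m, α i j *
              (spd f lm lp (Sum.inl i) * φ (Sum.inl i) (-(spd f lm lp (Sum.inl i)) * t)
                + gred f lm lp (Sum.inl i) (lm (Sum.inl i)))) t := by
        intro j
        filter_upwards [hae] with t ht
        have h := ht j
        rw [key (Sum.inr j)] at h
        show _ = _
        rw [h]
        exact Finset.sum_congr rfl fun i _ => by rw [← key (Sum.inl i)]
      intro t j
      have hcont1 : Continuous (fun t =>
          spd f lm lp (Sum.inr j) * φ (Sum.inr j) (-(spd f lm lp (Sum.inr j)) * t)
            + gred f lm lp (Sum.inr j) (lm (Sum.inr j))) := by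
        have := (hφ (Sum.inr j)).1
        fun_prop
      have hcont2 : Continuous (fun t => ∑ i : Fin m, α i j *
            (spd f lm lp (Sum.inl i) * φ (Sum.inl i) (-(spd f lm lp (Sum.inl i)) * t)
              + gred f lm lp (Sum.inl i) (lm (Sum.inl i)))) := by
        apply continuous_finset_sum
        intro i _
        have := (hφ (Sum.inl i)).1
        fun_prop
      have heq := (hcont1.ae_eq_iff_eq volume hcont2).mp (hae' j)
      have := congrFun heq (-t)
      simpa [neg_mul, mul_neg, neg_neg] using this
    · -- Tool → a.e.
      intro htool
      apply Filter.Eventually.of_forall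
      intro t j
      rw [key (Sum.inr j)]
      have h := htool (-t) j
      simp only [mul_neg, ← neg_mul] at h
      rw [h]
      exact Finset.sum_congr rfl fun i _ => by rw [key (Sum.inl i)]
  · exact fun h => redFlux_endpoints (f h) (hab h)
end

section
/- In the network setup, suppose the family (φ_h)_{h∈H} is a traveling wave of the network problem at profile level, i.e. each φ_h is a profile and the coupling condition (Tool) holds. Then for every j ∈ J: max{f_j(ℓ_j⁻), f_j(ℓ_j⁺)} = Σ_{i∈I} α_{i,j} max{f_i(ℓ_i⁻), f_i(ℓ_i⁺)} and min{f_j(ℓ_j⁻), f_j(ℓ_j⁺)} = Σ_{i∈I} α_{i,j} min{f_i(ℓ_i⁻), f_i(ℓ_i⁺)}. -/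
open Set Filter MeasureTheory
open scoped Topology Classical

private lemma wave_fb {f : ℝ → ℝ} {a b : ℝ} (hab : a < b) :
    f b = f a + waveSpeed f a b * (b - a) := by
  unfold waveSpeed
  rw [div_mul_cancel₀]
  · ring
  · linarith

private lemma profile_lim_top (f : ℝ → ℝ) {a b : ℝ} (hab : a < b) (φ : ℝ → ℝ)
    (hbot : Tendsto φ atBot (𝓝 a)) (htop : Tendsto φ atTop (𝓝 b)) :
    Tendsto (fun t => waveSpeed f a b * φ (waveSpeed f a b * t) + redFlux f a b a)
      atTop (𝓝 (max (f a) (f b))) := by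
  set c := waveSpeed f a b with hc
  have hfb : f b = f a + c * (b - a) := wave_fb hab
  have hred : redFlux f a b a = f a - c * a := rfl
  rcases lt_trichotomy c 0 with h | h | h
  · have h1 : Tendsto (fun t : ℝ => c * t) atTop atBot := (tendsto_const_mul_atBot_of_neg h).mpr tendsto_id
    have h2 : Tendsto (fun t => φ (c * t)) atTop (𝓝 a) := hbot.comp h1
    have h3 : Tendsto (fun t => c * φ (c * t) + redFlux f a b a) atTop
        (𝓝 (c * a + redFlux f a b a)) := (h2.const_mul c).add_const _
    have hmax : max (f a) (f b) = c * a + redFlux f a b a := by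
      rw [hred, max_eq_left (by nlinarith)]; ring
    rw [hmax]; exact h3
  · have hfb' : f b = f a := by rw [hfb, h]; ring
    have : (fun t : ℝ => c * φ (c * t) + redFlux f a b a)
        = fun _ => max (f a) (f b) := by
      funext t; rw [h, hfb', max_self, hred, h]; ring
    rw [this]; exact tendsto_const_nhds
  · have h1 : Tendsto (fun t : ℝ => c * t) atTop atTop := (tendsto_const_mul_atTop_of_pos h).mpr tendsto_id
    have h2 : Tendsto (fun t => φ (c * t)) atTop (𝓝 b) := htop.comp h1
    have h3 : Tendsto (fun t => c * φ (c * t) + redFlux f a b a) atTop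
        (𝓝 (c * b + redFlux f a b a)) := (h2.const_mul c).add_const _
    have hmax : max (f a) (f b) = c * b + redFlux f a b a := by
      rw [hred, max_eq_right (by nlinarith)]; rw [hfb]; ring
    rw [hmax]; exact h3

private lemma profile_lim_bot (f : ℝ → ℝ) {a b : ℝ} (hab : a < b) (φ : ℝ → ℝ)
    (hbot : Tendsto φ atBot (𝓝 a)) (htop : Tendsto φ atTop (𝓝 b)) :
    Tendsto (fun t => waveSpeed f a b * φ (waveSpeed f a b * t) + redFlux f a b a)
      atBot (𝓝 (min (f a) (f b))) := by
  set c := waveSpeed f a b with hc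
  have hfb : f b = f a + c * (b - a) := wave_fb hab
  have hred : redFlux f a b a = f a - c * a := rfl
  rcases lt_trichotomy c 0 with h | h | h
  · have h1 : Tendsto (fun t : ℝ => c * t) atBot atTop := (tendsto_const_mul_atTop_of_neg h).mpr tendsto_id
    have h2 : Tendsto (fun t => φ (c * t)) atBot (𝓝 b) := htop.comp h1
    have h3 : Tendsto (fun t => c * φ (c * t) + redFlux f a b a) atBot
        (𝓝 (c * b + redFlux f a b a)) := (h2.const_mul c).add_const _
    have hmin : min (f a) (f b) = c * b + redFlux f a b a := by
      rw [hred, min_eq_right (by nlinarith)]; rw [hfb]; ring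
    rw [hmin]; exact h3
  · have hfb' : f b = f a := by rw [hfb, h]; ring
    have : (fun t : ℝ => c * φ (c * t) + redFlux f a b a)
        = fun _ => min (f a) (f b) := by
      funext t; rw [h, hfb', min_self, hred, h]; ring
    rw [this]; exact tendsto_const_nhds
  · have h1 : Tendsto (fun t : ℝ => c * t) atBot atBot := (tendsto_const_mul_atBot_of_pos h).mpr tendsto_id
    have h2 : Tendsto (fun t => φ (c * t)) atBot (𝓝 a) := hbot.comp h1
    have h3 : Tendsto (fun t => c * φ (c * t) + redFlux f a b a) atBot
        (𝓝 (c * a + redFlux f a b a)) := (h2.const_mul c).add_const _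
    have hmin : min (f a) (f b) = c * a + redFlux f a b a := by
      rw [hred, min_eq_left (by nlinarith)]; ring
    rw [hmin]; exact h3

/-- For a traveling wave of the network problem, the max/min flux balances hold at the node. -/
theorem stmt7 (m n : ℕ) (hm : 0 < m) (hn : 0 < n)
    (f D : Fin m ⊕ Fin n → ℝ → ℝ) (α : Fin m → Fin n → ℝ)
    (hnet : NetworkSetup f D α)
    (lm lp : Fin m ⊕ Fin n → ℝ) (hends : EndStates lm lp)
    (φ : Fin m ⊕ Fin n → ℝ → ℝ)
    (hTW : IsTravelingWave f D α lm lp φ) :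
    ∀ j : Fin n,
      max (f (Sum.inr j) (lm (Sum.inr j))) (f (Sum.inr j) (lp (Sum.inr j)))
        = ∑ i : Fin m, α i j *
            max (f (Sum.inl i) (lm (Sum.inl i))) (f (Sum.inl i) (lp (Sum.inl i))) ∧
      min (f (Sum.inr j) (lm (Sum.inr j))) (f (Sum.inr j) (lp (Sum.inr j)))
        = ∑ i : Fin m, α i j *
            min (f (Sum.inl i) (lm (Sum.inl i))) (f (Sum.inl i) (lp (Sum.inl i))) := by
  
  intro j
  obtain ⟨hprof, htool⟩ := hTW
  have hF : ∀ h : Fin m ⊕ Fin n,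
      (fun t => spd f lm lp h * φ h (spd f lm lp h * t) + gred f lm lp h (lm h))
      = fun t => waveSpeed (f h) (lm h) (lp h) * φ h (waveSpeed (f h) (lm h) (lp h) * t)
          + redFlux (f h) (lm h) (lp h) (lm h) := fun h => rfl
  have hTtop : ∀ h, Tendsto
      (fun t => spd f lm lp h * φ h (spd f lm lp h * t) + gred f lm lp h (lm h))
      atTop (𝓝 (max (f h (lm h)) (f h (lp h)))) := by
    intro h
    rw [hF h]
    exact profile_lim_top (f h) (hends h).2.1 (φ h)
      (hprof h).2.2.2.1 (hprof h).2.2.2.2.1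
  have hTbot : ∀ h, Tendsto
      (fun t => spd f lm lp h * φ h (spd f lm lp h * t) + gred f lm lp h (lm h))
      atBot (𝓝 (min (f h (lm h)) (f h (lp h)))) := by
    intro h
    rw [hF h]
    exact profile_lim_bot (f h) (hends h).2.1 (φ h)
      (hprof h).2.2.2.1 (hprof h).2.2.2.2.1
  have heq : (fun t => spd f lm lp (Sum.inr j) * φ (Sum.inr j) (spd f lm lp (Sum.inr j) * t)
        + gred f lm lp (Sum.inr j) (lm (Sum.inr j)))
      = fun t => ∑ i : Fin m, α i j *
        (spd f lm lp (Sum.inl i) * φ (Sum.inl i) (spd f lm lp (Sum.inl i) * t)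
          + gred f lm lp (Sum.inl i) (lm (Sum.inl i))) := funext fun t => htool t j
  constructor
  · have hR : Tendsto (fun t => ∑ i : Fin m, α i j *
        (spd f lm lp (Sum.inl i) * φ (Sum.inl i) (spd f lm lp (Sum.inl i) * t)
          + gred f lm lp (Sum.inl i) (lm (Sum.inl i)))) atTop
        (𝓝 (∑ i : Fin m, α i j *
          max (f (Sum.inl i) (lm (Sum.inl i))) (f (Sum.inl i) (lp (Sum.inl i))))) :=
      tendsto_finset_sum _ fun i _ => (hTtop (Sum.inl i)).const_mul _
    exact tendsto_nhds_unique (hTtop (Sum.inr j)) (heq ▸ hR)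
  · have hR : Tendsto (fun t => ∑ i : Fin m, α i j *
        (spd f lm lp (Sum.inl i) * φ (Sum.inl i) (spd f lm lp (Sum.inl i) * t)
          + gred f lm lp (Sum.inl i) (lm (Sum.inl i)))) atBot
        (𝓝 (∑ i : Fin m, α i j *
          min (f (Sum.inl i) (lm (Sum.inl i))) (f (Sum.inl i) (lp (Sum.inl i))))) :=
      tendsto_finset_sum _ fun i _ => (hTbot (Sum.inl i)).const_mul _
    exact tendsto_nhds_unique (hTbot (Sum.inr j)) (heq ▸ hR)
end
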